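/- arXiv:math/0408176 — 3 statements merged into one kernel-verified Lean document; each statement's English description precedes it below -/
import Mathlib

section
/- Let s be a vertex of G, let A and B be increasing events determined by the open cluster of s, and let X ⊆ V \ {s} with Pr(R_X) > 0. Then Pr(A ∩ B | R_X) ≥ Pr(A | R_X) · Pr(B | R_X); that is, conditioned on the event that s has no open path to any vertex of X, the events A and B are positively correlated. -/
/-!
Bond percolation on a finite graph `G = (V, E)`.
Edges are given by their endpoints `ends : E → V × V` (unordered: a path may
traverse an edge in either direction).  Each edge `e` is independently open
(`ω e = true`) with probability `p e`; `Pr` is the resulting product measure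
on configurations `ω : E → Bool`.
-/

attribute [local instance] Classical.propDecidable

namespace BondPerc

variable {V E : Type*}

/-- One step along an open edge (in either direction, since edges are undirected). -/
def Step (ends : E → V × V) (ω : E → Bool) (u v : V) : Prop :=
  ∃ e, ω e = true ∧ (ends e = (u, v) ∨ ends e = (v, u))

/-- `Reach ends ω u v` : there is an open path from `u` to `v` in configuration `ω`. -/
def Reach (ends : E → V × V) (ω : E → Bool) (u v : V) : Prop :=
  Relation.ReflTransGen (Step ends ω) u v

/-- The open cluster `C_s(ω)` of `s`: the set of edges lying on some open path
starting at `s`, i.e. open edges one of whose endpoints is joined to `s` by an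
open path. -/
def Cluster (ends : E → V × V) (s : V) (ω : E → Bool) : Set E :=
  {e | ω e = true ∧ (Reach ends ω s (ends e).1 ∨ Reach ends ω s (ends e).2)}

/-- `R_X`: the event that `s` has an open path to no vertex of `X`. -/
def RX (ends : E → V × V) (s : V) (X : Set V) : Set (E → Bool) :=
  {ω | ∀ x ∈ X, ¬ Reach ends ω s x}

/-- The probability of a single configuration under the product measure. -/
noncomputable def weight [Fintype E] (p : E → ℝ) (ω : E → Bool) : ℝ :=
  ∏ e, if ω e then p e else 1 - p e

/-- The probability of an event `A ⊆ {0,1}^E`. -/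
noncomputable def Pr [Fintype E] [DecidableEq E] (p : E → ℝ) (A : Set (E → Bool)) : ℝ :=
  ∑ ω : E → Bool, A.indicator (weight p) ω

/-- Conditional probability `Pr(A | B)`. -/
noncomputable def condPr [Fintype E] [DecidableEq E] (p : E → ℝ)
    (A B : Set (E → Bool)) : ℝ :=
  Pr p (A ∩ B) / Pr p B

/-- Conditional expectation `E[f | B]`. -/
noncomputable def condExp [Fintype E] [DecidableEq E] (p : E → ℝ)
    (f : (E → Bool) → ℝ) (B : Set (E → Bool)) : ℝ :=
  (∑ ω : E → Bool, B.indicator (fun ω' => weight p ω' * f ω') ω) / Pr p B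


set_option linter.unusedSectionVars false

section Aux
variable [Fintype E] [DecidableEq E]

def StepF (F : Finset E) (D : V → V → Prop) (ends : E → V × V) (ω : E → Bool)
    (u v : V) : Prop :=
  D u v ∨ D v u ∨ ∃ e ∈ F, ω e = true ∧ (ends e = (u, v) ∨ ends e = (v, u))

def ReachF (F : Finset E) (D : V → V → Prop) (ends : E → V × V) (ω : E → Bool) :
    V → V → Prop :=
  Relation.ReflTransGen (StepF F D ends ω)

def ClusterF (F : Finset E) (D : V → V → Prop) (ends : E → V × V) (s : V)
    (ω : E → Bool) : Set E :=
  {e | e ∈ F ∧ ω e = true ∧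
    (ReachF F D ends ω s (ends e).1 ∨ ReachF F D ends ω s (ends e).2)}

def RF (F : Finset E) (D : V → V → Prop) (ends : E → V × V) (S X : Set V) :
    Set (E → Bool) :=
  {ω | ∀ u ∈ S, ∀ x ∈ X, ¬ ReachF F D ends ω u x}

def IncrClustDet (F : Finset E) (D : V → V → Prop) (ends : E → V × V) (s : V)
    (A : Set (E → Bool)) : Prop :=
  ∀ ω ∈ A, ∀ ω', ClusterF F D ends s ω ⊆ ClusterF F D ends s ω' → ω' ∈ A

/-- Pure deterministic reachability (using only teleports). -/
def DReach (D : V → V → Prop) : V → V → Prop :=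
  Relation.ReflTransGen (fun u v => D u v ∨ D v u)

variable {F : Finset E} {D : V → V → Prop} {ends : E → V × V}

theorem StepF_symm {ω : E → Bool} {u v : V} (h : StepF F D ends ω u v) :
    StepF F D ends ω v u := by
  rcases h with h | h | ⟨e, he, hω, h⟩
  · exact Or.inr (Or.inl h)
  · exact Or.inl h
  · exact Or.inr (Or.inr ⟨e, he, hω, h.symm⟩)

theorem ReachF_symm {ω : E → Bool} {u v : V} (h : ReachF F D ends ω u v) :
    ReachF F D ends ω v u :=
  haveI : Std.Symm (StepF F D ends ω) := ⟨fun _ _ hs => StepF_symm hs⟩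
  Std.Symm.symm (r := Relation.ReflTransGen (StepF F D ends ω)) _ _ h

theorem ReachF_mono_rel {D' : V → V → Prop} (hD : ∀ u v, D u v → D' u v)
    {ω : E → Bool} {u v : V} (h : ReachF F D ends ω u v) : ReachF F D' ends ω u v := by
  refine Relation.ReflTransGen.mono ?_ _ _ h
  rintro a b (hs | hs | hs)
  · exact Or.inl (hD _ _ hs)
  · exact Or.inr (Or.inl (hD _ _ hs))
  · exact Or.inr (Or.inr hs)

theorem DReach_reach {s u : V} (h : DReach D s u) (ω : E → Bool) :
    ReachF F D ends ω s u := by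
  refine Relation.ReflTransGen.mono ?_ _ _ h
  rintro a b (hs | hs)
  · exact Or.inl hs
  · exact Or.inr (Or.inl hs)

/-- Reachability from `s` is monotone with respect to cluster inclusion. -/
theorem reach_of_cluster_subset {s : V} {ω ω' : E → Bool}
    (h : ClusterF F D ends s ω ⊆ ClusterF F D ends s ω') {v : V}
    (hr : ReachF F D ends ω s v) : ReachF F D ends ω' s v := by
  induction hr with
  | refl => exact Relation.ReflTransGen.refl
  | @tail b c hsb hbc ih =>
    rcases hbc with h1 | h1 | ⟨e, he, hω, hee⟩
    · exact ih.tail (Or.inl h1)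
    · exact ih.tail (Or.inr (Or.inl h1))
    · have hecl : e ∈ ClusterF F D ends s ω := by
        refine ⟨he, hω, ?_⟩
        rcases hee with h2 | h2
        · exact Or.inl (by rw [h2]; exact hsb)
        · exact Or.inr (by rw [h2]; exact hsb)
      obtain ⟨he2, hω2, -⟩ := h hecl
      exact ih.tail (Or.inr (Or.inr ⟨e, he2, hω2, hee⟩))

theorem reach_mono_omega {ω ω' : E → Bool} (hω : ∀ e, ω e = true → ω' e = true)
    {u v : V} (h : ReachF F D ends ω u v) : ReachF F D ends ω' u v := by
  refine Relation.ReflTransGen.mono ?_ _ _ h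
  rintro a b (hs | hs | ⟨e, he, h1, h2⟩)
  · exact Or.inl hs
  · exact Or.inr (Or.inl hs)
  · exact Or.inr (Or.inr ⟨e, he, hω e h1, h2⟩)

theorem cluster_mono_omega {s : V} {ω ω' : E → Bool}
    (hω : ∀ e, ω e = true → ω' e = true) :
    ClusterF F D ends s ω ⊆ ClusterF F D ends s ω' := by
  rintro e ⟨he, h1, h2⟩
  exact ⟨he, hω e h1, h2.imp (reach_mono_omega hω) (reach_mono_omega hω)⟩

/-! ### Slicing at an edge -/

theorem stepF_update_false {e₀ : E} (he : e₀ ∈ F) (ω : E → Bool) (u v : V) :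
    StepF F D ends (Function.update ω e₀ false) u v ↔ StepF (F.erase e₀) D ends ω u v := by
  constructor
  · rintro (h | h | ⟨e, he', hω, hee⟩)
    · exact Or.inl h
    · exact Or.inr (Or.inl h)
    · have hne : e ≠ e₀ := by
        rintro rfl; rw [Function.update_self] at hω; exact Bool.false_ne_true hω
      rw [Function.update_of_ne hne] at hω
      exact Or.inr (Or.inr ⟨e, Finset.mem_erase.2 ⟨hne, he'⟩, hω, hee⟩)
  · rintro (h | h | ⟨e, he', hω, hee⟩)
    · exact Or.inl h
    · exact Or.inr (Or.inl h)
    · obtain ⟨hne, heF⟩ := Finset.mem_erase.1 he'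
      refine Or.inr (Or.inr ⟨e, heF, ?_, hee⟩)
      rw [Function.update_of_ne hne]; exact hω

theorem stepF_update_true {e₀ : E} (he : e₀ ∈ F) (ω : E → Bool) (u v : V) :
    StepF F D ends (Function.update ω e₀ true) u v
      ↔ StepF (F.erase e₀) (fun a b => D a b ∨ (a, b) = ends e₀) ends ω u v := by
  constructor
  · rintro (h | h | ⟨e, he', hω, hee⟩)
    · exact Or.inl (Or.inl h)
    · exact Or.inr (Or.inl (Or.inl h))
    · by_cases hne : e = e₀
      · subst hne
        rcases hee with h2 | h2
        · exact Or.inl (Or.inr h2.symm)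
        · exact Or.inr (Or.inl (Or.inr h2.symm))
      · rw [Function.update_of_ne hne] at hω
        exact Or.inr (Or.inr ⟨e, Finset.mem_erase.2 ⟨hne, he'⟩, hω, hee⟩)
  · rintro ((h | h) | (h | h) | ⟨e, he', hω, hee⟩)
    · exact Or.inl h
    · exact Or.inr (Or.inr ⟨e₀, he, Function.update_self _ _ _, Or.inl h.symm⟩)
    · exact Or.inr (Or.inl h)
    · exact Or.inr (Or.inr ⟨e₀, he, Function.update_self _ _ _, Or.inr h.symm⟩)
    · obtain ⟨hne, heF⟩ := Finset.mem_erase.1 he'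
      refine Or.inr (Or.inr ⟨e, heF, ?_, hee⟩)
      rw [Function.update_of_ne hne]; exact hω

theorem reachF_update_false {e₀ : E} (he : e₀ ∈ F) (ω : E → Bool) (u v : V) :
    ReachF F D ends (Function.update ω e₀ false) u v ↔ ReachF (F.erase e₀) D ends ω u v := by
  constructor <;> intro h <;> refine Relation.ReflTransGen.mono ?_ _ _ h <;> intro a b hs
  · exact (stepF_update_false he ω a b).1 hs
  · exact (stepF_update_false he ω a b).2 hs

theorem reachF_update_true {e₀ : E} (he : e₀ ∈ F) (ω : E → Bool) (u v : V) :
    ReachF F D ends (Function.update ω e₀ true) u v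
      ↔ ReachF (F.erase e₀) (fun a b => D a b ∨ (a, b) = ends e₀) ends ω u v := by
  constructor <;> intro h <;> refine Relation.ReflTransGen.mono ?_ _ _ h <;> intro a b hs
  · exact (stepF_update_true he ω a b).1 hs
  · exact (stepF_update_true he ω a b).2 hs

theorem RF_update_false {e₀ : E} (he : e₀ ∈ F) (S X : Set V) :
    (fun ω => Function.update ω e₀ false) ⁻¹' RF F D ends S X
      = RF (F.erase e₀) D ends S X := by
  ext ω
  simp only [Set.mem_preimage, RF, Set.mem_setOf_eq]
  constructor <;> intro h u hu x hx hr
  · exact h u hu x hx ((reachF_update_false he ω u x).2 hr)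
  · exact h u hu x hx ((reachF_update_false he ω u x).1 hr)

theorem RF_update_true {e₀ : E} (he : e₀ ∈ F) (S X : Set V) :
    (fun ω => Function.update ω e₀ true) ⁻¹' RF F D ends S X
      = RF (F.erase e₀) (fun a b => D a b ∨ (a, b) = ends e₀) ends S X := by
  ext ω
  simp only [Set.mem_preimage, RF, Set.mem_setOf_eq]
  constructor <;> intro h u hu x hx hr
  · exact h u hu x hx ((reachF_update_true he ω u x).2 hr)
  · exact h u hu x hx ((reachF_update_true he ω u x).1 hr)

theorem clusterF_update_false {e₀ : E} (he : e₀ ∈ F) (s : V) (ω : E → Bool) :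
    ClusterF F D ends s (Function.update ω e₀ false) = ClusterF (F.erase e₀) D ends s ω := by
  ext e
  simp only [ClusterF, Set.mem_setOf_eq]
  constructor
  · rintro ⟨heF, hω, hr⟩
    have hne : e ≠ e₀ := by
      rintro rfl; rw [Function.update_self] at hω; exact Bool.false_ne_true hω
    rw [Function.update_of_ne hne] at hω
    exact ⟨Finset.mem_erase.2 ⟨hne, heF⟩, hω,
      hr.imp (reachF_update_false he ω s _).1 (reachF_update_false he ω s _).1⟩
  · rintro ⟨heF, hω, hr⟩
    obtain ⟨hne, heF'⟩ := Finset.mem_erase.1 heF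
    refine ⟨heF', by rw [Function.update_of_ne hne]; exact hω,
      hr.imp (reachF_update_false he ω s _).2 (reachF_update_false he ω s _).2⟩

/-- Transfer of increasing-cluster-determination to the closed slice. -/
theorem incr_slice_false {e₀ : E} (he : e₀ ∈ F) {s : V} {A : Set (E → Bool)}
    (hA : IncrClustDet F D ends s A) :
    IncrClustDet (F.erase e₀) D ends s ((fun ω => Function.update ω e₀ false) ⁻¹' A) := by
  intro ω hω ω' hsub
  refine hA _ hω _ ?_
  rw [clusterF_update_false he, clusterF_update_false he]
  exact hsub

/-- Transfer of increasing-cluster-determination to the open slice. -/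
theorem incr_slice_true {e₀ : E} (he : e₀ ∈ F) {s : V} {A : Set (E → Bool)}
    (hA : IncrClustDet F D ends s A) :
    IncrClustDet (F.erase e₀) (fun a b => D a b ∨ (a, b) = ends e₀) ends s
      ((fun ω => Function.update ω e₀ true) ⁻¹' A) := by
  set D' := fun a b => D a b ∨ (a, b) = ends e₀ with hD'
  intro ω hω ω' hsub
  rw [Set.mem_preimage] at hω
  refine hA _ hω (Function.update ω' e₀ true) ?_
  rintro e ⟨heF, hopen, hr⟩
  have hr' : ReachF (F.erase e₀) D' ends ω' s (ends e).1 ∨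
      ReachF (F.erase e₀) D' ends ω' s (ends e).2 := by
    refine hr.imp ?_ ?_ <;> intro h <;>
      exact reach_of_cluster_subset hsub ((reachF_update_true he ω s _).1 h)
  by_cases hne : e = e₀
  · subst hne
    exact ⟨heF, Function.update_self _ _ _,
      hr'.imp (fun h => (reachF_update_true he ω' s _).2 h)
        (fun h => (reachF_update_true he ω' s _).2 h)⟩
  · rw [Function.update_of_ne hne] at hopen
    have hecl : e ∈ ClusterF (F.erase e₀) D' ends s ω := by
      refine ⟨Finset.mem_erase.2 ⟨hne, heF⟩, hopen, ?_⟩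
      exact hr.imp (fun h => (reachF_update_true he ω s _).1 h)
        (fun h => (reachF_update_true he ω s _).1 h)
    obtain ⟨he2, hω2, hr2⟩ := hsub hecl
    refine ⟨(Finset.mem_erase.1 he2).2, by rw [Function.update_of_ne hne]; exact hω2, ?_⟩
    exact hr2.imp (fun h => (reachF_update_true he ω' s _).2 h)
      (fun h => (reachF_update_true he ω' s _).2 h)

theorem slice_subset {e₀ : E} {s : V} {A : Set (E → Bool)}
    (hA : IncrClustDet F D ends s A) :
    ((fun ω => Function.update ω e₀ false) ⁻¹' A)
      ⊆ ((fun ω => Function.update ω e₀ true) ⁻¹' A) := by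
  intro ω hω
  rw [Set.mem_preimage] at hω
  rw [Set.mem_preimage]
  refine hA _ hω (Function.update ω e₀ true) (cluster_mono_omega ?_)
  intro e h1
  by_cases hne : e = e₀
  · subst hne; rw [Function.update_self]
  · rw [Function.update_of_ne hne] at h1 ⊢; exact h1

/-! ### Teleport absorption into sources -/

section Teleport

variable {e₀ : E} {u₀ b₀ s : V}

/-- The teleport step between the endpoints of `e₀`. -/
theorem step_tel (hends : ends e₀ = (u₀, b₀) ∨ ends e₀ = (b₀, u₀)) (G : Finset E)
    (ω : E → Bool) :
    StepF G (fun a b => D a b ∨ (a, b) = ends e₀) ends ω u₀ b₀ := by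
  rcases hends with h | h
  · exact Or.inl (Or.inr h.symm)
  · exact Or.inr (Or.inl (Or.inr h.symm))

theorem reach_tel_decompose (hends : ends e₀ = (u₀, b₀) ∨ ends e₀ = (b₀, u₀))
    {G : Finset E} {ω : E → Bool} {v w : V}
    (h : ReachF G (fun a b => D a b ∨ (a, b) = ends e₀) ends ω v w) :
    ReachF G D ends ω v w ∨ ReachF G D ends ω u₀ w ∨ ReachF G D ends ω b₀ w := by
  induction h with
  | refl => exact Or.inl Relation.ReflTransGen.refl
  | @tail b c hvb hbc ih =>
    have hpair : ∀ x y : V, (x, y) = ends e₀ → (c = u₀ ∨ c = b₀) ∨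
        (StepF G D ends ω b c → False) ∨ True := fun _ _ _ => Or.inr (Or.inr trivial)
    rcases hbc with (h1 | h1) | (h1 | h1) | ⟨e, he, hω, hee⟩
    · exact ih.imp (·.tail (Or.inl h1)) (Or.imp (·.tail (Or.inl h1)) (·.tail (Or.inl h1)))
    · -- (b, c) = ends e₀, so c ∈ {u₀, b₀}
      rcases hends with h2 | h2 <;> rw [h2] at h1 <;>
        injection h1 with hb hc
      · exact Or.inr (Or.inr (hc ▸ Relation.ReflTransGen.refl))
      · exact Or.inr (Or.inl (hc ▸ Relation.ReflTransGen.refl))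
    · exact ih.imp (·.tail (Or.inr (Or.inl h1)))
        (Or.imp (·.tail (Or.inr (Or.inl h1))) (·.tail (Or.inr (Or.inl h1))))
    · -- (c, b) = ends e₀, so c ∈ {u₀, b₀}
      rcases hends with h2 | h2 <;> rw [h2] at h1 <;>
        injection h1 with hc hb
      · exact Or.inr (Or.inl (hc ▸ Relation.ReflTransGen.refl))
      · exact Or.inr (Or.inr (hc ▸ Relation.ReflTransGen.refl))
    · exact ih.imp (·.tail (Or.inr (Or.inr ⟨e, he, hω, hee⟩)))
        (Or.imp (·.tail (Or.inr (Or.inr ⟨e, he, hω, hee⟩)))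
          (·.tail (Or.inr (Or.inr ⟨e, he, hω, hee⟩))))

/-- Opening an edge with one endpoint deterministically reachable from a source is the
same as adding its other endpoint as a source. -/
theorem RF_tel (hends : ends e₀ = (u₀, b₀) ∨ ends e₀ = (b₀, u₀))
    (hsu : DReach D s u₀) {S : Set V} (hs : s ∈ S) (G : Finset E) (X : Set V) :
    RF G (fun a b => D a b ∨ (a, b) = ends e₀) ends S X
      = RF G D ends (insert b₀ S) X := by
  ext ω
  simp only [RF, Set.mem_setOf_eq]
  constructor
  · intro h u hu x hx hr
    rcases Set.mem_insert_iff.1 hu with rfl | huS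
    · -- u = b₀ : build a path s → u₀ → b₀ → x in the teleport graph
      refine h s hs x hx ?_
      have h1 : ReachF G (fun a b => D a b ∨ (a, b) = ends e₀) ends ω s u₀ :=
        DReach_reach (by
          refine Relation.ReflTransGen.mono ?_ _ _ hsu
          rintro a b (hab | hab)
          · exact Or.inl (Or.inl hab)
          · exact Or.inr (Or.inl hab)) ω
      refine ((h1.tail (step_tel hends G ω)).trans ?_)
      exact ReachF_mono_rel (fun a b hab => Or.inl hab) hr
    · exact h u huS x hx (ReachF_mono_rel (fun a b hab => Or.inl hab) hr)
  · intro h u hu x hx hr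
    rcases reach_tel_decompose hends hr with h1 | h1 | h1
    · exact h u (Set.mem_insert_of_mem _ hu) x hx h1
    · exact h s (Set.mem_insert_of_mem _ hs) x hx ((DReach_reach hsu ω).trans h1)
    · exact h b₀ (Set.mem_insert _ _) x hx h1

end Teleport

/-! ### Collapsing the obstacle set to a single source -/

section Star

variable {x₀ : V} {X : Set V}

theorem reach_star (hx₀ : x₀ ∈ X) {ω : E → Bool} {t : V} :
    ReachF F (fun a b => D a b ∨ (a = x₀ ∧ b ∈ X)) ends ω x₀ t
      ↔ ∃ x ∈ X, ReachF F D ends ω x t := by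
  constructor
  · intro h
    induction h with
    | refl => exact ⟨x₀, hx₀, Relation.ReflTransGen.refl⟩
    | @tail b c hvb hbc ih =>
      obtain ⟨x, hx, hxb⟩ := ih
      rcases hbc with (h1 | h1) | (h1 | h1) | ⟨e, he, hω, hee⟩
      · exact ⟨x, hx, hxb.tail (Or.inl h1)⟩
      · exact ⟨c, h1.2, Relation.ReflTransGen.refl⟩
      · exact ⟨x, hx, hxb.tail (Or.inr (Or.inl h1))⟩
      · exact ⟨x₀, hx₀, by rw [h1.1]; exact Relation.ReflTransGen.refl⟩
      · exact ⟨x, hx, hxb.tail (Or.inr (Or.inr ⟨e, he, hω, hee⟩))⟩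
  · rintro ⟨x, hx, hr⟩
    refine Relation.ReflTransGen.head (Or.inl (Or.inr ⟨rfl, hx⟩)) ?_
    exact ReachF_mono_rel (fun a b hab => Or.inl hab) hr

theorem RF_star (hx₀ : x₀ ∈ X) (T : Set V) :
    RF F (fun a b => D a b ∨ (a = x₀ ∧ b ∈ X)) ends {x₀} T = RF F D ends T X := by
  ext ω
  simp only [RF, Set.mem_setOf_eq, Set.mem_singleton_iff]
  constructor
  · intro h t ht x hx hr
    exact h x₀ rfl t ht ((reach_star hx₀).2 ⟨x, hx, ReachF_symm hr⟩)
  · rintro h u rfl t ht hr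
    obtain ⟨x, hx, hr'⟩ := (reach_star hx₀).1 hr
    exact h t ht x hx (ReachF_symm hr')

end Star

/-! ### The stuck case: trivial clusters -/

theorem reach_stuck {s : V}
    (hstuck : ∀ e ∈ F, ¬ DReach D s (ends e).1 ∧ ¬ DReach D s (ends e).2)
    {ω : E → Bool} {v : V} (h : ReachF F D ends ω s v) : DReach D s v := by
  induction h with
  | refl => exact Relation.ReflTransGen.refl
  | @tail b c hvb hbc ih =>
    rcases hbc with h1 | h1 | ⟨e, he, hω, hee⟩
    · exact ih.tail (Or.inl h1)
    · exact ih.tail (Or.inr h1)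
    · exfalso
      rcases hee with h2 | h2
      · exact (hstuck e he).1 (by rw [h2]; exact ih)
      · exact (hstuck e he).2 (by rw [h2]; exact ih)

theorem cluster_stuck {s : V}
    (hstuck : ∀ e ∈ F, ¬ DReach D s (ends e).1 ∧ ¬ DReach D s (ends e).2)
    (ω : E → Bool) : ClusterF F D ends s ω = ∅ := by
  ext e
  simp only [ClusterF, Set.mem_setOf_eq, Set.mem_empty_iff_false, iff_false, not_and]
  intro he hω hr
  rcases hr with h | h
  · exact (hstuck e he).1 (reach_stuck hstuck h)
  · exact (hstuck e he).2 (reach_stuck hstuck h)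

theorem trivial_of_stuck {s : V} {A : Set (E → Bool)}
    (hstuck : ∀ e ∈ F, ¬ DReach D s (ends e).1 ∧ ¬ DReach D s (ends e).2)
    (hA : IncrClustDet F D ends s A) : A = ∅ ∨ A = Set.univ := by
  by_cases h : A = ∅
  · exact Or.inl h
  · refine Or.inr ?_
    obtain ⟨ω₀, hω₀⟩ := Set.nonempty_iff_ne_empty.2 h
    refine Set.eq_univ_of_forall fun ω => ?_
    refine hA _ hω₀ _ ?_
    rw [cluster_stuck hstuck, cluster_stuck hstuck]



noncomputable def weightF (F : Finset E) (p : E → ℝ) (ω : E → Bool) : ℝ :=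
  ∏ e ∈ F, if ω e then p e else 1 - p e

noncomputable def PrF (F : Finset E) (p : E → ℝ) (A : Set (E → Bool)) : ℝ :=
  ∑ ω : E → Bool, A.indicator (weightF F p) ω

variable {p : E → ℝ}

theorem weightF_update_not_mem {e₀ : E} (he : e₀ ∉ F) (ω : E → Bool) (b : Bool) :
    weightF F p (Function.update ω e₀ b) = weightF F p ω := by
  refine Finset.prod_congr rfl fun e heF => ?_
  have hne : e ≠ e₀ := fun h => he (h ▸ heF)
  rw [Function.update_of_ne hne _ _]

theorem PrF_decomp {e₀ : E} (he : e₀ ∈ F) (A : Set (E → Bool)) :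
    2 * PrF F p A
      = (1 - p e₀) * PrF (F.erase e₀) p ((fun ω => Function.update ω e₀ false) ⁻¹' A)
        + p e₀ * PrF (F.erase e₀) p ((fun ω => Function.update ω e₀ true) ⁻¹' A) := by
  classical
  set F' := F.erase e₀ with hF'
  have he' : e₀ ∉ F' := Finset.notMem_erase _ _
  set eqv := Equiv.funSplitAt e₀ Bool with heqv
  have hcoord : ∀ (b : Bool) (h : {j // j ≠ e₀} → Bool), (eqv.symm (b, h)) e₀ = b := by
    intro b h
    simp [heqv, Equiv.funSplitAt, Equiv.piSplitAt]
  have hupd : ∀ (b b' : Bool) (h : {j // j ≠ e₀} → Bool),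
      Function.update (eqv.symm (b, h)) e₀ b' = eqv.symm (b', h) := by
    intro b b' h
    funext j
    by_cases hj : j = e₀
    · subst hj; simp [hcoord]
    · simp [Function.update_of_ne hj, heqv, Equiv.funSplitAt, Equiv.piSplitAt, hj]
  have hsum : ∀ φ : (E → Bool) → ℝ,
      ∑ ω : E → Bool, φ ω
        = ∑ h : {j // j ≠ e₀} → Bool, (φ (eqv.symm (true, h)) + φ (eqv.symm (false, h))) := by
    intro φ
    rw [← Equiv.sum_comp eqv.symm φ, Fintype.sum_prod_type, Fintype.sum_bool]
    rw [Finset.sum_add_distrib]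
  -- weight splitting
  have hw : ∀ ω : E → Bool,
      weightF F p ω = (if ω e₀ then p e₀ else 1 - p e₀) * weightF F' p ω := by
    intro ω
    rw [weightF, weightF, ← Finset.mul_prod_erase F _ he]
  rw [PrF, PrF, PrF, hsum, hsum, hsum, Finset.mul_sum, Finset.mul_sum, Finset.mul_sum,
    ← Finset.sum_add_distrib]
  refine Finset.sum_congr rfl fun h _ => ?_
  have hwt : weightF F' p (eqv.symm (true, h)) = weightF F' p (eqv.symm (false, h)) := by
    rw [← hupd false true h, weightF_update_not_mem he']
  have hmemt : ∀ b, (eqv.symm (b, h) ∈ ((fun ω => Function.update ω e₀ true) ⁻¹' A))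
      ↔ eqv.symm (true, h) ∈ A := by
    intro b; rw [Set.mem_preimage, hupd]
  have hmemf : ∀ b, (eqv.symm (b, h) ∈ ((fun ω => Function.update ω e₀ false) ⁻¹' A))
      ↔ eqv.symm (false, h) ∈ A := by
    intro b; rw [Set.mem_preimage, hupd]
  by_cases hT : eqv.symm (true, h) ∈ A <;> by_cases hF : eqv.symm (false, h) ∈ A <;>
    simp only [Set.indicator_apply, if_pos, if_neg, hT, hF, (hmemt true), (hmemt false),
      (hmemf true), (hmemf false), if_true, if_false, iff_true, iff_false, hw, hcoord,
      if_pos rfl, hwt] <;>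
    simp [hT, hF, hwt] <;> ring
  

theorem weightF_nonneg (hp : ∀ e, 0 ≤ p e ∧ p e ≤ 1) (ω : E → Bool) :
    0 ≤ weightF F p ω := by
  refine Finset.prod_nonneg fun e _ => ?_
  by_cases h : ω e <;> simp [h]
  · exact (hp e).1
  · linarith [(hp e).2]

theorem PrF_nonneg (hp : ∀ e, 0 ≤ p e ∧ p e ≤ 1) (A : Set (E → Bool)) :
    0 ≤ PrF F p A :=
  Finset.sum_nonneg fun ω _ => Set.indicator_nonneg (fun ω' _ => weightF_nonneg hp ω') ω

theorem PrF_mono (hp : ∀ e, 0 ≤ p e ∧ p e ≤ 1) {A B : Set (E → Bool)} (hAB : A ⊆ B) :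
    PrF F p A ≤ PrF F p B := by
  refine Finset.sum_le_sum fun ω _ => ?_
  by_cases hA : ω ∈ A
  · rw [Set.indicator_of_mem hA, Set.indicator_of_mem (hAB hA)]
  · rw [Set.indicator_of_notMem hA]
    exact Set.indicator_nonneg (fun ω' _ => weightF_nonneg hp ω') ω

theorem PrF_empty : PrF F p (∅ : Set (E → Bool)) = 0 := by
  simp [PrF]

theorem PrF_add_compl (C A : Set (E → Bool)) :
    PrF F p (C ∩ A) + PrF F p (Cᶜ ∩ A) = PrF F p A := by
  rw [PrF, PrF, PrF, ← Finset.sum_add_distrib]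
  refine Finset.sum_congr rfl fun ω _ => ?_
  by_cases hC : ω ∈ C <;> by_cases hA : ω ∈ A <;>
    simp [Set.indicator_apply, Set.mem_inter_iff, hC, hA]


end Aux

/-- Mixing lemma: combine branchwise inequalities with a cross term. -/
theorem mix_le {q p a b c d e f g h : ℝ} (hq : 0 ≤ q) (hp : 0 ≤ p)
    (h1 : a * c ≤ e * g) (h2 : b * d ≤ f * h) (h3 : a * d + b * c ≤ e * h + f * g) :
    (q * a + p * b) * (q * c + p * d) ≤ (q * e + p * f) * (q * g + p * h) := by
  have t1 : 0 ≤ q * q * (e * g - a * c) := mul_nonneg (mul_nonneg hq hq) (by linarith)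
  have t2 : 0 ≤ p * p * (f * h - b * d) := mul_nonneg (mul_nonneg hp hp) (by linarith)
  have t3 : 0 ≤ q * p * (e * h + f * g - (a * d + b * c)) :=
    mul_nonneg (mul_nonneg hq hp) (by linarith)
  nlinarith [t1, t2, t3]

/-- Cross-term algebra for the main correlation induction. -/
theorem crossT {q p a₀ a₁ b₀ b₁ c₀ c₁ r₀ r₁ : ℝ}
    (hq : 0 ≤ q) (hp : 0 ≤ p)
    (ha₀ : 0 ≤ a₀) (ha₁ : 0 ≤ a₁) (hb₀ : 0 ≤ b₀) (hb₁ : 0 ≤ b₁)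
    (hc₀ : 0 ≤ c₀) (hc₁ : 0 ≤ c₁) (hr₀ : 0 ≤ r₀) (hr₁ : 0 ≤ r₁)
    (har₀ : a₀ ≤ r₀) (hbr₀ : b₀ ≤ r₀) (har₁ : a₁ ≤ r₁) (hbr₁ : b₁ ≤ r₁)
    (iht₀ : a₀ * b₀ ≤ c₀ * r₀) (iht₁ : a₁ * b₁ ≤ c₁ * r₁)
    (keya : a₀ * r₁ ≤ a₁ * r₀) (keyb : b₀ * r₁ ≤ b₁ * r₀) :
    (q * a₀ + p * a₁) * (q * b₀ + p * b₁) ≤ (q * c₀ + p * c₁) * (q * r₀ + p * r₁) := by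
  have hcross : a₀ * b₁ + a₁ * b₀ ≤ c₀ * r₁ + c₁ * r₀ := by
    rcases eq_or_lt_of_le hr₀ with h0 | h0
    · have ha : a₀ = 0 := le_antisymm (by linarith) ha₀
      have hb : b₀ = 0 := le_antisymm (by linarith) hb₀
      rw [ha, hb]
      have := mul_nonneg hc₀ hr₁
      have := mul_nonneg hc₁ hr₀
      nlinarith [mul_nonneg ha₁ hb₀]
    rcases eq_or_lt_of_le hr₁ with h1 | h1
    · have ha : a₁ = 0 := le_antisymm (by linarith) ha₁
      have hb : b₁ = 0 := le_antisymm (by linarith) hb₁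
      rw [ha, hb]
      nlinarith [mul_nonneg hc₀ hr₁, mul_nonneg hc₁ hr₀, mul_nonneg ha₀ hb₁]
    -- both positive
    have hkey : a₀ * b₁ * (r₀ * r₁) + a₁ * b₀ * (r₀ * r₁) ≤ a₀ * b₀ * r₁ ^ 2 + a₁ * b₁ * r₀ ^ 2 := by
      nlinarith [mul_nonneg (sub_nonneg.2 keya) (sub_nonneg.2 keyb)]
    have h2 : (a₀ * b₁ + a₁ * b₀) * (r₀ * r₁) ≤ (c₀ * r₁ + c₁ * r₀) * (r₀ * r₁) := by
      nlinarith [mul_le_mul_of_nonneg_right iht₀ (by positivity : (0:ℝ) ≤ r₁ ^ 2),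
        mul_le_mul_of_nonneg_right iht₁ (by positivity : (0:ℝ) ≤ r₀ ^ 2)]
    exact le_of_mul_le_mul_right h2 (by positivity)
  exact mix_le hq hp iht₀ iht₁ hcross

/-- Cross-term algebra for the extra-source induction. -/
theorem crossU {q p aO aA aB aAB rO rA rB rAB : ℝ}
    (hq : 0 ≤ q) (hp : 0 ≤ p)
    (haO : 0 ≤ aO) (haA : 0 ≤ aA) (haB : 0 ≤ aB) (haAB : 0 ≤ aAB)
    (hrO : 0 ≤ rO) (hrA : 0 ≤ rA) (hrB : 0 ≤ rB) (hrAB : 0 ≤ rAB)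
    (hmA : rA ≤ rO) (hmB : rB ≤ rO) (hmAB : rAB ≤ rA) (hmAB' : rAB ≤ rB)
    (hbO : aO ≤ rO) (hbA : aA ≤ rA) (hbB : aB ≤ rB) (hbAB : aAB ≤ rAB)
    (n1 : aO * rA ≤ aA * rO) (n2 : aB * rAB ≤ aAB * rB) (n3 : aO * rB ≤ aB * rO)
    (n4 : aA * rAB ≤ aAB * rA) (n5 : rA * rB ≤ rAB * rO) :
    (q * aO + p * aB) * (q * rA + p * rAB) ≤ (q * aA + p * aAB) * (q * rO + p * rB) := by
  have hcross : aO * rAB + aB * rA ≤ aA * rB + aAB * rO := by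
    rcases eq_or_lt_of_le hrO with h0 | h0
    · have h1 : rA = 0 := le_antisymm (by linarith) hrA
      have h2 : rB = 0 := le_antisymm (by linarith) hrB
      have h3 : rAB = 0 := le_antisymm (by linarith) hrAB
      have h4 : aO = 0 := le_antisymm (by linarith) haO
      have h5 : aB = 0 := le_antisymm (by linarith) haB
      rw [h1, h3, h4, h5]; nlinarith [mul_nonneg haA hrB, mul_nonneg haAB hrO]
    rcases eq_or_lt_of_le hrA with hA0 | hA0
    · have h1 : aA = 0 := le_antisymm (by linarith) haA
      have h2 : rAB = 0 := le_antisymm (by linarith) hrAB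
      have h3 : aAB = 0 := le_antisymm (by linarith) haAB
      rw [h2, ← hA0, h3]
      nlinarith [mul_nonneg haA hrB]
    rcases eq_or_lt_of_le hrB with hB0 | hB0
    · have h2 : rAB = 0 := le_antisymm (by linarith) hrAB
      have h5 : aB = 0 := le_antisymm (by linarith) haB
      have h3 : aAB = 0 := le_antisymm (by linarith) haAB
      rw [h2, ← hB0, h5, h3]
      nlinarith [mul_nonneg haA hrB]
    have hAB0 : 0 < rAB := by
      rcases eq_or_lt_of_le hrAB with h | h
      · exfalso; nlinarith
      · exact h
    -- all positive; pass to conditional ratios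
    set uO := aO / rO with huO
    set uA := aA / rA with huA
    set uB := aB / rB with huB
    set uAB := aAB / rAB with huAB
    have eO : aO = uO * rO := by rw [huO, div_mul_cancel₀ _ h0.ne']
    have eA : aA = uA * rA := by rw [huA, div_mul_cancel₀ _ hA0.ne']
    have eB : aB = uB * rB := by rw [huB, div_mul_cancel₀ _ hB0.ne']
    have eAB : aAB = uAB * rAB := by rw [huAB, div_mul_cancel₀ _ hAB0.ne']
    have hu1 : uO ≤ uA := by
      rw [huO, huA, div_le_div_iff₀ h0 hA0]; linarith
    have hu2 : uB ≤ uAB := by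
      rw [huB, huAB, div_le_div_iff₀ hB0 hAB0]; linarith
    have hu3 : uO ≤ uB := by
      rw [huO, huB, div_le_div_iff₀ h0 hB0]; linarith
    have hu4 : uA ≤ uAB := by
      rw [huA, huAB, div_le_div_iff₀ hA0 hAB0]; linarith
    rw [eO, eA, eB, eAB]
    -- goal : uO*rO*rAB + uB*rB*rA ≤ uA*rA*rB + uAB*rAB*rO
    rcases le_or_gt uB uA with hcase | hcase
    · nlinarith [mul_le_mul_of_nonneg_right hcase (mul_nonneg hrA hrB),
        mul_le_mul_of_nonneg_right (le_trans hu3 hu2 : uO ≤ uAB) (mul_nonneg hrO hrAB)]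
    · have e1 : (uB - uA) * (rA * rB) ≤ (uB - uA) * (rAB * rO) :=
        mul_le_mul_of_nonneg_left n5 (by linarith)
      have e2 : (uB - uA) * (rAB * rO) ≤ (uAB - uO) * (rAB * rO) :=
        mul_le_mul_of_nonneg_right (by linarith) (mul_nonneg hrAB hrO)
      have e3 := e1.trans e2
      ring_nf at e3 ⊢
      linarith [e3]
  exact mix_le hq hp n1 n2 (by linarith)



section MainInduction
variable [Fintype E] [DecidableEq E] {ends : E → V × V} {p : E → ℝ}
variable {F : Finset E} {D : V → V → Prop}

theorem RF_X_empty (G : Finset E) (D : V → V → Prop) (T : Set V) :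
    RF G D ends T (∅ : Set V) = Set.univ := by
  ext ω; simp [RF]

theorem RF_mono_sources (G : Finset E) {S S' : Set V} (h : S ⊆ S') (X : Set V) :
    RF G D ends S' X ⊆ RF G D ends S X :=
  fun _ hω u hu x hx => hω u (h hu) x hx

theorem RF_insert_compl (G : Finset E) (x₀ t : V) (T : Set V) :
    RF G D ends {x₀} (insert t T)
      = {ω : E → Bool | ¬ ReachF G D ends ω x₀ t} ∩ RF G D ends {x₀} T := by
  ext ω
  simp only [RF, Set.mem_setOf_eq, Set.mem_inter_iff, Set.mem_singleton_iff,
    Set.mem_insert_iff]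
  constructor
  · intro h
    exact ⟨h x₀ rfl t (Or.inl rfl), fun u hu x hx => h u hu x (Or.inr hx)⟩
  · rintro ⟨h1, h2⟩ u rfl x (rfl | hx)
    · exact h1
    · exact h2 u rfl x hx

/-- The statement of the main conditional correlation inequality for a given
set of active edges. -/
def Tstat (F : Finset E) (ends : E → V × V) (p : E → ℝ) : Prop :=
  ∀ (D : V → V → Prop) (s : V) (S X : Set V), s ∈ S →
    ∀ A B : Set (E → Bool), IncrClustDet F D ends s A → IncrClustDet F D ends s B →
      PrF F p (A ∩ RF F D ends S X) * PrF F p (B ∩ RF F D ends S X)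
        ≤ PrF F p (A ∩ B ∩ RF F D ends S X) * PrF F p (RF F D ends S X)

/-- The statement of the extra-source monotonicity inequality. -/
def Ustat (F : Finset E) (ends : E → V × V) (p : E → ℝ) : Prop :=
  ∀ (D : V → V → Prop) (s : V) (S X : Set V), s ∈ S → ∀ (a : V),
    ∀ A : Set (E → Bool), IncrClustDet F D ends s A →
      PrF F p (A ∩ RF F D ends S X) * PrF F p (RF F D ends (insert a S) X)
        ≤ PrF F p (A ∩ RF F D ends (insert a S) X) * PrF F p (RF F D ends S X)

/-- Supermodularity of avoidance probabilities in the source set, derived from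
`Tstat` by turning the obstacle set into a single source. -/
theorem Vlemma (hp : ∀ e, 0 ≤ p e ∧ p e ≤ 1) (hT : Tstat F ends p)
    (D : V → V → Prop) (S X : Set V) (a b : V) :
    PrF F p (RF F D ends (insert a S) X) * PrF F p (RF F D ends (insert b S) X)
      ≤ PrF F p (RF F D ends (insert a (insert b S)) X) * PrF F p (RF F D ends S X) := by
  rcases Set.eq_empty_or_nonempty X with rfl | ⟨x₀, hx₀⟩
  · rw [RF_X_empty, RF_X_empty, RF_X_empty, RF_X_empty]
  · set D' := fun u v => D u v ∨ (u = x₀ ∧ v ∈ X) with hD'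
    set Ca := {ω : E → Bool | ReachF F D' ends ω x₀ a} with hCa
    set Cb := {ω : E → Bool | ReachF F D' ends ω x₀ b} with hCb
    have hdCa : IncrClustDet F D' ends x₀ Ca :=
      fun ω hω ω' hsub => reach_of_cluster_subset hsub hω
    have hdCb : IncrClustDet F D' ends x₀ Cb :=
      fun ω hω ω' hsub => reach_of_cluster_subset hsub hω
    have hT' := hT D' x₀ {x₀} S rfl Ca Cb hdCa hdCb
    -- abbreviations
    set R := RF F D' ends {x₀} S with hR
    -- event identities
    have hS : RF F D ends S X = R := by rw [hR, RF_star hx₀]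
    have hCaC : {ω : E → Bool | ¬ ReachF F D' ends ω x₀ a} = Caᶜ := by
      ext ω; simp [hCa]
    have hCbC : {ω : E → Bool | ¬ ReachF F D' ends ω x₀ b} = Cbᶜ := by
      ext ω; simp [hCb]
    have ha' : RF F D ends (insert a S) X = Caᶜ ∩ R := by
      rw [← RF_star hx₀ (insert a S), RF_insert_compl, hCaC, hR]
    have hb' : RF F D ends (insert b S) X = Cbᶜ ∩ R := by
      rw [← RF_star hx₀ (insert b S), RF_insert_compl, hCbC, hR]
    have hab' : RF F D ends (insert a (insert b S)) X = Caᶜ ∩ (Cbᶜ ∩ R) := by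
      rw [← RF_star hx₀ (insert a (insert b S)), RF_insert_compl, RF_insert_compl,
        hCaC, hCbC, hR]
    rw [hS, ha', hb', hab']
    -- now pure inclusion–exclusion arithmetic
    have e1 : PrF F p (Ca ∩ R) + PrF F p (Caᶜ ∩ R) = PrF F p R := PrF_add_compl _ _
    have e2 : PrF F p (Cb ∩ R) + PrF F p (Cbᶜ ∩ R) = PrF F p R := PrF_add_compl _ _
    have e3 : PrF F p (Ca ∩ (Cb ∩ R)) + PrF F p (Caᶜ ∩ (Cb ∩ R)) = PrF F p (Cb ∩ R) :=
      PrF_add_compl _ _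
    have e4 : PrF F p (Cb ∩ (Caᶜ ∩ R)) + PrF F p (Cbᶜ ∩ (Caᶜ ∩ R)) = PrF F p (Caᶜ ∩ R) :=
      PrF_add_compl _ _
    have e5 : Cb ∩ (Caᶜ ∩ R) = Caᶜ ∩ (Cb ∩ R) := by
      ext ω; simp only [Set.mem_inter_iff]; tauto
    have e6 : Ca ∩ Cb ∩ R = Ca ∩ (Cb ∩ R) := Set.inter_assoc _ _ _
    have e7 : Cbᶜ ∩ (Caᶜ ∩ R) = Caᶜ ∩ (Cbᶜ ∩ R) := by
      ext ω; simp only [Set.mem_inter_iff]; tauto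
    rw [e6] at hT'
    rw [e5] at e4
    rw [e7] at e4
    have hα : PrF F p (Caᶜ ∩ R) = PrF F p R - PrF F p (Ca ∩ R) := by linarith
    have hβ : PrF F p (Cbᶜ ∩ R) = PrF F p R - PrF F p (Cb ∩ R) := by linarith
    have hγ : PrF F p (Caᶜ ∩ (Cbᶜ ∩ R))
        = PrF F p R - PrF F p (Ca ∩ R) - PrF F p (Cb ∩ R) + PrF F p (Ca ∩ (Cb ∩ R)) := by
      linarith
    rw [hα, hβ, hγ]
    nlinarith [hT']
/-- Inductive step for the main correlation inequality. -/
theorem Tstep (hp : ∀ e, 0 ≤ p e ∧ p e ≤ 1) {e₀ : E} (he : e₀ ∈ F) {u₀ b₀ s : V}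
    (hends : ends e₀ = (u₀, b₀) ∨ ends e₀ = (b₀, u₀)) (hsu : DReach D s u₀)
    {S X : Set V} (hs : s ∈ S) {A B : Set (E → Bool)}
    (hA : IncrClustDet F D ends s A) (hB : IncrClustDet F D ends s B)
    (ihT : Tstat (F.erase e₀) ends p) (ihU : Ustat (F.erase e₀) ends p) :
    PrF F p (A ∩ RF F D ends S X) * PrF F p (B ∩ RF F D ends S X)
      ≤ PrF F p (A ∩ B ∩ RF F D ends S X) * PrF F p (RF F D ends S X) := by
  have hq : (0:ℝ) ≤ 1 - p e₀ := by linarith [(hp e₀).2]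
  have hp0 : (0:ℝ) ≤ p e₀ := (hp e₀).1
  -- slice notation
  have hRtel : RF (F.erase e₀) (fun a b => D a b ∨ (a, b) = ends e₀) ends S X
      = RF (F.erase e₀) D ends (insert b₀ S) X := RF_tel hends hsu hs _ X
  -- abbreviations for the eight numbers
  set A0 := (fun ω => Function.update ω e₀ false) ⁻¹' A with hA0
  set A1 := (fun ω => Function.update ω e₀ true) ⁻¹' A with hA1
  set B0 := (fun ω => Function.update ω e₀ false) ⁻¹' B with hB0
  set B1 := (fun ω => Function.update ω e₀ true) ⁻¹' B with hB1
  set R0 := RF (F.erase e₀) D ends S X with hR0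
  set R1 := RF (F.erase e₀) D ends (insert b₀ S) X with hR1
  set a₀ := PrF (F.erase e₀) p (A0 ∩ R0) with ha₀
  set a₁ := PrF (F.erase e₀) p (A1 ∩ R1) with ha₁
  set b₀' := PrF (F.erase e₀) p (B0 ∩ R0) with hb₀'
  set b₁ := PrF (F.erase e₀) p (B1 ∩ R1) with hb₁
  set c₀ := PrF (F.erase e₀) p (A0 ∩ B0 ∩ R0) with hc₀
  set c₁ := PrF (F.erase e₀) p (A1 ∩ B1 ∩ R1) with hc₁
  set r₀ := PrF (F.erase e₀) p R0 with hr₀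
  set r₁ := PrF (F.erase e₀) p R1 with hr₁
  -- decompositions
  have dA : 2 * PrF F p (A ∩ RF F D ends S X) = (1 - p e₀) * a₀ + p e₀ * a₁ := by
    rw [PrF_decomp he, Set.preimage_inter, Set.preimage_inter,
      RF_update_false he, RF_update_true he, hRtel]
  have dB : 2 * PrF F p (B ∩ RF F D ends S X) = (1 - p e₀) * b₀' + p e₀ * b₁ := by
    rw [PrF_decomp he, Set.preimage_inter, Set.preimage_inter,
      RF_update_false he, RF_update_true he, hRtel]
  have dC : 2 * PrF F p (A ∩ B ∩ RF F D ends S X) = (1 - p e₀) * c₀ + p e₀ * c₁ := by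
    rw [PrF_decomp he, Set.preimage_inter, Set.preimage_inter, Set.preimage_inter,
      Set.preimage_inter, RF_update_false he, RF_update_true he, hRtel]
  have dR : 2 * PrF F p (RF F D ends S X) = (1 - p e₀) * r₀ + p e₀ * r₁ := by
    rw [PrF_decomp he, RF_update_false he, RF_update_true he, hRtel]
  -- induction hypotheses
  have iht₀ : a₀ * b₀' ≤ c₀ * r₀ :=
    ihT D s S X hs A0 B0 (incr_slice_false he hA) (incr_slice_false he hB)
  have iht₁ : a₁ * b₁ ≤ c₁ * r₁ := by
    have h := ihT (fun a b => D a b ∨ (a, b) = ends e₀) s S X hs A1 B1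
      (incr_slice_true he hA) (incr_slice_true he hB)
    rw [hRtel] at h
    exact h
  have keya : a₀ * r₁ ≤ a₁ * r₀ := by
    have k1 := ihU D s S X hs b₀ A0 (incr_slice_false he hA)
    have k2 : PrF (F.erase e₀) p (A0 ∩ R1) ≤ a₁ := by
      rw [ha₁]
      exact PrF_mono hp (Set.inter_subset_inter_left _ (slice_subset hA))
    calc a₀ * r₁ ≤ PrF (F.erase e₀) p (A0 ∩ R1) * r₀ := k1
      _ ≤ a₁ * r₀ := mul_le_mul_of_nonneg_right k2 (PrF_nonneg hp _)
  have keyb : b₀' * r₁ ≤ b₁ * r₀ := by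
    have k1 := ihU D s S X hs b₀ B0 (incr_slice_false he hB)
    have k2 : PrF (F.erase e₀) p (B0 ∩ R1) ≤ b₁ := by
      rw [hb₁]
      exact PrF_mono hp (Set.inter_subset_inter_left _ (slice_subset hB))
    calc b₀' * r₁ ≤ PrF (F.erase e₀) p (B0 ∩ R1) * r₀ := k1
      _ ≤ b₁ * r₀ := mul_le_mul_of_nonneg_right k2 (PrF_nonneg hp _)
  have hcross := crossT hq hp0 (PrF_nonneg hp _) (PrF_nonneg hp _) (PrF_nonneg hp _)
    (PrF_nonneg hp _) (PrF_nonneg hp _) (PrF_nonneg hp _) (PrF_nonneg hp _)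
    (PrF_nonneg hp _) (PrF_mono hp Set.inter_subset_right)
    (PrF_mono hp Set.inter_subset_right) (PrF_mono hp Set.inter_subset_right)
    (PrF_mono hp Set.inter_subset_right) iht₀ iht₁ keya keyb
  have h4 : (2 * PrF F p (A ∩ RF F D ends S X)) * (2 * PrF F p (B ∩ RF F D ends S X))
      ≤ (2 * PrF F p (A ∩ B ∩ RF F D ends S X)) * (2 * PrF F p (RF F D ends S X)) := by
    rw [dA, dB, dC, dR]
    exact hcross
  nlinarith [h4]

/-- Inductive step for the extra-source inequality. -/
theorem Ustep (hp : ∀ e, 0 ≤ p e ∧ p e ≤ 1) {e₀ : E} (he : e₀ ∈ F) {u₀ b₀ s : V}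
    (hends : ends e₀ = (u₀, b₀) ∨ ends e₀ = (b₀, u₀)) (hsu : DReach D s u₀)
    {S X : Set V} (hs : s ∈ S) (a : V) {A : Set (E → Bool)}
    (hA : IncrClustDet F D ends s A)
    (ihT : Tstat (F.erase e₀) ends p) (ihU : Ustat (F.erase e₀) ends p) :
    PrF F p (A ∩ RF F D ends S X) * PrF F p (RF F D ends (insert a S) X)
      ≤ PrF F p (A ∩ RF F D ends (insert a S) X) * PrF F p (RF F D ends S X) := by
  have hq : (0:ℝ) ≤ 1 - p e₀ := by linarith [(hp e₀).2]
  have hp0 : (0:ℝ) ≤ p e₀ := (hp e₀).1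
  have hsa : s ∈ insert a S := Set.mem_insert_of_mem _ hs
  have hRtelS : RF (F.erase e₀) (fun a b => D a b ∨ (a, b) = ends e₀) ends S X
      = RF (F.erase e₀) D ends (insert b₀ S) X := RF_tel hends hsu hs _ X
  have hRtelA : RF (F.erase e₀) (fun a b => D a b ∨ (a, b) = ends e₀) ends (insert a S) X
      = RF (F.erase e₀) D ends (insert b₀ (insert a S)) X := RF_tel hends hsu hsa _ X
  set A0 := (fun ω => Function.update ω e₀ false) ⁻¹' A with hA0
  set A1 := (fun ω => Function.update ω e₀ true) ⁻¹' A with hA1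
  set RO := RF (F.erase e₀) D ends S X with hRO
  set RB := RF (F.erase e₀) D ends (insert b₀ S) X with hRB
  set RA := RF (F.erase e₀) D ends (insert a S) X with hRA
  set RAB := RF (F.erase e₀) D ends (insert b₀ (insert a S)) X with hRAB
  set aO := PrF (F.erase e₀) p (A0 ∩ RO) with haO
  set aB := PrF (F.erase e₀) p (A1 ∩ RB) with haB
  set aA := PrF (F.erase e₀) p (A0 ∩ RA) with haA
  set aAB := PrF (F.erase e₀) p (A1 ∩ RAB) with haAB
  set rO := PrF (F.erase e₀) p RO with hrO
  set rB := PrF (F.erase e₀) p RB with hrB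
  set rA := PrF (F.erase e₀) p RA with hrA
  set rAB := PrF (F.erase e₀) p RAB with hrAB
  -- decompositions
  have d1 : 2 * PrF F p (A ∩ RF F D ends S X) = (1 - p e₀) * aO + p e₀ * aB := by
    rw [PrF_decomp he, Set.preimage_inter, Set.preimage_inter,
      RF_update_false he, RF_update_true he, hRtelS]
  have d2 : 2 * PrF F p (RF F D ends (insert a S) X) = (1 - p e₀) * rA + p e₀ * rAB := by
    rw [PrF_decomp he, RF_update_false he, RF_update_true he, hRtelA]
  have d3 : 2 * PrF F p (A ∩ RF F D ends (insert a S) X)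
      = (1 - p e₀) * aA + p e₀ * aAB := by
    rw [PrF_decomp he, Set.preimage_inter, Set.preimage_inter,
      RF_update_false he, RF_update_true he, hRtelA]
  have d4 : 2 * PrF F p (RF F D ends S X) = (1 - p e₀) * rO + p e₀ * rB := by
    rw [PrF_decomp he, RF_update_false he, RF_update_true he, hRtelS]
  -- the five key inequalities
  have n1 : aO * rA ≤ aA * rO := ihU D s S X hs a A0 (incr_slice_false he hA)
  have n2 : aB * rAB ≤ aAB * rB := by
    have h := ihU (fun a b => D a b ∨ (a, b) = ends e₀) s S X hs a A1
      (incr_slice_true he hA)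
    rw [hRtelS, hRtelA] at h
    exact h
  have n3 : aO * rB ≤ aB * rO := by
    have k1 := ihU D s S X hs b₀ A0 (incr_slice_false he hA)
    have k2 : PrF (F.erase e₀) p (A0 ∩ RB) ≤ aB := by
      rw [haB]
      exact PrF_mono hp (Set.inter_subset_inter_left _ (slice_subset hA))
    calc aO * rB ≤ PrF (F.erase e₀) p (A0 ∩ RB) * rO := k1
      _ ≤ aB * rO := mul_le_mul_of_nonneg_right k2 (PrF_nonneg hp _)
  have n4 : aA * rAB ≤ aAB * rA := by
    have k1 := ihU D s (insert a S) X hsa b₀ A0 (incr_slice_false he hA)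
    have k2 : PrF (F.erase e₀) p (A0 ∩ RAB) ≤ aAB := by
      rw [haAB]
      exact PrF_mono hp (Set.inter_subset_inter_left _ (slice_subset hA))
    calc aA * rAB ≤ PrF (F.erase e₀) p (A0 ∩ RAB) * rA := k1
      _ ≤ aAB * rA := mul_le_mul_of_nonneg_right k2 (PrF_nonneg hp _)
  have n5 : rA * rB ≤ rAB * rO := by
    have h := Vlemma hp ihT D S X a b₀
    rw [Set.insert_comm] at h
    exact h
  -- monotonicity facts
  have mA : rA ≤ rO := PrF_mono hp (RF_mono_sources _ (Set.subset_insert _ _) _)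
  have mB : rB ≤ rO := PrF_mono hp (RF_mono_sources _ (Set.subset_insert _ _) _)
  have mAB : rAB ≤ rA := PrF_mono hp (RF_mono_sources _ (Set.subset_insert _ _) _)
  have mAB' : rAB ≤ rB := by
    refine PrF_mono hp (RF_mono_sources _ ?_ _)
    intro u hu
    rcases Set.mem_insert_iff.1 hu with rfl | hu
    · exact Set.mem_insert _ _
    · exact Set.mem_insert_of_mem _ (Set.mem_insert_of_mem _ hu)
  have hcross := crossU hq hp0 (PrF_nonneg hp _) (PrF_nonneg hp _) (PrF_nonneg hp _)
    (PrF_nonneg hp _) (PrF_nonneg hp _) (PrF_nonneg hp _) (PrF_nonneg hp _)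
    (PrF_nonneg hp _) mA mB mAB mAB' (PrF_mono hp Set.inter_subset_right)
    (PrF_mono hp Set.inter_subset_right) (PrF_mono hp Set.inter_subset_right)
    (PrF_mono hp Set.inter_subset_right) n1 n2 n3 n4 n5
  have h4 : (2 * PrF F p (A ∩ RF F D ends S X))
        * (2 * PrF F p (RF F D ends (insert a S) X))
      ≤ (2 * PrF F p (A ∩ RF F D ends (insert a S) X))
        * (2 * PrF F p (RF F D ends S X)) := by
    rw [d1, d2, d3, d4]
    exact hcross
  nlinarith [h4]

/-- The main mutual induction: both statements hold for every set of active edges. -/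
theorem TU (hp : ∀ e, 0 ≤ p e ∧ p e ≤ 1) (F : Finset E) :
    Tstat F ends p ∧ Ustat F ends p := by
  induction F using Finset.strongInduction with
  | _ F ih =>
    constructor
    · -- Tstat
      intro D s S X hs A B hA hB
      by_cases hex : ∃ e ∈ F, DReach D s (ends e).1 ∨ DReach D s (ends e).2
      · obtain ⟨e₀, he₀, hor⟩ := hex
        have ihT := (ih (F.erase e₀) (Finset.erase_ssubset he₀)).1
        have ihU := (ih (F.erase e₀) (Finset.erase_ssubset he₀)).2
        rcases hor with h | h
        · exact Tstep (u₀ := (ends e₀).1) (b₀ := (ends e₀).2) hp he₀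
            (Or.inl Prod.mk.eta.symm) h hs hA hB ihT ihU
        · exact Tstep (u₀ := (ends e₀).2) (b₀ := (ends e₀).1) hp he₀
            (Or.inr Prod.mk.eta.symm) h hs hA hB ihT ihU
      · push_neg at hex
        rcases trivial_of_stuck hex hA with rfl | rfl
        · rw [Set.empty_inter, PrF_empty, zero_mul]
          exact mul_nonneg (PrF_nonneg hp _) (PrF_nonneg hp _)
        · rcases trivial_of_stuck hex hB with rfl | rfl
          · rw [Set.inter_empty, Set.univ_inter, Set.empty_inter, PrF_empty, mul_zero,
              zero_mul]
          · rw [Set.univ_inter, Set.univ_inter, Set.univ_inter]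
    · -- Ustat
      intro D s S X hs a A hA
      by_cases hex : ∃ e ∈ F, DReach D s (ends e).1 ∨ DReach D s (ends e).2
      · obtain ⟨e₀, he₀, hor⟩ := hex
        have ihT := (ih (F.erase e₀) (Finset.erase_ssubset he₀)).1
        have ihU := (ih (F.erase e₀) (Finset.erase_ssubset he₀)).2
        rcases hor with h | h
        · exact Ustep (u₀ := (ends e₀).1) (b₀ := (ends e₀).2) hp he₀
            (Or.inl Prod.mk.eta.symm) h hs a hA ihT ihU
        · exact Ustep (u₀ := (ends e₀).2) (b₀ := (ends e₀).1) hp he₀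
            (Or.inr Prod.mk.eta.symm) h hs a hA ihT ihU
      · push_neg at hex
        rcases trivial_of_stuck hex hA with rfl | rfl
        · rw [Set.empty_inter, PrF_empty, zero_mul]
          exact mul_nonneg (PrF_nonneg hp _) (PrF_nonneg hp _)
        · rw [Set.univ_inter, Set.univ_inter]
          exact le_of_eq (mul_comm _ _)

/-! ### Translation to the original definitions -/

theorem stepF_univ_bot (ω : E → Bool) (u v : V) :
    StepF Finset.univ (fun _ _ => False) ends ω u v ↔ Step ends ω u v := by
  simp [StepF, Step]

theorem reachF_univ_bot (ω : E → Bool) (u v : V) :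
    ReachF Finset.univ (fun _ _ => False) ends ω u v ↔ Reach ends ω u v := by
  constructor <;> intro h <;> refine Relation.ReflTransGen.mono ?_ _ _ h <;> intro a b hs
  · exact (stepF_univ_bot ω a b).1 hs
  · exact (stepF_univ_bot ω a b).2 hs

theorem clusterF_univ_bot (s : V) (ω : E → Bool) :
    ClusterF Finset.univ (fun _ _ => False) ends s ω = Cluster ends s ω := by
  ext e
  simp only [ClusterF, Cluster, Set.mem_setOf_eq, Finset.mem_univ, true_and,
    reachF_univ_bot]

theorem RF_univ_bot (s : V) (X : Set V) :
    RF Finset.univ (fun _ _ => False) ends {s} X = RX ends s X := by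
  ext ω
  simp only [RF, RX, Set.mem_setOf_eq, Set.mem_singleton_iff]
  constructor
  · intro h x hx hr
    exact h s rfl x hx ((reachF_univ_bot ω s x).2 hr)
  · rintro h u rfl x hx hr
    exact h x hx ((reachF_univ_bot ω u x).1 hr)

theorem PrF_univ_eq (A : Set (E → Bool)) : PrF Finset.univ p A = Pr p A := rfl

end MainInduction

/-- Theorem 1.2. If `A`, `B` are increasing events determined
by the open cluster of `s`, and `X ⊆ V \ {s}` with `Pr(R_X) > 0`, then
conditioned on `R_X` the events `A` and `B` are positively correlated:
`Pr(A ∩ B | R_X) ≥ Pr(A | R_X) · Pr(B | R_X)`. -/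
theorem stmt1 [Fintype V] [Fintype E] [DecidableEq E]
    (ends : E → V × V) (p : E → ℝ) (hp : ∀ e, 0 ≤ p e ∧ p e ≤ 1)
    (s : V) (X : Set V) (hX : s ∉ X)
    (hpos : 0 < Pr p (RX ends s X))
    (A B : Set (E → Bool))
    (hA : ∀ ω ∈ A, ∀ ω', Cluster ends s ω ⊆ Cluster ends s ω' → ω' ∈ A)
    (hB : ∀ ω ∈ B, ∀ ω', Cluster ends s ω ⊆ Cluster ends s ω' → ω' ∈ B) :
    condPr p (A ∩ B) (RX ends s X) ≥
      condPr p A (RX ends s X) * condPr p B (RX ends s X) := by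
  have hA' : IncrClustDet Finset.univ (fun _ _ => False) ends s A := by
    intro ω hω ω' hsub
    rw [clusterF_univ_bot, clusterF_univ_bot] at hsub
    exact hA ω hω ω' hsub
  have hB' : IncrClustDet Finset.univ (fun _ _ => False) ends s B := by
    intro ω hω ω' hsub
    rw [clusterF_univ_bot, clusterF_univ_bot] at hsub
    exact hB ω hω ω' hsub
  have main := (TU hp Finset.univ).1 (fun _ _ => False) s {s} X rfl A B hA' hB'
  rw [RF_univ_bot, PrF_univ_eq, PrF_univ_eq, PrF_univ_eq, PrF_univ_eq] at main
  rw [condPr, condPr, condPr, ge_iff_le, div_mul_div_comm,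
    div_le_div_iff₀ (mul_pos hpos hpos) hpos]
  nlinarith [mul_le_mul_of_nonneg_right main hpos.le]

end BondPerc
end

section
/- Let s be a vertex of G, let X ⊆ V \ {s} with Pr(R_X) > 0, let f be a bounded increasing function of C_s and g a bounded decreasing function of C_s. Then E[f·g | R_X] ≤ E[f | R_X] · E[g | R_X]. -/
/-!
Bond percolation on a finite graph `G = (V, E)`.
Edges are given by their endpoints `ends : E → V × V` (unordered: a path may
traverse an edge in either direction).  Each edge `e` is independently open
(`ω e = true`) with probability `p e`; `Pr` is the resulting product measure
on configurations `ω : E → Bool`.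
-/

attribute [local instance] Classical.propDecidable
set_option linter.unusedSectionVars false
set_option maxHeartbeats 1000000

namespace BondPerc

variable {V E : Type*}

/-! ### Basic lemmas about `Reach` and `Cluster` -/

section Basics

variable (ends : E → V × V) (s : V)

lemma step_symm {ω : E → Bool} {u v : V} (h : Step ends ω u v) : Step ends ω v u := by
  obtain ⟨e, he, hor⟩ := h; exact ⟨e, he, hor.symm⟩

lemma reach_symm {ω : E → Bool} {u v : V} (h : Reach ends ω u v) : Reach ends ω v u :=
  (@Relation.ReflTransGen.stdSymm _ _ ⟨fun _ _ h => step_symm ends h⟩).symm _ _ h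

lemma reach_trans {ω : E → Bool} {u v w : V} (h : Reach ends ω u v) (h' : Reach ends ω v w) :
    Reach ends ω u w := Relation.ReflTransGen.trans h h'

lemma reach_mono {ω ω' : E → Bool} (h : ∀ e, ω e = true → ω' e = true)
    {u v : V} (hr : Reach ends ω u v) : Reach ends ω' u v := by
  refine Relation.ReflTransGen.mono ?_ _ _ hr
  rintro a b ⟨e, he, hor⟩
  exact ⟨e, h e he, hor⟩

lemma cluster_mono {ω ω' : E → Bool} (h : ∀ e, ω e = true → ω' e = true) :
    Cluster ends s ω ⊆ Cluster ends s ω' := by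
  rintro e ⟨he, hr⟩
  exact ⟨h e he, hr.imp (reach_mono ends h) (reach_mono ends h)⟩

/-- step across an open edge from a reachable endpoint. -/
lemma reach_other {ω : E → Bool} {u : V} {e : E} (he : ω e = true)
    (hor : (ends e).1 = u ∨ (ends e).2 = u) (hu : Reach ends ω s u) :
    Reach ends ω s (ends e).1 ∧ Reach ends ω s (ends e).2 := by
  rcases hor with h1 | h2
  · exact ⟨h1 ▸ hu, hu.tail ⟨e, he, Or.inl (by rw [← h1])⟩⟩
  · exact ⟨hu.tail ⟨e, he, Or.inr (by rw [← h2])⟩, h2 ▸ hu⟩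

/-- the characteristic configuration of a set of edges -/
noncomputable def chi (C : Set E) : E → Bool := fun e => if e ∈ C then true else false

lemma chi_eq_true {C : Set E} {e : E} : chi C e = true ↔ e ∈ C := by
  unfold chi; split <;> simp_all

lemma chi_inj {C C' : Set E} (h : chi C = chi C') : C = C' := by
  ext e
  rw [← chi_eq_true (C := C), ← chi_eq_true (C := C'), h]

lemma chi_mono {C C' : Set E} (h : C ⊆ C') : ∀ e, chi C e = true → chi C' e = true := by
  intro e he; rw [chi_eq_true] at he ⊢; exact h he

/-- every open path from `s` uses only edges of the cluster of `s` -/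
lemma reach_chi {ω : E → Bool} {v : V} (h : Reach ends ω s v) :
    Reach ends (chi (Cluster ends s ω)) s v := by
  induction h with
  | refl => exact .refl
  | @tail b c hb hstep ih =>
      obtain ⟨e, he, hor⟩ := hstep
      have hmem : e ∈ Cluster ends s ω := by
        refine ⟨he, ?_⟩
        rcases hor with h1 | h1
        · exact Or.inl (by rw [h1]; exact hb)
        · exact Or.inr (by rw [h1]; exact hb)
      exact ih.tail ⟨e, chi_eq_true.2 hmem, hor⟩

lemma reach_chi_iff {ω : E → Bool} {v : V} :
    Reach ends ω s v ↔ Reach ends (chi (Cluster ends s ω)) s v := by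
  constructor
  · exact reach_chi ends s
  · exact reach_mono ends (fun e he => ((chi_eq_true.1 he).1))

/-- a set which arises as a cluster -/
def Good (C : Set E) : Prop := Cluster ends s (chi C) = C

lemma good_cluster (ω : E → Bool) : Good ends s (Cluster ends s ω) := by
  unfold Good
  ext e
  constructor
  · rintro ⟨he, hr⟩
    have heC := chi_eq_true.1 he
    exact heC
  · rintro ⟨he, hr⟩
    exact ⟨chi_eq_true.2 ⟨he, hr⟩, hr.imp (reach_chi ends s) (reach_chi ends s)⟩

/-- vertex set of a (potential) cluster -/
def VS (C : Set E) : Set V := {v | Reach ends (chi C) s v}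

lemma VS_mono {C C' : Set E} (h : C ⊆ C') : VS ends s C ⊆ VS ends s C' :=
  fun _ hv => reach_mono ends (chi_mono h) hv

lemma endpoints_mem_VS {C : Set E} (hC : Good ends s C) {e : E} (he : e ∈ C) :
    (ends e).1 ∈ VS ends s C ∧ (ends e).2 ∈ VS ends s C := by
  have he' : e ∈ Cluster ends s (chi C) := by rw [hC]; exact he
  obtain ⟨hopen, hr⟩ := he'
  rcases hr with h1 | h1
  · exact reach_other ends s hopen (Or.inl rfl) h1
  · exact reach_other ends s hopen (Or.inr rfl) h1

/-- boundary edges of a potential cluster -/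
def Bd (C : Set E) : Set E :=
  {e | e ∉ C ∧ ((ends e).1 ∈ VS ends s C ∨ (ends e).2 ∈ VS ends s C)}

/-- on configurations satisfying the cylinder constraints, the reachable set is `VS C`. -/
lemma reach_eq_VS {C : Set E} (hC : Good ends s C) {ω : E → Bool}
    (h1 : ∀ e ∈ C, ω e = true) (h2 : ∀ e ∈ Bd ends s C, ω e = false) {v : V} :
    Reach ends ω s v ↔ v ∈ VS ends s C := by
  constructor
  · intro h
    induction h with
    | refl => exact Relation.ReflTransGen.refl
    | @tail b c hb hstep ih =>
        obtain ⟨e, he, hor⟩ := hstep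
        by_cases heC : e ∈ C
        · have := endpoints_mem_VS ends s hC heC
          rcases hor with h' | h'
          · have : (ends e).2 ∈ VS ends s C := this.2
            rwa [h'] at this
          · have : (ends e).1 ∈ VS ends s C := this.1
            rwa [h'] at this
        · exfalso
          have hbd : e ∈ Bd ends s C := by
            refine ⟨heC, ?_⟩
            rcases hor with h' | h'
            · exact Or.inl (by rw [h']; exact ih)
            · exact Or.inr (by rw [h']; exact ih)
          rw [h2 e hbd] at he; exact Bool.false_ne_true he
  · intro h
    exact reach_mono ends (fun e he => h1 e (chi_eq_true.1 he)) h

/-- Lemma A : the fiber of a good cluster is a cylinder. -/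
lemma fiber_iff {C : Set E} (hC : Good ends s C) {ω : E → Bool} :
    Cluster ends s ω = C ↔ ((∀ e ∈ C, ω e = true) ∧ ∀ e ∈ Bd ends s C, ω e = false) := by
  constructor
  · intro h
    subst h
    constructor
    · exact fun e he => he.1
    · rintro e ⟨heC, hr⟩
      by_contra hne
      have he : ω e = true := by revert hne; cases ω e <;> simp
      refine heC ⟨he, ?_⟩
      unfold VS at hr
      rcases hr with h1 | h1
      · exact Or.inl ((reach_chi_iff ends s).2 h1)
      · exact Or.inr ((reach_chi_iff ends s).2 h1)
  · rintro ⟨h1, h2⟩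
    ext e
    constructor
    · rintro ⟨he, hr⟩
      by_contra heC
      have hbd : e ∈ Bd ends s C := by
        refine ⟨heC, ?_⟩
        rcases hr with h' | h'
        · exact Or.inl ((reach_eq_VS ends s hC h1 h2).1 h')
        · exact Or.inr ((reach_eq_VS ends s hC h1 h2).1 h')
      rw [h2 e hbd] at he; exact Bool.false_ne_true he
    · intro he
      refine ⟨h1 e he, ?_⟩
      have := endpoints_mem_VS ends s hC he
      exact Or.inl ((reach_eq_VS ends s hC h1 h2).2 this.1)

/-- the canonical representative of the cylinder: cluster edges open, boundary closed. -/
noncomputable def phi (C : Set E) (ω : E → Bool) : E → Bool :=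
  fun e => if e ∈ C then true else if e ∈ Bd ends s C then false else ω e

lemma phi_spec1 {C : Set E} : ∀ e ∈ C, phi ends s C ω e = true := by
  intro e he; unfold phi; rw [if_pos he]

lemma phi_spec2 {C : Set E} : ∀ e ∈ Bd ends s C, phi ends s C ω e = false := by
  intro e he; unfold phi; rw [if_neg he.1, if_pos he]

lemma cluster_phi {C : Set E} (hC : Good ends s C) (ω : E → Bool) :
    Cluster ends s (phi ends s C ω) = C :=
  (fiber_iff ends s hC).2 ⟨phi_spec1 ends s, phi_spec2 ends s⟩

lemma phi_fixed {C : Set E} {ω : E → Bool} (h : Cluster ends s ω = C) :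
    phi ends s C ω = ω := by
  have hC : Good ends s C := h ▸ good_cluster ends s ω
  obtain ⟨h1, h2⟩ := (fiber_iff ends s hC).1 h
  funext e
  unfold phi
  by_cases heC : e ∈ C
  · rw [if_pos heC, h1 e heC]
  · rw [if_neg heC]
    by_cases hbd : e ∈ Bd ends s C
    · rw [if_pos hbd, h2 e hbd]
    · rw [if_neg hbd]

lemma phi_off {C : Set E} {ω ω' : E → Bool}
    (h : ∀ e, e ∉ C ∧ e ∉ Bd ends s C → ω e = ω' e) :
    phi ends s C ω = phi ends s C ω' := by
  funext e
  unfold phi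
  by_cases heC : e ∈ C
  · rw [if_pos heC, if_pos heC]
  · rw [if_neg heC, if_neg heC]
    by_cases hbd : e ∈ Bd ends s C
    · rw [if_pos hbd, if_pos hbd]
    · rw [if_neg hbd, if_neg hbd, h e ⟨heC, hbd⟩]

end Basics
/-! ### Finite sum machinery for the product measure -/

section Sums

variable [Fintype E] [DecidableEq E]

/-- single edge factor -/
noncomputable def wt (p : E → ℝ) (e : E) (b : Bool) : ℝ := if b then p e else 1 - p e

lemma weight_eq_prod_wt (p : E → ℝ) (ω : E → Bool) : weight p ω = ∏ e, wt p e (ω e) := rfl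

lemma wt_nonneg {p : E → ℝ} (hp : ∀ e, 0 ≤ p e ∧ p e ≤ 1) (e : E) (b : Bool) :
    0 ≤ wt p e b := by
  unfold wt; cases b <;> simp [(hp e).1, (hp e).2]

lemma wt_sum (p : E → ℝ) (e : E) : wt p e true + wt p e false = 1 := by
  unfold wt; simp

lemma weight_nonneg {p : E → ℝ} (hp : ∀ e, 0 ≤ p e ∧ p e ≤ 1) (ω : E → Bool) :
    0 ≤ weight p ω :=
  Finset.prod_nonneg fun e _ => wt_nonneg hp e (ω e)

/-- total mass one -/
lemma sum_weight (p : E → ℝ) : ∑ ω : E → Bool, weight p ω = 1 := by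
  have h := Finset.prod_univ_sum (fun _ : E => (Finset.univ : Finset Bool))
      (fun e b => wt p e b)
  rw [Fintype.piFinset_univ] at h
  calc ∑ ω : E → Bool, weight p ω = ∑ ω : E → Bool, ∏ e, wt p e (ω e) := rfl
    _ = ∏ e : E, ∑ b : Bool, wt p e b := h.symm
    _ = ∏ e : E, (1 : ℝ) :=
        Finset.prod_congr rfl fun e _ => by rw [Fintype.sum_bool]; exact wt_sum p e
    _ = 1 := Finset.prod_const_one

/-- the numerator of `condExp` -/
noncomputable def SInd (p : E → ℝ) (A : Set (E → Bool)) (h : (E → Bool) → ℝ) : ℝ :=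
  ∑ ω : E → Bool, A.indicator (fun ω' => weight p ω' * h ω') ω

lemma condExp_eq (p : E → ℝ) (f : (E → Bool) → ℝ) (B : Set (E → Bool)) :
    condExp p f B = SInd p B f / Pr p B := rfl

lemma SInd_eq_sum_ite (p : E → ℝ) (A : Set (E → Bool)) (h : (E → Bool) → ℝ) :
    SInd p A h = ∑ ω : E → Bool, if ω ∈ A then weight p ω * h ω else 0 :=
  Finset.sum_congr rfl fun ω _ => by rw [Set.indicator_apply]

lemma Pr_eq_SInd_one (p : E → ℝ) (A : Set (E → Bool)) :
    Pr p A = SInd p A (fun _ => 1) := by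
  unfold Pr SInd
  refine Finset.sum_congr rfl fun ω _ => ?_
  by_cases hω : ω ∈ A <;> simp [hω]

lemma SInd_nonneg {p : E → ℝ} (hp : ∀ e, 0 ≤ p e ∧ p e ≤ 1) (A : Set (E → Bool))
    {h : (E → Bool) → ℝ} (hh : ∀ ω, 0 ≤ h ω) : 0 ≤ SInd p A h := by
  rw [SInd_eq_sum_ite]
  refine Finset.sum_nonneg fun ω _ => ?_
  split
  · exact mul_nonneg (weight_nonneg hp ω) (hh ω)
  · exact le_refl 0

lemma Pr_nonneg {p : E → ℝ} (hp : ∀ e, 0 ≤ p e ∧ p e ≤ 1) (A : Set (E → Bool)) :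
    0 ≤ Pr p A := by
  rw [Pr_eq_SInd_one]; exact SInd_nonneg hp A (fun _ => zero_le_one)

lemma SInd_mono {p : E → ℝ} (hp : ∀ e, 0 ≤ p e ∧ p e ≤ 1) (A : Set (E → Bool))
    {h h' : (E → Bool) → ℝ} (hh : ∀ ω, h ω ≤ h' ω) : SInd p A h ≤ SInd p A h' := by
  rw [SInd_eq_sum_ite, SInd_eq_sum_ite]
  refine Finset.sum_le_sum fun ω _ => ?_
  split
  · exact mul_le_mul_of_nonneg_left (hh ω) (weight_nonneg hp ω)
  · exact le_refl 0

lemma SInd_neg (p : E → ℝ) (A : Set (E → Bool)) (h : (E → Bool) → ℝ) :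
    SInd p A (fun ω => -(h ω)) = -(SInd p A h) := by
  rw [SInd_eq_sum_ite, SInd_eq_sum_ite, ← Finset.sum_neg_distrib]
  refine Finset.sum_congr rfl fun ω _ => ?_
  split <;> ring

lemma SInd_eq_zero_of_Pr_zero {p : E → ℝ} (hp : ∀ e, 0 ≤ p e ∧ p e ≤ 1)
    {A : Set (E → Bool)} (hA : Pr p A = 0) (h : (E → Bool) → ℝ) : SInd p A h = 0 := by
  have hw : ∀ ω ∈ Finset.univ, (0 : ℝ) ≤ (if ω ∈ A then weight p ω else 0) := by
    intro ω _; split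
    · exact weight_nonneg hp ω
    · exact le_refl 0
  have hPr : Pr p A = ∑ ω : E → Bool, (if ω ∈ A then weight p ω else 0) := by
    unfold Pr; exact Finset.sum_congr rfl fun ω _ => Set.indicator_apply A (weight p) ω
  have hA' : ∑ ω : E → Bool, (if ω ∈ A then weight p ω else 0) = 0 := by
    rw [← hPr]; exact hA
  have hzero := (Finset.sum_eq_zero_iff_of_nonneg hw).1 hA'
  rw [SInd_eq_sum_ite]
  refine Finset.sum_eq_zero fun ω _ => ?_
  split
  · rename_i hω
    have := hzero ω (Finset.mem_univ ω)
    rw [if_pos hω] at this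
    rw [this, zero_mul]
  · rfl

lemma Pr_empty (p : E → ℝ) : Pr p (∅ : Set (E → Bool)) = 0 := by
  unfold Pr; simp

lemma nonempty_of_Pr_pos {p : E → ℝ} {A : Set (E → Bool)} (h : 0 < Pr p A) :
    A.Nonempty := by
  by_contra hne
  rw [Set.not_nonempty_iff_eq_empty] at hne
  rw [hne, Pr_empty] at h
  exact lt_irrefl 0 h

lemma SInd_const (p : E → ℝ) (A : Set (E → Bool)) (c : ℝ) :
    SInd p A (fun _ => c) = c * Pr p A := by
  rw [Pr_eq_SInd_one, SInd_eq_sum_ite, SInd_eq_sum_ite, Finset.mul_sum]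
  refine Finset.sum_congr rfl fun ω _ => ?_
  split <;> ring

lemma SInd_congr_on (p : E → ℝ) (A : Set (E → Bool)) {h h' : (E → Bool) → ℝ}
    (hh : ∀ ω ∈ A, h ω = h' ω) : SInd p A h = SInd p A h' := by
  rw [SInd_eq_sum_ite, SInd_eq_sum_ite]
  refine Finset.sum_congr rfl fun ω _ => ?_
  split
  · rename_i hω; rw [hh ω hω]
  · rfl

/-- restricting by the indicator of another event -/
lemma SInd_mul_indicator (p : E → ℝ) (A T : Set (E → Bool)) (h : (E → Bool) → ℝ) :
    SInd p A (fun ω => h ω * (if ω ∈ T then (1 : ℝ) else 0)) = SInd p (A ∩ T) h := by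
  rw [SInd_eq_sum_ite, SInd_eq_sum_ite]
  refine Finset.sum_congr rfl fun ω _ => ?_
  by_cases hA : ω ∈ A <;> by_cases hT : ω ∈ T <;>
    simp [hA, hT, Set.mem_inter_iff] <;> ring

lemma bounded_of_fintype (h : (E → Bool) → ℝ) : ∃ M, ∀ ω, |h ω| ≤ M := by
  refine ⟨∑ ω : E → Bool, |h ω|, fun ω => ?_⟩
  exact Finset.single_le_sum (fun ω' _ => abs_nonneg (h ω')) (Finset.mem_univ ω)

/- ### The cylinder splitting identity -/

/-- If `u` depends only on coordinates outside `D`, then the weighted sum of `u` over the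
cylinder `{ω | ∀ e ∈ D, ω e = pat e}` factorizes. -/
lemma split_cylinder (p : E → ℝ) (D : Set E) (pat : E → Bool) (u : (E → Bool) → ℝ)
    (hu : ∀ ω ω' : E → Bool, (∀ e, e ∉ D → ω e = ω' e) → u ω = u ω') :
    ∑ ω : E → Bool, (if (∀ e ∈ D, ω e = pat e) then weight p ω * u ω else 0)
      = (∏ e : {x // x ∈ D}, wt p e.1 (pat e.1)) * ∑ ω : E → Bool, weight p ω * u ω := by
  classical
  set q : E → Prop := fun e => e ∈ D with hq
  set eqv := (Equiv.piEquivPiSubtypeProd q (fun _ => Bool)).symm with heqv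
  have happ : ∀ (d : {x // q x} → Bool) (o : {x // ¬ q x} → Bool) (e : E),
      eqv (d, o) e = if h : q e then d ⟨e, h⟩ else o ⟨e, h⟩ := by
    intro d o e
    rw [heqv]
    exact Equiv.piEquivPiSubtypeProd_symm_apply q (fun _ => Bool) (d, o) e
  have hweight : ∀ (d : {x // q x} → Bool) (o : {x // ¬ q x} → Bool),
      weight p (eqv (d, o)) =
        (∏ e : {x // q x}, wt p e.1 (d e)) * (∏ e : {x // ¬ q x}, wt p e.1 (o e)) := by
    intro d o
    rw [weight_eq_prod_wt, ← Fintype.prod_subtype_mul_prod_subtype q (fun e => wt p e (eqv (d,o) e))]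
    congr 1
    · refine Finset.prod_congr rfl fun e _ => ?_
      rw [happ, dif_pos e.2]
    · refine Finset.prod_congr rfl fun e _ => ?_
      rw [happ, dif_neg e.2]
  have hu' : ∀ (d d' : {x // q x} → Bool) (o : {x // ¬ q x} → Bool),
      u (eqv (d, o)) = u (eqv (d', o)) := by
    intro d d' o
    refine hu _ _ fun e he => ?_
    rw [happ, happ, dif_neg he, dif_neg he]
  have hcond : ∀ (d : {x // q x} → Bool) (o : {x // ¬ q x} → Bool),
      (∀ e ∈ D, eqv (d, o) e = pat e) ↔ d = (fun e => pat e.1) := by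
    intro d o
    constructor
    · intro h
      funext e
      have := h e.1 e.2
      rwa [happ, dif_pos e.2] at this
    · intro h e he
      rw [happ, dif_pos he, h]
  -- sum over the equivalence
  have hsum : ∀ F : (E → Bool) → ℝ, ∑ ω : E → Bool, F ω
      = ∑ d : {x // q x} → Bool, ∑ o : {x // ¬ q x} → Bool, F (eqv (d, o)) := by
    intro F
    rw [← Equiv.sum_comp eqv F, Fintype.sum_prod_type]
  rw [hsum, hsum (fun ω => weight p ω * u ω)]
  have htot : ∑ d : {x // q x} → Bool, ∏ e : {x // q x}, wt p e.1 (d e) = 1 := by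
    have h := Finset.prod_univ_sum (fun _ : {x // q x} => (Finset.univ : Finset Bool))
        (fun e b => wt p e.1 b)
    rw [Fintype.piFinset_univ] at h
    calc ∑ d : {x // q x} → Bool, ∏ e : {x // q x}, wt p e.1 (d e) = ∏ e : {x // q x}, ∑ b : Bool, wt p e.1 b := h.symm
      _ = ∏ e : {x // q x}, (1:ℝ) :=
          Finset.prod_congr rfl fun e _ => by rw [Fintype.sum_bool]; exact wt_sum p e.1
      _ = 1 := Finset.prod_const_one
  set patD : {x // q x} → Bool := fun e => pat e.1 with hpatD
  calc ∑ d : {x // q x} → Bool, ∑ o : {x // ¬ q x} → Bool,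
        (if (∀ e ∈ D, eqv (d, o) e = pat e) then weight p (eqv (d, o)) * u (eqv (d, o)) else 0)
      = ∑ d : {x // q x} → Bool, ∑ o : {x // ¬ q x} → Bool,
        (if d = patD then weight p (eqv (d, o)) * u (eqv (d, o)) else 0) := by
        refine Finset.sum_congr rfl fun d _ => Finset.sum_congr rfl fun o _ => ?_
        rw [if_congr (hcond d o) rfl rfl]
    _ = ∑ o : {x // ¬ q x} → Bool, weight p (eqv (patD, o)) * u (eqv (patD, o)) := by
        rw [Finset.sum_comm]
        refine Finset.sum_congr rfl fun o _ => ?_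
        rw [Finset.sum_ite_eq' Finset.univ patD (fun d => weight p (eqv (d, o)) * u (eqv (d, o)))]
        simp
    _ = ∑ o : {x // ¬ q x} → Bool, ((∏ e : {x // q x}, wt p e.1 (pat e.1))
          * ((∏ e : {x // ¬ q x}, wt p e.1 (o e)) * u (eqv (patD, o)))) := by
        refine Finset.sum_congr rfl fun o _ => ?_
        rw [hweight]; ring
    _ = (∏ e : {x // q x}, wt p e.1 (pat e.1))
          * ∑ o : {x // ¬ q x} → Bool, (∏ e : {x // ¬ q x}, wt p e.1 (o e)) * u (eqv (patD, o)) := by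
        rw [Finset.mul_sum]
    _ = (∏ e : {x // q x}, wt p e.1 (pat e.1))
          * ∑ d : {x // q x} → Bool, ∑ o : {x // ¬ q x} → Bool, weight p (eqv (d, o)) * u (eqv (d, o)) := by
        congr 1
        calc ∑ o : {x // ¬ q x} → Bool, (∏ e : {x // ¬ q x}, wt p e.1 (o e)) * u (eqv (patD, o))
            = ∑ d : {x // q x} → Bool, (∏ e : {x // q x}, wt p e.1 (d e)) *
              ∑ o : {x // ¬ q x} → Bool, (∏ e : {x // ¬ q x}, wt p e.1 (o e)) * u (eqv (patD, o)) := by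
              rw [← Finset.sum_mul, htot, one_mul]
          _ = _ := by
              refine Finset.sum_congr rfl fun d _ => ?_
              rw [Finset.mul_sum]
              refine Finset.sum_congr rfl fun o _ => ?_
              rw [hweight, hu' patD d o]; ring

end Sums
/-! ### The conditional probability of avoidance given the cluster -/

section Psi

variable [Fintype E] [DecidableEq E]
variable (ends : E → V × V) (p : E → ℝ) (s t : V) (X : Set V)

/-- indicator of the event that `t` avoids `X` -/
noncomputable def tind (ω : E → Bool) : ℝ := if ω ∈ RX ends t X then 1 else 0

/-- `Pr(t avoids X | C_s = C)` for a good cluster `C` avoiding `X` -/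
noncomputable def psi (C : Set E) : ℝ :=
  ∑ ω : E → Bool, weight p ω * tind ends t X (phi ends s C ω)

/-- the corrected version, constantly `1` on clusters touching `X` -/
noncomputable def psiHat (C : Set E) : ℝ :=
  if ∀ x ∈ X, x ∉ VS ends s C then psi ends p s t X C else 1

/-- as a function of the configuration -/
noncomputable def gpsi (ω : E → Bool) : ℝ := psiHat ends p s t X (Cluster ends s ω)

lemma tind_nonneg (ω : E → Bool) : 0 ≤ tind ends t X ω := by
  unfold tind; split <;> norm_num

lemma tind_le_one (ω : E → Bool) : tind ends t X ω ≤ 1 := by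
  unfold tind; split <;> norm_num

lemma psi_nonneg (hp : ∀ e, 0 ≤ p e ∧ p e ≤ 1) (C : Set E) : 0 ≤ psi ends p s t X C :=
  Finset.sum_nonneg fun ω _ =>
    mul_nonneg (weight_nonneg hp ω) (tind_nonneg ends t X _)

lemma psi_le_one (hp : ∀ e, 0 ≤ p e ∧ p e ≤ 1) (C : Set E) : psi ends p s t X C ≤ 1 := by
  have : psi ends p s t X C ≤ ∑ ω : E → Bool, weight p ω :=
    Finset.sum_le_sum fun ω _ => by
      calc weight p ω * tind ends t X (phi ends s C ω)
          ≤ weight p ω * 1 :=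
            mul_le_mul_of_nonneg_left (tind_le_one ends t X _) (weight_nonneg hp ω)
        _ = weight p ω := mul_one _
  rwa [sum_weight] at this

lemma gpsi_nonneg (hp : ∀ e, 0 ≤ p e ∧ p e ≤ 1) (ω : E → Bool) :
    0 ≤ gpsi ends p s t X ω := by
  unfold gpsi psiHat; split
  · exact psi_nonneg ends p s t X hp _
  · norm_num

lemma gpsi_le_one (hp : ∀ e, 0 ≤ p e ∧ p e ≤ 1) (ω : E → Bool) :
    gpsi ends p s t X ω ≤ 1 := by
  unfold gpsi psiHat; split
  · exact psi_le_one ends p s t X hp _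
  · norm_num

/-- **Monotonicity of `gpsi`**: larger clusters make it at least as likely that `t`
avoids `X`. -/
lemma gpsi_mono (hp : ∀ e, 0 ≤ p e ∧ p e ≤ 1) (ω ω' : E → Bool)
    (hsub : Cluster ends s ω ⊆ Cluster ends s ω') :
    gpsi ends p s t X ω ≤ gpsi ends p s t X ω' := by
  set C := Cluster ends s ω with hCdef
  set C' := Cluster ends s ω' with hC'def
  have hC : Good ends s C := good_cluster ends s ω
  have hC' : Good ends s C' := good_cluster ends s ω'
  have hVS : VS ends s C ⊆ VS ends s C' := VS_mono ends s hsub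
  unfold gpsi psiHat
  rw [← hCdef, ← hC'def]
  by_cases hA' : ∀ x ∈ X, x ∉ VS ends s C'
  · have hA : ∀ x ∈ X, x ∉ VS ends s C := fun x hx hmem => hA' x hx (hVS hmem)
    rw [if_pos hA, if_pos hA']
    -- compare the two sums pointwise
    refine Finset.sum_le_sum fun ω₂ _ => ?_
    refine mul_le_mul_of_nonneg_left ?_ (weight_nonneg hp ω₂)
    -- tind (phi C ω₂) ≤ tind (phi C' ω₂)
    unfold tind
    by_cases hT : phi ends s C ω₂ ∈ RX ends t X
    · rw [if_pos hT]
      have hT' : phi ends s C' ω₂ ∈ RX ends t X := by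
        intro x hx hreach
        by_cases ht' : t ∈ VS ends s C'
        · -- then t is in the cluster of s under phi C', so x ∈ VS C', contradiction
          have hst : Reach ends (phi ends s C' ω₂) s t := by
            rw [reach_eq_VS ends s hC' (phi_spec1 ends s) (phi_spec2 ends s)]
            exact ht'
          have : Reach ends (phi ends s C' ω₂) s x := reach_trans ends hst hreach
          have hxVS : x ∈ VS ends s C' := by
            rwa [reach_eq_VS ends s hC' (phi_spec1 ends s) (phi_spec2 ends s)] at this
          exact hA' x hx hxVS
        · -- path from t stays off VS C' and is open in phi C ω₂ as well
          have key : ∀ v, Reach ends (phi ends s C' ω₂) t v →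
              v ∉ VS ends s C' ∧ Reach ends (phi ends s C ω₂) t v := by
            intro v hv
            induction hv with
            | refl => exact ⟨ht', Relation.ReflTransGen.refl⟩
            | @tail b c hb hstep ih =>
                obtain ⟨e, he, hor⟩ := hstep
                have heC' : e ∉ C' := by
                  intro hmem
                  have hend := endpoints_mem_VS ends s hC' hmem
                  rcases hor with h' | h'
                  · exact ih.1 (by rw [← show (ends e).1 = b from by rw [h']] ; exact hend.1)
                  · exact ih.1 (by rw [← show (ends e).2 = b from by rw [h']] ; exact hend.2)
                have hbd' : e ∉ Bd ends s C' := by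
                  intro hmem
                  rw [phi_spec2 ends s e hmem] at he
                  exact Bool.false_ne_true he
                have hends : (ends e).1 ∉ VS ends s C' ∧ (ends e).2 ∉ VS ends s C' := by
                  constructor <;> intro hvs
                  · exact hbd' ⟨heC', Or.inl hvs⟩
                  · exact hbd' ⟨heC', Or.inr hvs⟩
                have hcnot : c ∉ VS ends s C' := by
                  rcases hor with h' | h'
                  · rw [← show (ends e).2 = c from by rw [h']]; exact hends.2
                  · rw [← show (ends e).1 = c from by rw [h']]; exact hends.1
                have hω₂ : ω₂ e = true := by
                  have := he
                  unfold phi at this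
                  rwa [if_neg heC', if_neg hbd'] at this
                have heC : e ∉ C := fun hmem => heC' (hsub hmem)
                have hbd : e ∉ Bd ends s C := by
                  rintro ⟨_, hvs⟩
                  rcases hvs with h' | h'
                  · exact hends.1 (hVS h')
                  · exact hends.2 (hVS h')
                have hopen : phi ends s C ω₂ e = true := by
                  unfold phi; rwa [if_neg heC, if_neg hbd]
                exact ⟨hcnot, ih.2.tail ⟨e, hopen, hor⟩⟩
          exact hT x hx (key x hreach).2
      rw [if_pos hT']
    · rw [if_neg hT]
      split <;> norm_num
  · rw [if_neg hA']
    split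
    · exact psi_le_one ends p s t X hp _
    · exact le_refl 1

/-- **The partition identity**: conditionally on the cluster of `s`, for configurations
in `R_X`, the probability that `t` avoids `X` is `gpsi`. -/
lemma part_identity (hp : ∀ e, 0 ≤ p e ∧ p e ≤ 1) (F : (E → Bool) → ℝ)
    (hF : ∀ ω ω', Cluster ends s ω = Cluster ends s ω' → F ω = F ω') :
    SInd p (RX ends s X) (fun ω => F ω * tind ends t X ω)
      = SInd p (RX ends s X) (fun ω => F ω * gpsi ends p s t X ω) := by
  rw [SInd_eq_sum_ite, SInd_eq_sum_ite]
  rw [← Finset.sum_fiberwise Finset.univ (fun ω => chi (Cluster ends s ω))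
    (fun ω => if ω ∈ RX ends s X then weight p ω * (F ω * tind ends t X ω) else 0)]
  rw [← Finset.sum_fiberwise Finset.univ (fun ω => chi (Cluster ends s ω))
    (fun ω => if ω ∈ RX ends s X then weight p ω * (F ω * gpsi ends p s t X ω) else 0)]
  refine Finset.sum_congr rfl fun c _ => ?_
  by_cases hne : (Finset.univ.filter (fun ω => chi (Cluster ends s ω) = c)).Nonempty
  · obtain ⟨ω₀, hω₀⟩ := hne
    rw [Finset.mem_filter] at hω₀
    set C := Cluster ends s ω₀ with hC₀
    have hCGood : Good ends s C := good_cluster ends s ω₀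
    have hfib : ∀ ω : E → Bool, chi (Cluster ends s ω) = c ↔ Cluster ends s ω = C := by
      intro ω
      constructor
      · intro h; exact chi_inj (h.trans hω₀.2.symm)
      · intro h; rw [h, hω₀.2]
    -- whether the cluster C meets X
    by_cases hX : ∀ x ∈ X, x ∉ VS ends s C
    · -- all fiber members lie in RX
      have hmemR : ∀ ω : E → Bool, Cluster ends s ω = C → ω ∈ RX ends s X := by
        intro ω hω x hx hreach
        rw [reach_chi_iff ends s, hω] at hreach
        exact hX x hx hreach
      have hgpsi : ∀ ω : E → Bool, Cluster ends s ω = C →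
          gpsi ends p s t X ω = psi ends p s t X C := by
        intro ω hω; unfold gpsi psiHat; rw [hω, if_pos hX]
      have hFconst : ∀ ω : E → Bool, Cluster ends s ω = C → F ω = F ω₀ :=
        fun ω hω => hF ω ω₀ (by rw [hω])
      -- the fiber is the cylinder determined by C and its boundary
      obtain ⟨D, hD⟩ : ∃ D : Set E, D = C ∪ Bd ends s C := ⟨_, rfl⟩
      have hiff : ∀ ω : E → Bool,
          (chi (Cluster ends s ω) = c) ↔ (∀ e ∈ D, ω e = chi C e) := by
        intro ω
        rw [hD, hfib ω, fiber_iff ends s hCGood]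
        constructor
        · rintro ⟨h1, h2⟩ e he
          rcases he with he | he
          · rw [h1 e he, chi_eq_true.2 he]
          · rw [h2 e he]
            have : e ∉ C := he.1
            unfold chi; rw [if_neg this]
        · intro h
          constructor
          · intro e he
            rw [h e (Or.inl he)]; exact chi_eq_true.2 he
          · intro e he
            rw [h e (Or.inr he)]
            have : e ∉ C := he.1
            unfold chi; rw [if_neg this]
      have hsideL : ∑ ω ∈ Finset.univ.filter (fun ω => chi (Cluster ends s ω) = c),
            (if ω ∈ RX ends s X then weight p ω * (F ω * tind ends t X ω) else 0)
          = ∑ ω ∈ Finset.univ.filter (fun ω => chi (Cluster ends s ω) = c),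
            weight p ω * (F ω₀ * tind ends t X (phi ends s C ω)) := by
        refine Finset.sum_congr rfl fun ω hω => ?_
        rw [Finset.mem_filter] at hω
        have hCl : Cluster ends s ω = C := (hfib ω).1 hω.2
        rw [if_pos (hmemR ω hCl), hFconst ω hCl, phi_fixed ends s hCl]
      have hsideR : ∑ ω ∈ Finset.univ.filter (fun ω => chi (Cluster ends s ω) = c),
            (if ω ∈ RX ends s X then weight p ω * (F ω * gpsi ends p s t X ω) else 0)
          = ∑ ω ∈ Finset.univ.filter (fun ω => chi (Cluster ends s ω) = c),
            weight p ω * (F ω₀ * psi ends p s t X C) := by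
        refine Finset.sum_congr rfl fun ω hω => ?_
        rw [Finset.mem_filter] at hω
        have hCl : Cluster ends s ω = C := (hfib ω).1 hω.2
        rw [if_pos (hmemR ω hCl), hFconst ω hCl, hgpsi ω hCl]
      have hu1 : ∀ ω ω' : E → Bool, (∀ e, e ∉ D → ω e = ω' e) →
          F ω₀ * tind ends t X (phi ends s C ω) = F ω₀ * tind ends t X (phi ends s C ω') := by
        intro ω ω' h
        rw [hD] at h
        have : phi ends s C ω = phi ends s C ω' := by
          refine phi_off ends s fun e he => h e ?_
          rintro (h' | h')
          · exact he.1 h'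
          · exact he.2 h'
        rw [this]
      have hswitch : ∀ u : (E → Bool) → ℝ,
          (∑ ω : E → Bool, if chi (Cluster ends s ω) = c then weight p ω * u ω else 0)
          = (∑ ω : E → Bool,
              if (∀ e ∈ D, ω e = chi C e) then weight p ω * u ω else 0) := by
        intro u
        refine Finset.sum_congr rfl fun ω _ => ?_
        by_cases h : chi (Cluster ends s ω) = c
        · rw [if_pos h, if_pos ((hiff ω).1 h)]
        · rw [if_neg h, if_neg (fun hcc => h ((hiff ω).2 hcc))]
      have H1 : (∑ ω : E → Bool, if chi (Cluster ends s ω) = c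
            then weight p ω * (F ω₀ * tind ends t X (phi ends s C ω)) else 0) = _ :=
        (hswitch (fun ω => F ω₀ * tind ends t X (phi ends s C ω))).trans
          (split_cylinder p D (chi C) _ hu1)
      have H2 : (∑ ω : E → Bool, if chi (Cluster ends s ω) = c
            then weight p ω * (F ω₀ * psi ends p s t X C) else 0) = _ :=
        (hswitch (fun _ => F ω₀ * psi ends p s t X C)).trans
          (split_cylinder p D (chi C) _ (fun _ _ _ => rfl))
      rw [hsideL, hsideR, Finset.sum_filter, Finset.sum_filter, H1, H2]
      congr 1
      have e1 : ∑ ω : E → Bool, weight p ω * (F ω₀ * tind ends t X (phi ends s C ω))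
          = F ω₀ * psi ends p s t X C := by
        unfold psi
        rw [Finset.mul_sum]
        exact Finset.sum_congr rfl fun ω _ => by ring
      have e2 : ∑ ω : E → Bool, weight p ω * (F ω₀ * psi ends p s t X C)
          = F ω₀ * psi ends p s t X C := by
        rw [← Finset.sum_mul, sum_weight, one_mul]
      rw [e1, e2]
    · -- no fiber member lies in RX : both sides vanish
      refine Finset.sum_congr rfl fun ω hω => ?_
      rw [Finset.mem_filter] at hω
      have hCl : Cluster ends s ω = C := (hfib ω).1 hω.2
      have : ω ∉ RX ends s X := by
        intro hmem
        push_neg at hX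
        obtain ⟨x, hx, hxVS⟩ := hX
        refine hmem x hx ?_
        rw [reach_chi_iff ends s, hCl]
        exact hxVS
      rw [if_neg this, if_neg this]
  · rw [Finset.not_nonempty_iff_eq_empty] at hne
    rw [hne, Finset.sum_empty, Finset.sum_empty]

end Psi
/-! ### Deletion and contraction of an edge -/

section DelCon

variable [Fintype E] [DecidableEq E]
variable (ends : E → V × V) (e₀ : E) (s t : V)

/-- paste a value for edge `e₀` into a configuration on the remaining edges -/
noncomputable def paste (b : Bool) (ω' : {e : E // e ≠ e₀} → Bool) : E → Bool :=
  fun e => if h : e = e₀ then b else ω' ⟨e, h⟩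

/-- edge map of the deleted graph -/
def endsDel : {e : E // e ≠ e₀} → V × V := fun e' => ends e'.1

/-- the vertex collapse map for contraction: `t ↦ s` -/
noncomputable def sigmaMap : V → V := fun v => if v = t then s else v

/-- edge map of the contracted graph -/
noncomputable def endsCon : {e : E // e ≠ e₀} → V × V :=
  fun e' => (sigmaMap s t (ends e'.1).1, sigmaMap s t (ends e'.1).2)

noncomputable def pasteEquiv : Bool × ({e : E // e ≠ e₀} → Bool) ≃ (E → Bool) where
  toFun x := paste e₀ x.1 x.2
  invFun ω := (ω e₀, fun e' => ω e'.1)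
  left_inv := by
    rintro ⟨b, ω'⟩
    refine Prod.ext ?_ ?_
    · show paste e₀ b ω' e₀ = b
      unfold paste; rw [dif_pos rfl]
    · funext e'
      show paste e₀ b ω' e'.1 = ω' e'
      unfold paste; rw [dif_neg e'.2]
  right_inv := by
    intro ω
    funext e
    show paste e₀ (ω e₀) (fun e' => ω e'.1) e = ω e
    unfold paste
    by_cases h : e = e₀
    · rw [dif_pos h, h]
    · rw [dif_neg h]

lemma paste_apply_ne (b : Bool) (ω' : {e : E // e ≠ e₀} → Bool) {e : E} (h : e ≠ e₀) :
    paste e₀ b ω' e = ω' ⟨e, h⟩ := dif_neg h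

lemma paste_apply_self (b : Bool) (ω' : {e : E // e ≠ e₀} → Bool) :
    paste e₀ b ω' e₀ = b := dif_pos rfl

/-- splitting a sum over configurations according to the state of `e₀` -/
lemma sum_paste (F : (E → Bool) → ℝ) :
    ∑ ω : E → Bool, F ω = ∑ ω' : {e : E // e ≠ e₀} → Bool, F (paste e₀ false ω')
      + ∑ ω' : {e : E // e ≠ e₀} → Bool, F (paste e₀ true ω') := by
  rw [← Equiv.sum_comp (pasteEquiv e₀) F, Fintype.sum_prod_type, Fintype.sum_bool]
  rw [add_comm]
  rfl

/-- the restricted edge weights -/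
noncomputable def pDel (p : E → ℝ) : {e : E // e ≠ e₀} → ℝ := fun e' => p e'.1

lemma weight_paste (p : E → ℝ) (b : Bool) (ω' : {e : E // e ≠ e₀} → Bool) :
    weight p (paste e₀ b ω') = wt p e₀ b * weight (pDel e₀ p) ω' := by
  rw [weight_eq_prod_wt, weight_eq_prod_wt,
    ← Finset.mul_prod_erase Finset.univ _ (Finset.mem_univ e₀)]
  congr 1
  · rw [paste_apply_self]
  · rw [Finset.prod_subtype (p := fun e => e ≠ e₀) (Finset.univ.erase e₀)
      (fun e => by simp [Finset.mem_erase]) (fun e => wt p e (paste e₀ b ω' e))]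
    refine Finset.prod_congr rfl fun e' _ => ?_
    rw [paste_apply_ne e₀ b ω' e'.2]
    rfl

/-! Reachability correspondences -/

lemma reach_paste_false {ω' : {e : E // e ≠ e₀} → Bool} {u v : V} :
    Reach ends (paste e₀ false ω') u v ↔ Reach (endsDel ends e₀) ω' u v := by
  constructor
  · intro h
    induction h with
    | refl => exact .refl
    | @tail b c hb hstep ih =>
        obtain ⟨e, he, hor⟩ := hstep
        by_cases h : e = e₀
        · rw [h, paste_apply_self] at he; exact absurd he (by simp)
        · rw [paste_apply_ne e₀ false ω' h] at he
          exact ih.tail ⟨⟨e, h⟩, he, hor⟩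
  · intro h
    refine Relation.ReflTransGen.mono ?_ _ _ h
    rintro a b ⟨e', he', hor⟩
    exact ⟨e'.1, by rw [paste_apply_ne e₀ false ω' e'.2]; exact he', hor⟩

lemma sigmaMap_s : sigmaMap s t s = s := by
  unfold sigmaMap; split <;> rfl

lemma sigmaMap_t : sigmaMap s t t = s := by
  unfold sigmaMap; rw [if_pos rfl]

lemma sigmaMap_other {v : V} (h : v ≠ t) : sigmaMap s t v = v := by
  unfold sigmaMap; rw [if_neg h]

lemma sigmaMap_fiber {x y : V} (h : sigmaMap s t x = sigmaMap s t y) :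
    x = y ∨ ((x = s ∨ x = t) ∧ (y = s ∨ y = t)) := by
  unfold sigmaMap at h
  by_cases hx : x = t
  · by_cases hy : y = t
    · exact Or.inl (hx.trans hy.symm)
    · rw [if_pos hx, if_neg hy] at h
      exact Or.inr ⟨Or.inr hx, Or.inl h.symm⟩
  · by_cases hy : y = t
    · rw [if_neg hx, if_pos hy] at h
      exact Or.inr ⟨Or.inl h, Or.inr hy⟩
    · rw [if_neg hx, if_neg hy] at h
      exact Or.inl h


variable (hst : ends e₀ = (s, t) ∨ ends e₀ = (t, s))

include hst

lemma reach_paste_true_st {ω' : {e : E // e ≠ e₀} → Bool} :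
    Reach ends (paste e₀ true ω') s t := by
  rcases hst with h | h
  · exact Relation.ReflTransGen.single ⟨e₀, paste_apply_self e₀ true ω', Or.inl h⟩
  · exact Relation.ReflTransGen.single ⟨e₀, paste_apply_self e₀ true ω', Or.inr h⟩

/-- with `e₀` open, reachability from `s` is reachability from `s` or `t` in the deletion. -/
lemma reach_paste_true_glue {ω' : {e : E // e ≠ e₀} → Bool} {x : V} :
    Reach ends (paste e₀ true ω') s x ↔
      (Reach (endsDel ends e₀) ω' s x ∨ Reach (endsDel ends e₀) ω' t x) := by
  constructor
  · intro h
    induction h with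
    | refl => exact Or.inl .refl
    | @tail b c hb hstep ih =>
        obtain ⟨e, he, hor⟩ := hstep
        by_cases h : e = e₀
        · subst h
          rcases hst with h' | h' <;> rw [h'] at hor <;> rcases hor with h'' | h''
          · injection h'' with h1 h2; exact Or.inr (by rw [← h2]; exact .refl)
          · injection h'' with h1 h2; exact Or.inl (by rw [← h1]; exact .refl)
          · injection h'' with h1 h2; exact Or.inl (by rw [← h2]; exact .refl)
          · injection h'' with h1 h2; exact Or.inr (by rw [← h1]; exact .refl)
        · rw [paste_apply_ne e₀ true ω' h] at he
          exact ih.imp (fun hr => hr.tail ⟨⟨e, h⟩, he, hor⟩) (fun hr => hr.tail ⟨⟨e, h⟩, he, hor⟩)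
  · intro h
    have hmono : ∀ u v : V, Reach (endsDel ends e₀) ω' u v → Reach ends (paste e₀ true ω') u v := by
      intro u v h'
      refine Relation.ReflTransGen.mono ?_ _ _ h'
      rintro a b ⟨e', he', hor⟩
      exact ⟨e'.1, by rw [paste_apply_ne e₀ true ω' e'.2]; exact he', hor⟩
    rcases h with h | h
    · exact hmono s x h
    · exact (reach_paste_true_st ends e₀ s t hst).trans (hmono t x h)

/-- preimages of `s` under `sigmaMap` are reachable from `s` when `e₀` is open. -/
lemma reach_paste_true_pre {ω' : {e : E // e ≠ e₀} → Bool} {x : V}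
    (h : x = s ∨ x = t) : Reach ends (paste e₀ true ω') s x := by
  rcases h with h | h
  · rw [h]; exact .refl
  · rw [h]; exact reach_paste_true_st ends e₀ s t hst

/-- contraction correspondence for reachability from `s`. -/
lemma reach_paste_true_con {ω' : {e : E // e ≠ e₀} → Bool} {x : V} :
    Reach ends (paste e₀ true ω') s x ↔
      Reach (endsCon ends e₀ s t) ω' s (sigmaMap s t x) := by
  constructor
  · intro h
    induction h with
    | refl => rw [sigmaMap_s]; exact .refl
    | @tail b c hb hstep ih =>
        obtain ⟨e, he, hor⟩ := hstep
        by_cases h : e = e₀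
        · subst h
          have hc : c = s ∨ c = t := by
            rcases hst with h' | h' <;> rw [h'] at hor <;> rcases hor with h'' | h''
            · injection h'' with h1 h2; exact Or.inr h2.symm
            · injection h'' with h1 h2; exact Or.inl h1.symm
            · injection h'' with h1 h2; exact Or.inl h2.symm
            · injection h'' with h1 h2; exact Or.inr h1.symm
          have : sigmaMap s t c = s := by
            rcases hc with h' | h'
            · rw [h']; exact sigmaMap_s s t
            · rw [h']; exact sigmaMap_t s t
          rw [this]
          exact .refl
        · rw [paste_apply_ne e₀ true ω' h] at he
          refine ih.tail ⟨⟨e, h⟩, he, ?_⟩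
          rcases hor with h' | h'
          · exact Or.inl (by unfold endsCon; rw [h'])
          · exact Or.inr (by unfold endsCon; rw [h'])
  · intro h
    -- strengthen: all sigmaMap-preimages are reachable
    suffices H : ∀ a, Reach (endsCon ends e₀ s t) ω' s a →
        ∀ y, sigmaMap s t y = a → Reach ends (paste e₀ true ω') s y by
      exact H _ h x rfl
    intro a ha
    induction ha with
    | refl =>
        intro y hy
        by_cases hyt : y = t
        · rw [hyt]; exact reach_paste_true_st ends e₀ s t hst
        · rw [sigmaMap_other s t hyt] at hy; rw [hy]; exact .refl
    | @tail b c hb hstep ih =>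
        intro y hy
        obtain ⟨e', he', hor⟩ := hstep
        -- ends of e'.1 in the original graph
        have hstep' : ∀ u v : V, sigmaMap s t u = b → sigmaMap s t v = c →
            ((ends e'.1 = (u, v)) ∨ (ends e'.1 = (v, u))) →
            Reach ends (paste e₀ true ω') s y := by
          intro u v hu hv hor'
          have hru : Reach ends (paste e₀ true ω') s u := ih u hu
          have hrv : Reach ends (paste e₀ true ω') s v :=
            hru.tail ⟨e'.1, by rw [paste_apply_ne e₀ true ω' e'.2]; exact he', hor'⟩
          have : sigmaMap s t y = sigmaMap s t v := by rw [hy, hv]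
          rcases sigmaMap_fiber s t this with h' | h'
          · rw [h']; exact hrv
          · exact reach_paste_true_pre ends e₀ s t hst h'.1
        rcases hor with h' | h'
        · exact hstep' (ends e'.1).1 (ends e'.1).2
            (congrArg Prod.fst h') (congrArg Prod.snd h') (Or.inl rfl)
        · exact hstep' (ends e'.1).2 (ends e'.1).1
            (congrArg Prod.snd h') (congrArg Prod.fst h') (Or.inr rfl)

/-! Cluster correspondences -/

omit hst in
lemma cluster_paste_false (ω' : {e : E // e ≠ e₀} → Bool) :
    Cluster ends s (paste e₀ false ω') = Subtype.val '' Cluster (endsDel ends e₀) s ω' := by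
  ext e
  constructor
  · rintro ⟨he, hr⟩
    have hne : e ≠ e₀ := by
      intro h; rw [h, paste_apply_self] at he; exact absurd he (by simp)
    rw [paste_apply_ne e₀ false ω' hne] at he
    refine ⟨⟨e, hne⟩, ⟨he, ?_⟩, rfl⟩
    exact hr.imp ((reach_paste_false ends e₀).1) ((reach_paste_false ends e₀).1)
  · rintro ⟨e', ⟨he, hr⟩, rfl⟩
    refine ⟨by rw [paste_apply_ne e₀ false ω' e'.2]; exact he, ?_⟩
    exact hr.imp ((reach_paste_false ends e₀).2) ((reach_paste_false ends e₀).2)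

lemma cluster_paste_true (ω' : {e : E // e ≠ e₀} → Bool) :
    Cluster ends s (paste e₀ true ω')
      = insert e₀ (Subtype.val '' Cluster (endsCon ends e₀ s t) s ω') := by
  ext e
  by_cases hne : e = e₀
  · rw [hne]
    simp only [Set.mem_insert_iff, true_or, iff_true]
    refine ⟨paste_apply_self e₀ true ω', ?_⟩
    rcases hst with h' | h'
    · exact Or.inl (by rw [h']; exact .refl)
    · exact Or.inr (by rw [h']; exact .refl)
  · constructor
    · rintro ⟨he, hr⟩
      rw [paste_apply_ne e₀ true ω' hne] at he
      refine Set.mem_insert_iff.2 (Or.inr ⟨⟨e, hne⟩, ⟨he, ?_⟩, rfl⟩)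
      have h1 := (reach_paste_true_con ends e₀ s t hst (ω' := ω') (x := (ends e).1)).1
      have h2 := (reach_paste_true_con ends e₀ s t hst (ω' := ω') (x := (ends e).2)).1
      exact hr.imp h1 h2
    · intro hmem
      rcases Set.mem_insert_iff.1 hmem with h' | h'
      · exact absurd h' hne
      · obtain ⟨e', ⟨he, hr⟩, heq⟩ := h'
        subst heq
        refine ⟨by rw [paste_apply_ne e₀ true ω' e'.2]; exact he, ?_⟩
        have h1 := (reach_paste_true_con ends e₀ s t hst (ω' := ω') (x := (ends e'.1).1)).2
        have h2 := (reach_paste_true_con ends e₀ s t hst (ω' := ω') (x := (ends e'.1).2)).2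
        exact hr.imp h1 h2

end DelCon
/-! ### Lemma L and degenerate cases -/

section MainAux

variable [Fintype E] [DecidableEq E]

lemma div_prod_ineq {a b c P : ℝ} (hP : 0 < P) :
    a / P ≤ (b / P) * (c / P) ↔ a * P ≤ b * c := by
  rw [div_mul_div_comm, div_le_div_iff₀ hP (mul_pos hP hP)]
  constructor <;> intro h <;> nlinarith

lemma prod_div_ineq {a b c P : ℝ} (hP : 0 < P) :
    (b / P) * (c / P) ≤ a / P ↔ b * c ≤ a * P := by
  rw [div_mul_div_comm, div_le_div_iff₀ (mul_pos hP hP) hP]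
  constructor <;> intro h <;> nlinarith

/-- **Lemma L**: conditioned on `R_X`, an increasing function of the cluster of `s` is
positively correlated with the event that `t` avoids `X`.  (Uses the main theorem for
the same graph, supplied as hypothesis `IH`.) -/
lemma lemL (ends : E → V × V) (p : E → ℝ) (hp : ∀ e, 0 ≤ p e ∧ p e ≤ 1)
    (s : V) (X : Set V) (hpos : 0 < Pr p (RX ends s X)) (t : V)
    (IH : ∀ f g : (E → Bool) → ℝ,
      (∀ ω ω', Cluster ends s ω ⊆ Cluster ends s ω' → f ω ≤ f ω') →
      (∀ ω ω', Cluster ends s ω ⊆ Cluster ends s ω' → g ω' ≤ g ω) →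
      condExp p (fun ω => f ω * g ω) (RX ends s X) ≤
        condExp p f (RX ends s X) * condExp p g (RX ends s X))
    (F : (E → Bool) → ℝ)
    (hF : ∀ ω ω', Cluster ends s ω ⊆ Cluster ends s ω' → F ω ≤ F ω') :
    SInd p (RX ends s X) F * Pr p (RX ends s X ∩ RX ends t X)
      ≤ SInd p (RX ends s X ∩ RX ends t X) F * Pr p (RX ends s X) := by
  set R := RX ends s X with hR
  set T := RX ends t X with hT
  set G := gpsi ends p s t X with hG
  have hGmono : ∀ ω ω', Cluster ends s ω ⊆ Cluster ends s ω' → G ω ≤ G ω' :=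
    fun ω ω' h => gpsi_mono ends p s t X hp ω ω' h
  have key := IH F (fun ω => -(G ω)) hF
    (fun ω ω' h => neg_le_neg (hGmono ω ω' h))
  rw [condExp_eq, condExp_eq, condExp_eq] at key
  have hnegF : SInd p R (fun ω => F ω * -(G ω)) = -(SInd p R (fun ω => F ω * G ω)) := by
    rw [← SInd_neg p R (fun ω => F ω * G ω)]
    exact congrArg _ (funext fun ω => by ring)
  have hnegG : SInd p R (fun ω => -(G ω)) = -(SInd p R G) := SInd_neg p R G
  rw [hnegF, hnegG] at key
  have key2 : SInd p R F * SInd p R G ≤ SInd p R (fun ω => F ω * G ω) * Pr p R := by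
    have h1 : SInd p R F / Pr p R * (-SInd p R G / Pr p R)
        = -(SInd p R F / Pr p R * (SInd p R G / Pr p R)) := by ring
    rw [neg_div, h1, neg_le_neg_iff] at key
    exact (prod_div_ineq hpos).1 key
  -- identify the two sides via the partition identity
  have hFeq : ∀ ω ω', Cluster ends s ω = Cluster ends s ω' → F ω = F ω' :=
    fun ω ω' h => le_antisymm (hF ω ω' (le_of_eq h)) (hF ω' ω (le_of_eq h.symm))
  have hpart1 : SInd p R (fun ω => F ω * tind ends t X ω)
      = SInd p R (fun ω => F ω * G ω) := part_identity ends p s t X hp F hFeq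
  have hpart2 : SInd p R (fun ω => (1:ℝ) * tind ends t X ω)
      = SInd p R (fun ω => (1:ℝ) * G ω) :=
    part_identity ends p s t X hp (fun _ => (1:ℝ)) (fun _ _ _ => rfl)
  have e1 : SInd p R (fun ω => F ω * G ω) = SInd p (R ∩ T) F := by
    rw [← hpart1]
    have hh : (fun ω => F ω * tind ends t X ω)
        = (fun ω => F ω * (if ω ∈ T then (1:ℝ) else 0)) := by
      funext ω; rw [hT]; rfl
    rw [hh, SInd_mul_indicator p R T F]
  have e2 : SInd p R G = Pr p (R ∩ T) := by
    have h1 : SInd p R (fun ω => (1:ℝ) * G ω) = SInd p R G :=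
      congrArg _ (funext fun ω => one_mul _)
    have h2 : SInd p R (fun ω => (1:ℝ) * tind ends t X ω) = Pr p (R ∩ T) := by
      have hh : (fun ω => (1:ℝ) * tind ends t X ω)
          = (fun ω => (1:ℝ) * (if ω ∈ T then (1:ℝ) else 0)) := by
        funext ω; rw [hT]; rfl
      rw [hh, SInd_mul_indicator p R T (fun _ => (1:ℝ)), Pr_eq_SInd_one]
    rw [← h1, ← hpart2, h2]
  rw [e1, e2] at key2
  exact key2

/-- when no edge is incident to `s`, the cluster is always empty -/
lemma cluster_empty (ends : E → V × V) (s : V)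
    (hno : ∀ e : E, (ends e).1 ≠ s ∧ (ends e).2 ≠ s) (ω : E → Bool) :
    Cluster ends s ω = ∅ := by
  have hreach : ∀ v, Reach ends ω s v → v = s := by
    intro v h
    induction h with
    | refl => rfl
    | @tail b c hb hstep ih =>
        obtain ⟨e, he, hor⟩ := hstep
        exfalso
        subst ih
        rcases hor with h' | h'
        · exact (hno e).1 (by rw [h'])
        · exact (hno e).2 (by rw [h'])
    
  ext e
  simp only [Set.mem_empty_iff_false, iff_false]
  rintro ⟨he, hr⟩
  rcases hr with h' | h'
  · exact (hno e).1 (hreach _ h')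
  · exact (hno e).2 (hreach _ h')

/-- degenerate case : `f` and `g` constant. -/
lemma const_case (ends : E → V × V) (p : E → ℝ) (s : V) (X : Set V)
    (hpos : 0 < Pr p (RX ends s X))
    (f g : (E → Bool) → ℝ)
    (hfc : ∀ ω ω' : E → Bool, f ω = f ω') (hgc : ∀ ω ω' : E → Bool, g ω = g ω') :
    condExp p (fun ω => f ω * g ω) (RX ends s X) ≤
      condExp p f (RX ends s X) * condExp p g (RX ends s X) := by
  set ω₀ : E → Bool := fun _ => false with hω₀
  have hP := ne_of_gt hpos
  have hval : ∀ h : (E → Bool) → ℝ, (∀ ω ω' : E → Bool, h ω = h ω') →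
      condExp p h (RX ends s X) = h ω₀ := by
    intro h hc
    rw [condExp_eq]
    have : SInd p (RX ends s X) h = SInd p (RX ends s X) (fun _ => h ω₀) :=
      SInd_congr_on p _ (fun ω _ => hc ω ω₀)
    rw [this, SInd_const, mul_div_assoc, div_self hP, mul_one]
  rw [hval f hfc, hval g hgc,
    hval (fun ω => f ω * g ω) (fun ω ω' => by
      show f ω * g ω = f ω' * g ω'
      rw [hfc ω ω', hgc ω ω'])]

end MainAux
/-! ### The main theorem, by induction on the number of edges -/

section MainThm

theorem main : ∀ (n : ℕ) {V : Type u_1} {E : Type u_2} [Fintype E] [DecidableEq E]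
    (_ : Fintype.card E ≤ n)
    (ends : E → V × V) (p : E → ℝ) (_ : ∀ e, 0 ≤ p e ∧ p e ≤ 1)
    (s : V) (X : Set V) (_ : s ∉ X) (_ : 0 < Pr p (RX ends s X))
    (f g : (E → Bool) → ℝ)
    (_ : ∀ ω ω', Cluster ends s ω ⊆ Cluster ends s ω' → f ω ≤ f ω')
    (_ : ∀ ω ω', Cluster ends s ω ⊆ Cluster ends s ω' → g ω' ≤ g ω),
    condExp p (fun ω => f ω * g ω) (RX ends s X) ≤
      condExp p f (RX ends s X) * condExp p g (RX ends s X) := by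
  intro n
  induction n with
  | zero =>
      intro V E _ _ hn ends p hp s X hX hpos f g hf hg
      have hemp : IsEmpty E := Fintype.card_eq_zero_iff.1 (Nat.le_antisymm hn (Nat.zero_le _))
      have hno : ∀ e : E, (ends e).1 ≠ s ∧ (ends e).2 ≠ s := fun e => (hemp.false e).elim
      refine const_case ends p s X hpos f g ?_ ?_
      · intro ω ω'
        refine le_antisymm (hf ω ω' ?_) (hf ω' ω ?_) <;>
          rw [cluster_empty ends s hno, cluster_empty ends s hno]
      · intro ω ω'
        refine le_antisymm (hg ω' ω ?_) (hg ω ω' ?_) <;>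
          rw [cluster_empty ends s hno, cluster_empty ends s hno]
  | succ n IH =>
      intro V E _ _ hn ends p hp s X hX hpos f g hf hg
      by_cases hinc : ∃ e₀ : E, (ends e₀).1 = s ∨ (ends e₀).2 = s
      case neg =>
        push_neg at hinc
        refine const_case ends p s X hpos f g ?_ ?_
        · intro ω ω'
          refine le_antisymm (hf ω ω' ?_) (hf ω' ω ?_) <;>
            rw [cluster_empty ends s hinc, cluster_empty ends s hinc]
        · intro ω ω'
          refine le_antisymm (hg ω' ω ?_) (hg ω ω' ?_) <;>
            rw [cluster_empty ends s hinc, cluster_empty ends s hinc]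
      case pos =>
      obtain ⟨e₀, hse⟩ := hinc
      have hst : ∃ t : V, ends e₀ = (s, t) ∨ ends e₀ = (t, s) := by
        rcases hse with h | h
        · exact ⟨(ends e₀).2, Or.inl (by rw [← h])⟩
        · exact ⟨(ends e₀).1, Or.inr (by rw [← h])⟩
      obtain ⟨t, hst⟩ := hst
      -- the reduced graphs
      have hcard : Fintype.card {e : E // e ≠ e₀} ≤ n := by
        have h1 : Fintype.card {e : E // e ≠ e₀} < Fintype.card E :=
          Fintype.card_subtype_lt (x := e₀) (by simp)
        omega
      set p' : {e : E // e ≠ e₀} → ℝ := pDel e₀ p with hp'def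
      have hp' : ∀ e', 0 ≤ p' e' ∧ p' e' ≤ 1 := fun e' => hp e'.1
      set endsD := endsDel ends e₀ with hendsD
      set endsC := endsCon ends e₀ s t with hendsC
      set R := RX ends s X with hR
      set R₀ := RX endsD s X with hR₀
      set T₀ := RX endsD t X with hT₀
      set w0 := wt p e₀ false with hw0def
      set w1 := wt p e₀ true with hw1def
      have hw0 : 0 ≤ w0 := wt_nonneg hp e₀ false
      have hw1 : 0 ≤ w1 := wt_nonneg hp e₀ true
      set P0 := Pr p' R₀ with hP0def
      set P1 := Pr p' (R₀ ∩ T₀) with hP1def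
      have hP0 : 0 ≤ P0 := Pr_nonneg hp' R₀
      have hP1 : 0 ≤ P1 := Pr_nonneg hp' (R₀ ∩ T₀)
      -- membership correspondences
      have hmem0 : ∀ ω' : {e : E // e ≠ e₀} → Bool, paste e₀ false ω' ∈ R ↔ ω' ∈ R₀ := by
        intro ω'
        constructor
        · intro hm x hx hr
          exact hm x hx ((reach_paste_false ends e₀).2 hr)
        · intro hm x hx hr
          exact hm x hx ((reach_paste_false ends e₀).1 hr)
      have hmem1 : ∀ ω' : {e : E // e ≠ e₀} → Bool,
          paste e₀ true ω' ∈ R ↔ ω' ∈ R₀ ∩ T₀ := by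
        intro ω'
        constructor
        · intro hm
          constructor
          · intro x hx hr
            exact hm x hx ((reach_paste_true_glue ends e₀ s t hst).2 (Or.inl hr))
          · intro x hx hr
            exact hm x hx ((reach_paste_true_glue ends e₀ s t hst).2 (Or.inr hr))
        · rintro ⟨h1, h2⟩ x hx hr
          rcases (reach_paste_true_glue ends e₀ s t hst).1 hr with h' | h'
          · exact h1 x hx h'
          · exact h2 x hx h'
      -- the branching identity
      have hbranch : ∀ h : (E → Bool) → ℝ,
          SInd p R h = w0 * SInd p' R₀ (fun ω' => h (paste e₀ false ω'))
            + w1 * SInd p' (R₀ ∩ T₀) (fun ω' => h (paste e₀ true ω')) := by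
        intro h
        rw [SInd_eq_sum_ite, sum_paste e₀ (fun ω => if ω ∈ R then weight p ω * h ω else 0)]
        congr 1
        · rw [SInd_eq_sum_ite, Finset.mul_sum]
          refine Finset.sum_congr rfl fun ω' _ => ?_
          by_cases hm : ω' ∈ R₀
          · rw [if_pos ((hmem0 ω').2 hm), if_pos hm, weight_paste]; ring
          · rw [if_neg (fun hh => hm ((hmem0 ω').1 hh)), if_neg hm, mul_zero]
        · rw [SInd_eq_sum_ite, Finset.mul_sum]
          refine Finset.sum_congr rfl fun ω' _ => ?_
          by_cases hm : ω' ∈ R₀ ∩ T₀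
          · rw [if_pos ((hmem1 ω').2 hm), if_pos hm, weight_paste]; ring
          · rw [if_neg (fun hh => hm ((hmem1 ω').1 hh)), if_neg hm, mul_zero]
      have hPr : Pr p R = w0 * P0 + w1 * P1 := by
        rw [Pr_eq_SInd_one, hbranch (fun _ => (1:ℝ)), hP0def, hP1def,
          Pr_eq_SInd_one p' R₀, Pr_eq_SInd_one p' (R₀ ∩ T₀)]
      -- monotonicity of the pasted functions
      have hpm : ∀ (ω' : {e : E // e ≠ e₀} → Bool) e,
          paste e₀ false ω' e = true → paste e₀ true ω' e = true := by
        intro ω' e h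
        by_cases he : e = e₀
        · rw [he, paste_apply_self] at h; exact absurd h (by simp)
        · rw [paste_apply_ne _ _ _ he] at h
          rw [paste_apply_ne _ _ _ he]
          exact h
      have hf₀ : ∀ ω' ω'', Cluster endsD s ω' ⊆ Cluster endsD s ω'' →
          f (paste e₀ false ω') ≤ f (paste e₀ false ω'') := by
        intro ω' ω'' hsub
        refine hf _ _ ?_
        rw [cluster_paste_false ends e₀ s ω', cluster_paste_false ends e₀ s ω'']
        exact Set.image_mono hsub
      have hg₀ : ∀ ω' ω'', Cluster endsD s ω' ⊆ Cluster endsD s ω'' →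
          g (paste e₀ false ω'') ≤ g (paste e₀ false ω') := by
        intro ω' ω'' hsub
        refine hg _ _ ?_
        rw [cluster_paste_false ends e₀ s ω', cluster_paste_false ends e₀ s ω'']
        exact Set.image_mono hsub
      have hf₁ : ∀ ω' ω'', Cluster endsC s ω' ⊆ Cluster endsC s ω'' →
          f (paste e₀ true ω') ≤ f (paste e₀ true ω'') := by
        intro ω' ω'' hsub
        refine hf _ _ ?_
        rw [cluster_paste_true ends e₀ s t hst ω', cluster_paste_true ends e₀ s t hst ω'']
        exact Set.insert_subset_insert (Set.image_mono hsub)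
      have hg₁ : ∀ ω' ω'', Cluster endsC s ω' ⊆ Cluster endsC s ω'' →
          g (paste e₀ true ω'') ≤ g (paste e₀ true ω') := by
        intro ω' ω'' hsub
        refine hg _ _ ?_
        rw [cluster_paste_true ends e₀ s t hst ω', cluster_paste_true ends e₀ s t hst ω'']
        exact Set.insert_subset_insert (Set.image_mono hsub)
      have hf01 : ∀ ω', f (paste e₀ false ω') ≤ f (paste e₀ true ω') :=
        fun ω' => hf _ _ (cluster_mono ends s (hpm ω'))
      have hg01 : ∀ ω', g (paste e₀ true ω') ≤ g (paste e₀ false ω') :=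
        fun ω' => hg _ _ (cluster_mono ends s (hpm ω'))
      -- case analysis on vanishing branches
      by_cases hb : w1 * P1 = 0
      · -- only the `e₀` closed branch matters
        have hkill : ∀ h : ({e : E // e ≠ e₀} → Bool) → ℝ,
            w1 * SInd p' (R₀ ∩ T₀) h = 0 := by
          intro h
          rcases mul_eq_zero.1 hb with h' | h'
          · rw [h', zero_mul]
          · rw [SInd_eq_zero_of_Pr_zero hp' h' h, mul_zero]
        have hbranch' : ∀ h : (E → Bool) → ℝ,
            SInd p R h = w0 * SInd p' R₀ (fun ω' => h (paste e₀ false ω')) := by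
          intro h
          rw [hbranch h, hkill, add_zero]
        have hPr' : Pr p R = w0 * P0 := by rw [hPr, hb, add_zero]
        have hw0pos : 0 < w0 := by
          rcases hw0.lt_or_eq with h' | h'
          · exact h'
          · exfalso; rw [hPr', ← h', zero_mul] at hpos; exact lt_irrefl 0 hpos
        have hP0pos : 0 < P0 := by
          rcases hP0.lt_or_eq with h' | h'
          · exact h'
          · exfalso; rw [hPr', ← h', mul_zero] at hpos; exact lt_irrefl 0 hpos
        have hred : ∀ h : (E → Bool) → ℝ,
            condExp p h R = condExp p' (fun ω' => h (paste e₀ false ω')) R₀ := by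
          intro h
          rw [condExp_eq, condExp_eq, hbranch' h, hPr', ← hP0def,
            mul_div_mul_left _ _ (ne_of_gt hw0pos)]
        rw [hred f, hred g, hred (fun ω => f ω * g ω)]
        exact IH hcard endsD p' hp' s X hX hP0pos _ _ hf₀ hg₀
      · have hw1pos : 0 < w1 := by
          rcases hw1.lt_or_eq with h' | h'
          · exact h'
          · exact absurd (by rw [← h', zero_mul]) hb
        have hP1pos : 0 < P1 := by
          rcases hP1.lt_or_eq with h' | h'
          · exact h'
          · exact absurd (by rw [← h', mul_zero]) hb
        -- `t ∉ X` since `R₀ ∩ T₀` has positive probability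
        have htX : t ∉ X := by
          intro hmem
          have hTempty : R₀ ∩ T₀ = ∅ := by
            ext ω'
            simp only [Set.mem_inter_iff, Set.mem_empty_iff_false, iff_false]
            rintro ⟨_, h2⟩
            exact h2 t hmem Relation.ReflTransGen.refl
          rw [hTempty, Pr_empty] at hP1def
          rw [hP1def] at hP1pos
          exact lt_irrefl 0 hP1pos
        -- the contracted graph realizes the open branch
        have hRcon : RX endsC s X = R₀ ∩ T₀ := by
          have hcx : ∀ (ω' : {e : E // e ≠ e₀} → Bool), ∀ x ∈ X,
              Reach endsC ω' s x ↔ (Reach endsD ω' s x ∨ Reach endsD ω' t x) := by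
            intro ω' x hx
            have hxt : x ≠ t := fun h => htX (h ▸ hx)
            calc Reach endsC ω' s x ↔ Reach endsC ω' s (sigmaMap s t x) := by
                  rw [sigmaMap_other s t hxt]
              _ ↔ Reach ends (paste e₀ true ω') s x :=
                  (reach_paste_true_con ends e₀ s t hst).symm
              _ ↔ _ := reach_paste_true_glue ends e₀ s t hst
          ext ω'
          constructor
          · intro hm
            constructor
            · intro x hx hr
              exact hm x hx ((hcx ω' x hx).2 (Or.inl hr))
            · intro x hx hr
              exact hm x hx ((hcx ω' x hx).2 (Or.inr hr))
          · rintro ⟨h1, h2⟩ x hx hr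
            rcases (hcx ω' x hx).1 hr with h' | h'
            · exact h1 x hx h'
            · exact h2 x hx h'
        by_cases ha : w0 * P0 = 0
        · -- only the `e₀` open branch matters
          have hkill : ∀ h : ({e : E // e ≠ e₀} → Bool) → ℝ,
              w0 * SInd p' R₀ h = 0 := by
            intro h
            rcases mul_eq_zero.1 ha with h' | h'
            · rw [h', zero_mul]
            · rw [SInd_eq_zero_of_Pr_zero hp' h' h, mul_zero]
          have hbranch' : ∀ h : (E → Bool) → ℝ,
              SInd p R h = w1 * SInd p' (R₀ ∩ T₀) (fun ω' => h (paste e₀ true ω')) := by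
            intro h
            rw [hbranch h, hkill, zero_add]
          have hPr' : Pr p R = w1 * P1 := by rw [hPr, ha, zero_add]
          have hred : ∀ h : (E → Bool) → ℝ,
              condExp p h R = condExp p' (fun ω' => h (paste e₀ true ω')) (RX endsC s X) := by
            intro h
            rw [condExp_eq, condExp_eq, hbranch' h, hPr', hRcon, ← hP1def,
              mul_div_mul_left _ _ (ne_of_gt hw1pos)]
          have hP1pos' : 0 < Pr p' (RX endsC s X) := by rw [hRcon, ← hP1def]; exact hP1pos
          rw [hred f, hred g, hred (fun ω => f ω * g ω)]
          exact IH hcard endsC p' hp' s X hX hP1pos' _ _ hf₁ hg₁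
        · -- both branches have positive probability
          have hw0pos : 0 < w0 := by
            rcases hw0.lt_or_eq with h' | h'
            · exact h'
            · exact absurd (by rw [← h', zero_mul]) ha
          have hP0pos : 0 < P0 := by
            rcases hP0.lt_or_eq with h' | h'
            · exact h'
            · exact absurd (by rw [← h', mul_zero]) ha
          -- abbreviations
          set u₀ := SInd p' R₀ (fun ω' => f (paste e₀ false ω')) with hu₀
          set u₁ := SInd p' (R₀ ∩ T₀) (fun ω' => f (paste e₀ true ω')) with hu₁
          set v₀ := SInd p' R₀ (fun ω' => g (paste e₀ false ω')) with hv₀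
          set v₁ := SInd p' (R₀ ∩ T₀) (fun ω' => g (paste e₀ true ω')) with hv₁
          set c₀ := SInd p' R₀ (fun ω' => f (paste e₀ false ω') * g (paste e₀ false ω')) with hc₀
          set c₁ := SInd p' (R₀ ∩ T₀)
            (fun ω' => f (paste e₀ true ω') * g (paste e₀ true ω')) with hc₁
          -- induction hypothesis for the deleted graph
          have h1 : c₀ * P0 ≤ u₀ * v₀ := by
            have hIH := IH hcard endsD p' hp' s X hX hP0pos _ _ hf₀ hg₀
            rw [condExp_eq, condExp_eq, condExp_eq, ← hP0def, div_prod_ineq hP0pos] at hIH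
            exact hIH
          -- induction hypothesis for the contracted graph
          have hP1pos' : 0 < Pr p' (RX endsC s X) := by rw [hRcon, ← hP1def]; exact hP1pos
          have h2 : c₁ * P1 ≤ u₁ * v₁ := by
            have hIH := IH hcard endsC p' hp' s X hX hP1pos' _ _ hf₁ hg₁
            rw [condExp_eq, condExp_eq, condExp_eq, hRcon, ← hP1def,
              div_prod_ineq hP1pos] at hIH
            exact hIH
          -- key lemma : opening `e₀` helps `f` and hurts `g`
          have hIHdel : ∀ F G : ({e : E // e ≠ e₀} → Bool) → ℝ,
              (∀ ω ω', Cluster endsD s ω ⊆ Cluster endsD s ω' → F ω ≤ F ω') →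
              (∀ ω ω', Cluster endsD s ω ⊆ Cluster endsD s ω' → G ω' ≤ G ω) →
              condExp p' (fun ω => F ω * G ω) (RX endsD s X) ≤
                condExp p' F (RX endsD s X) * condExp p' G (RX endsD s X) :=
            fun F G hF hG => IH hcard endsD p' hp' s X hX hP0pos F G hF hG
          have keyF : u₀ * P1 ≤ u₁ * P0 := by
            have hL := lemL endsD p' hp' s X hP0pos t hIHdel
              (fun ω' => f (paste e₀ false ω')) hf₀
            have hmono : SInd p' (R₀ ∩ T₀) (fun ω' => f (paste e₀ false ω'))
                ≤ u₁ :=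
              SInd_mono hp' (R₀ ∩ T₀) hf01
            calc u₀ * P1 ≤ SInd p' (R₀ ∩ T₀) (fun ω' => f (paste e₀ false ω')) * P0 := hL
              _ ≤ u₁ * P0 := mul_le_mul_of_nonneg_right hmono hP0
          have keyG : v₁ * P0 ≤ v₀ * P1 := by
            have hL := lemL endsD p' hp' s X hP0pos t hIHdel
              (fun ω' => -(g (paste e₀ false ω')))
              (fun ω' ω'' hsub => neg_le_neg (hg₀ ω' ω'' hsub))
            rw [SInd_neg, SInd_neg] at hL
            have hL' : SInd p' (R₀ ∩ T₀) (fun ω' => g (paste e₀ false ω')) * P0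
                ≤ v₀ * P1 := by
              have := hL
              nlinarith [this]
            have hmono : v₁ ≤ SInd p' (R₀ ∩ T₀) (fun ω' => g (paste e₀ false ω')) :=
              SInd_mono hp' (R₀ ∩ T₀) hg01
            calc v₁ * P0 ≤ SInd p' (R₀ ∩ T₀) (fun ω' => g (paste e₀ false ω')) * P0 :=
                mul_le_mul_of_nonneg_right hmono hP0
              _ ≤ v₀ * P1 := hL'
          -- assemble
          have E1 : SInd p R (fun ω => f ω * g ω) = w0 * c₀ + w1 * c₁ :=
            hbranch (fun ω => f ω * g ω)
          have E2 : SInd p R f = w0 * u₀ + w1 * u₁ := hbranch f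
          have E3 : SInd p R g = w0 * v₀ + w1 * v₁ := hbranch g
          rw [condExp_eq, condExp_eq, condExp_eq, div_prod_ineq hpos, E1, E2, E3, hPr]
          -- the cross-term inequality
          have hcross : c₀ * P1 + c₁ * P0 ≤ u₀ * v₁ + u₁ * v₀ := by
            have h5 : 0 ≤ (u₁ * P0 - u₀ * P1) * (v₀ * P1 - v₁ * P0) :=
              mul_nonneg (by linarith) (by linarith)
            have hA := mul_le_mul_of_nonneg_right h1 (mul_nonneg hP1 hP1)
            have hB := mul_le_mul_of_nonneg_right h2 (mul_nonneg hP0 hP0)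
            have hC : (c₀ * P1 + c₁ * P0) * (P0 * P1) ≤ (u₀ * v₁ + u₁ * v₀) * (P0 * P1) := by
              nlinarith [hA, hB, h5]
            exact le_of_mul_le_mul_right hC (mul_pos hP0pos hP1pos)
          have hA2 := mul_le_mul_of_nonneg_left h1 (mul_nonneg hw0 hw0)
          have hB2 := mul_le_mul_of_nonneg_left h2 (mul_nonneg hw1 hw1)
          have hC2 := mul_le_mul_of_nonneg_left hcross (mul_nonneg hw0 hw1)
          nlinarith [hA2, hB2, hC2]

end MainThm
/-- Theorem 1.3(b). If `X ⊆ V \ {s}` with `Pr(R_X) > 0`,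
`f` is a bounded increasing function of `C_s` and `g` a bounded decreasing
function of `C_s`, then `E[f·g | R_X] ≤ E[f | R_X] · E[g | R_X]`. -/
theorem stmt3 [Fintype V] [Fintype E] [DecidableEq E]
    (ends : E → V × V) (p : E → ℝ) (hp : ∀ e, 0 ≤ p e ∧ p e ≤ 1)
    (s : V) (X : Set V) (hX : s ∉ X)
    (hpos : 0 < Pr p (RX ends s X))
    (f g : (E → Bool) → ℝ)
    (hfb : ∃ M, ∀ ω, |f ω| ≤ M) (hgb : ∃ M, ∀ ω, |g ω| ≤ M)
    (hf : ∀ ω ω', Cluster ends s ω ⊆ Cluster ends s ω' → f ω ≤ f ω')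
    (hg : ∀ ω ω', Cluster ends s ω ⊆ Cluster ends s ω' → g ω' ≤ g ω) :
    condExp p (fun ω => f ω * g ω) (RX ends s X) ≤
      condExp p f (RX ends s X) * condExp p g (RX ends s X) := by
  exact main (Fintype.card E) (le_refl _) ends p hp s X hX hpos f g hf hg

end BondPerc
end

section
/- Let q ≥ 1, let S and T be disjoint subsets of V with φ_{G,q}(S ↛ T) > 0, and let f and g be bounded real-valued functions on {0,1}^E, each of which depends only on the pair (C_S, C_T), is increasing in C_S, and is decreasing in C_T (i.e., if C_S(ω) ⊆ C_S(ω') and C_T(ω) ⊇ C_T(ω') then f(ω) ≤ f(ω') and g(ω) ≤ g(ω')). Then, with expectations taken with respect to φ_{G,q} conditioned on {S ↛ T}, E[f·g] ≥ E[f] · E[g]. -/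
/-!
The random-cluster model on a finite graph `G = (V, E)`.
Edges are given by their endpoints `ends : E → V × V` (unordered).  With edge
parameters `p e ∈ (0,1)` and cluster parameter `q > 0`, the random-cluster
measure gives a configuration `ω : E → Bool` probability proportional to
`q ^ k(ω) · ∏_{ω e = 1} p e · ∏_{ω e = 0} (1 - p e)`, where `k(ω)` is the
number of connected components of the spanning subgraph `(V, {e : ω e = 1})`.
-/

attribute [local instance] Classical.propDecidable

namespace RandomCluster

variable {V E : Type*}

/-- One step along an open edge (in either direction, since edges are undirected). -/
def Step (ends : E → V × V) (ω : E → Bool) (u v : V) : Prop :=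
  ∃ e, ω e = true ∧ (ends e = (u, v) ∨ ends e = (v, u))

/-- `Reach ends ω u v` : there is an open path from `u` to `v` in configuration `ω`. -/
def Reach (ends : E → V × V) (ω : E → Bool) (u v : V) : Prop :=
  Relation.ReflTransGen (Step ends ω) u v

/-- The number of connected components `k(ω)` of the spanning subgraph
`(V, {e : ω e = 1})`: the number of classes of the equivalence relation
generated by open adjacency. -/
noncomputable def numComp (ends : E → V × V) (ω : E → Bool) : ℕ :=
  Nat.card (Quot (Step ends ω))

/-- The open cluster `C_A(ω)` of a set of vertices `A`: the set of edges lying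
on some open path starting at a vertex of `A`. -/
def ClusterOf (ends : E → V × V) (A : Set V) (ω : E → Bool) : Set E :=
  {e | ω e = true ∧ ∃ a ∈ A, (Reach ends ω a (ends e).1 ∨ Reach ends ω a (ends e).2)}

/-- The event `{A ↛ B}` that no open path joins a vertex of `A` to a vertex of `B`. -/
def NoConn (ends : E → V × V) (A B : Set V) : Set (E → Bool) :=
  {ω | ∀ a ∈ A, ∀ b ∈ B, ¬ Reach ends ω a b}

/-- The (unnormalized) random-cluster weight of a configuration. -/
noncomputable def rcWeight [Fintype E] (ends : E → V × V) (p : E → ℝ) (q : ℝ)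
    (ω : E → Bool) : ℝ :=
  q ^ numComp ends ω * ∏ e, if ω e then p e else 1 - p e

/-- The random-cluster probability of a single configuration:
`φ_{G,q}(ω) = rcWeight ω / Z`. -/
noncomputable def rcProb [Fintype E] [DecidableEq E] (ends : E → V × V)
    (p : E → ℝ) (q : ℝ) (ω : E → Bool) : ℝ :=
  rcWeight ends p q ω / ∑ ω' : E → Bool, rcWeight ends p q ω'

/-- The random-cluster probability `φ_{G,q}(A)` of an event `A ⊆ {0,1}^E`. -/
noncomputable def rcPr [Fintype E] [DecidableEq E] (ends : E → V × V)
    (p : E → ℝ) (q : ℝ) (A : Set (E → Bool)) : ℝ :=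
  (∑ ω : E → Bool, A.indicator (rcWeight ends p q) ω) /
    ∑ ω : E → Bool, rcWeight ends p q ω

/-- Conditional probability `φ_{G,q}(A | B)`. -/
noncomputable def rcCondPr [Fintype E] [DecidableEq E] (ends : E → V × V)
    (p : E → ℝ) (q : ℝ) (A B : Set (E → Bool)) : ℝ :=
  rcPr ends p q (A ∩ B) / rcPr ends p q B

/-- Conditional expectation `E_{φ_{G,q}}[f | B]`. -/
noncomputable def rcCondExp [Fintype E] [DecidableEq E] (ends : E → V × V)
    (p : E → ℝ) (q : ℝ) (f : (E → Bool) → ℝ) (B : Set (E → Bool)) : ℝ :=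
  (∑ ω : E → Bool, B.indicator (fun ω' => rcWeight ends p q ω' * f ω') ω) /
    ∑ ω : E → Bool, B.indicator (rcWeight ends p q) ω

variable {ends : E → V × V} {ω ω' : E → Bool} {u v : V}

lemma step_symm (h : Step ends ω u v) : Step ends ω v u := by
  obtain ⟨e, he, h⟩ := h
  exact ⟨e, he, h.symm⟩

lemma reach_symm (h : Reach ends ω u v) : Reach ends ω v u := by
  induction h with
  | refl => exact Relation.ReflTransGen.refl
  | tail _ hstep ih =>
    exact Relation.ReflTransGen.head (step_symm hstep) ih

lemma step_mono (hle : ∀ e, ω e = true → ω' e = true) (h : Step ends ω u v) :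
    Step ends ω' u v := by
  obtain ⟨e, he, h⟩ := h
  exact ⟨e, hle e he, h⟩

lemma reach_mono (hle : ∀ e, ω e = true → ω' e = true) (h : Reach ends ω u v) :
    Reach ends ω' u v := by
  induction h with
  | refl => exact Relation.ReflTransGen.refl
  | tail _ hstep ih => exact ih.tail (step_mono hle hstep)

lemma cluster_mono (hle : ∀ e, ω e = true → ω' e = true) {A : Set V} :
    ClusterOf ends A ω ⊆ ClusterOf ends A ω' := by
  rintro e ⟨he, a, ha, hr⟩
  exact ⟨hle e he, a, ha, hr.imp (reach_mono hle) (reach_mono hle)⟩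

lemma noConn_antitone (hle : ∀ e, ω e = true → ω' e = true) {S T : Set V}
    (h : ω' ∈ NoConn ends S T) : ω ∈ NoConn ends S T :=
  fun a ha b hb hr => h a ha b hb (reach_mono hle hr)

/-- Transfer of connectivity along cluster inclusion: a path starting at a point
reachable from `A` only uses cluster edges, hence survives when the cluster grows. -/
lemma reach_transfer {A : Set V} {a : V} (ha : a ∈ A) (hau : Reach ends ω a u)
    (huv : Reach ends ω u v) (hsub : ClusterOf ends A ω ⊆ ClusterOf ends A ω') :
    Reach ends ω' u v := by
  induction huv with
  | refl => exact Relation.ReflTransGen.refl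
  | @tail w x hw hstep ih =>
    obtain ⟨e, he, hends⟩ := hstep
    have hmem : e ∈ ClusterOf ends A ω := by
      refine ⟨he, a, ha, ?_⟩
      have haw : Reach ends ω a w := hau.trans hw
      rcases hends with h1 | h1
      · exact Or.inl (by rw [h1]; exact haw)
      · exact Or.inr (by rw [h1]; exact haw)
    have := hsub hmem
    exact ih.tail ⟨e, this.1, hends⟩

section Toggle

variable [DecidableEq E] {e : E} {x₀ y₀ : V}

lemma step_update_true (hxy : ends e = (x₀, y₀) ∨ ends e = (y₀, x₀))
    (h : Step ends (Function.update ω e true) u v) :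
    Step ends ω u v ∨ (u = x₀ ∧ v = y₀) ∨ (u = y₀ ∧ v = x₀) := by
  obtain ⟨e', he', hends⟩ := h
  by_cases hee : e' = e
  · subst hee
    right
    rcases hxy with h1 | h1 <;> rcases hends with h2 | h2 <;>
      rw [h1] at h2 <;> cases h2 <;> simp
  · rw [Function.update_of_ne hee] at he'
    exact Or.inl ⟨e', he', hends⟩

lemma reach_update_true (hxy : ends e = (x₀, y₀) ∨ ends e = (y₀, x₀))
    (h : Reach ends (Function.update ω e true) u v) :
    Reach ends ω u v ∨ (Reach ends ω u x₀ ∧ Reach ends ω y₀ v) ∨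
      (Reach ends ω u y₀ ∧ Reach ends ω x₀ v) := by
  induction h with
  | refl => exact Or.inl Relation.ReflTransGen.refl
  | @tail w x hw hstep ih =>
    rcases step_update_true hxy hstep with hs | ⟨rfl, rfl⟩ | ⟨rfl, rfl⟩
    · rcases ih with h1 | ⟨h1, h2⟩ | ⟨h1, h2⟩
      · exact Or.inl (h1.tail hs)
      · exact Or.inr (Or.inl ⟨h1, h2.tail hs⟩)
      · exact Or.inr (Or.inr ⟨h1, h2.tail hs⟩)
    · rcases ih with h1 | ⟨h1, h2⟩ | ⟨h1, h2⟩
      · exact Or.inr (Or.inl ⟨h1, Relation.ReflTransGen.refl⟩)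
      · exact Or.inr (Or.inl ⟨h1, Relation.ReflTransGen.refl⟩)
      · exact Or.inl h1
    · rcases ih with h1 | ⟨h1, h2⟩ | ⟨h1, h2⟩
      · exact Or.inr (Or.inr ⟨h1, Relation.ReflTransGen.refl⟩)
      · exact Or.inl h1
      · exact Or.inr (Or.inr ⟨h1, Relation.ReflTransGen.refl⟩)

lemma eqvGen_iff_reach : Relation.EqvGen (Step ends ω) u v ↔ Reach ends ω u v := by
  constructor
  · intro h
    induction h with
    | rel a b h => exact Relation.ReflTransGen.single h
    | refl a => exact Relation.ReflTransGen.refl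
    | symm a b _ ih => exact reach_symm ih
    | trans a b c _ _ ih1 ih2 => exact ih1.trans ih2
  · intro h
    induction h with
    | refl => exact Relation.EqvGen.refl _
    | tail _ hstep ih => exact ih.trans _ _ _ (Relation.EqvGen.rel _ _ hstep)

end Toggle

section NumCompToggle

variable [DecidableEq E] {e : E} {x₀ y₀ : V}

lemma update_le {b : Bool} (hb : ω e = false ∨ b = true) :
    ∀ e', ω e' = true → Function.update ω e b e' = true := by
  intro e' he'
  by_cases hee : e' = e
  · subst hee
    rcases hb with h | h
    · rw [he'] at h; cases h
    · simp [h]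
  · rwa [Function.update_of_ne hee]

lemma le_update {b : Bool} : ∀ e', ω e' = true → b = true →
    Function.update ω e b e' = true := fun e' he' hb => update_le (Or.inr hb) e' he'

/-- Opening an edge whose endpoints are already connected does not change the
number of components. -/
lemma numComp_update_true_of_reach (hxy : ends e = (x₀, y₀) ∨ ends e = (y₀, x₀))
    (hconn : Reach ends ω x₀ y₀) :
    numComp ends (Function.update ω e true) = numComp ends ω := by
  apply Nat.card_congr
  refine ⟨Quot.lift (Quot.mk _) (fun a b h => ?_), Quot.lift (Quot.mk _) (fun a b h => ?_),
    ?_, ?_⟩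
  · -- Step ξ⁺ a b → mk (Step ξ) a = mk (Step ξ) b
    rcases step_update_true hxy h with hs | ⟨rfl, rfl⟩ | ⟨rfl, rfl⟩
    · exact Quot.sound hs
    · exact Quot.eqvGen_sound (eqvGen_iff_reach.mpr hconn)
    · exact (Quot.eqvGen_sound (eqvGen_iff_reach.mpr hconn)).symm
  · exact Quot.sound (step_mono (update_le (Or.inr rfl)) h)
  · rintro ⟨v⟩; rfl
  · rintro ⟨v⟩; rfl

/-- Opening an edge whose endpoints are not connected decreases the number of
components by one. -/
lemma numComp_update_true_of_not_reach (hxy : ends e = (x₀, y₀) ∨ ends e = (y₀, x₀))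
    [Finite V] (hnc : ¬ Reach ends ω x₀ y₀) :
    numComp ends ω = numComp ends (Function.update ω e true) + 1 := by
  classical
  set r1 := Step ends ω with hr1
  set r2 := Step ends (Function.update ω e true) with hr2
  set X : Quot r1 := Quot.mk r1 x₀ with hX
  set Y : Quot r1 := Quot.mk r1 y₀ with hY
  have hXY : X ≠ Y := by
    intro h
    exact hnc (eqvGen_iff_reach.mp (Quot.eqvGen_exact h))
  set s : Quot r1 → Quot r1 → Prop := fun a b => a = X ∧ b = Y with hs
  -- π : Quot r1 → Quot r2
  have hπresp : ∀ a b : V, r1 a b → Quot.mk r2 a = Quot.mk r2 b := fun a b h =>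
    Quot.sound (step_mono (update_le (Or.inr rfl)) h)
  have hstepxy : r2 x₀ y₀ := ⟨e, Function.update_self _ _ _, hxy⟩
  -- e2 : Quot s ≃ Quot r2
  have hFresp : ∀ a b : Quot r1, s a b →
      Quot.lift (Quot.mk r2) hπresp a = Quot.lift (Quot.mk r2) hπresp b := by
    rintro a b ⟨rfl, rfl⟩
    exact Quot.sound hstepxy
  have hGresp : ∀ a b : V, r2 a b → Quot.mk s (Quot.mk r1 a) = Quot.mk s (Quot.mk r1 b) := by
    intro a b h
    rcases step_update_true hxy h with hstep | ⟨rfl, rfl⟩ | ⟨rfl, rfl⟩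
    · exact congrArg (Quot.mk s) (Quot.sound hstep)
    · exact Quot.sound ⟨rfl, rfl⟩
    · exact (Quot.sound ⟨rfl, rfl⟩).symm
  have e2 : Quot s ≃ Quot r2 := by
    refine ⟨Quot.lift (Quot.lift (Quot.mk r2) hπresp) hFresp,
      Quot.lift (fun v => Quot.mk s (Quot.mk r1 v)) hGresp, ?_, ?_⟩
    · rintro ⟨⟨v⟩⟩; rfl
    · rintro ⟨v⟩; rfl
  -- e1 : Quot s ≃ {z : Quot r1 // z ≠ Y}
  have e1 : Quot s ≃ {z : Quot r1 // z ≠ Y} := by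
    refine ⟨Quot.lift (fun a => if h : a = Y then ⟨X, hXY⟩ else ⟨a, h⟩) ?_,
      fun z => Quot.mk s z.1, ?_, ?_⟩
    · rintro a b ⟨rfl, rfl⟩
      rw [dif_neg hXY, dif_pos rfl]
    · rintro ⟨a⟩
      dsimp only
      by_cases h : a = Y
      · rw [dif_pos h]
        show Quot.mk s X = Quot.mk s a
        rw [h]
        exact Quot.sound ⟨rfl, rfl⟩
      · rw [dif_neg h]
    · rintro ⟨z, hz⟩
      dsimp only
      rw [dif_neg hz]
  have hcount : Nat.card (Quot r1) = Nat.card {z : Quot r1 // z ≠ Y} + 1 := by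
    rw [← Finite.card_option]
    exact Nat.card_congr (Equiv.optionSubtypeNe Y).symm
  show Nat.card (Quot r1) = Nat.card (Quot r2) + 1
  rw [hcount, Nat.card_congr (e1.symm.trans e2)]

end NumCompToggle

section Weight

variable [Fintype E] {p : E → ℝ} {q : ℝ}

lemma rcWeight_pos (hp : ∀ e, 0 < p e ∧ p e < 1) (hq : 0 < q) (ω : E → Bool) :
    0 < rcWeight ends p q ω := by
  refine mul_pos (pow_pos hq _) (Finset.prod_pos fun e _ => ?_)
  by_cases h : ω e = true <;> simp [h, (hp e).1, sub_pos.mpr (hp e).2]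

lemma rcWeight_eq_split [DecidableEq E] (e : E) (ω : E → Bool) :
    rcWeight ends p q ω = q ^ numComp ends ω *
      ((if ω e then p e else 1 - p e) *
        ∏ e' ∈ Finset.univ.erase e, (if ω e' then p e' else 1 - p e')) := by
  rw [rcWeight, ← Finset.mul_prod_erase Finset.univ _ (Finset.mem_univ e)]

lemma prod_erase_update [DecidableEq E] (e : E) (ω : E → Bool) (b : Bool) :
    ∏ e' ∈ Finset.univ.erase e, (if Function.update ω e b e' then p e' else 1 - p e') =
    ∏ e' ∈ Finset.univ.erase e, (if ω e' then p e' else 1 - p e') :=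
  Finset.prod_congr rfl fun e' he' => by rw [Function.update_of_ne (Finset.ne_of_mem_erase he')]

lemma rcWeight_update_compare [Finite V] [DecidableEq E] {e : E} {ξ ξ' : E → Bool}
    (hp : ∀ e, 0 < p e ∧ p e < 1) (hq : 1 ≤ q) (hξ : ξ e = false) (hξ' : ξ' e = false)
    (hk : numComp ends (Function.update ξ e true) + numComp ends ξ' ≤
          numComp ends (Function.update ξ' e true) + numComp ends ξ) :
    rcWeight ends p q (Function.update ξ e true) * rcWeight ends p q ξ' ≤
      rcWeight ends p q (Function.update ξ' e true) * rcWeight ends p q ξ := by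
  have hq0 : (0:ℝ) < q := lt_of_lt_of_le zero_lt_one hq
  set Q1 := ∏ e' ∈ Finset.univ.erase e, (if ξ e' then p e' else 1 - p e') with hQ1
  set Q2 := ∏ e' ∈ Finset.univ.erase e, (if ξ' e' then p e' else 1 - p e') with hQ2
  have hQ1pos : 0 < Q1 := Finset.prod_pos fun e' _ => by
    by_cases h : ξ e' = true <;> simp [h, (hp e').1, sub_pos.mpr (hp e').2]
  have hQ2pos : 0 < Q2 := Finset.prod_pos fun e' _ => by
    by_cases h : ξ' e' = true <;> simp [h, (hp e').1, sub_pos.mpr (hp e').2]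
  rw [rcWeight_eq_split e (Function.update ξ e true), rcWeight_eq_split e ξ',
    rcWeight_eq_split e (Function.update ξ' e true), rcWeight_eq_split e ξ,
    prod_erase_update, prod_erase_update, ← hQ1, ← hQ2, Function.update_self,
    Function.update_self, hξ, hξ']
  simp only [if_true, Bool.false_eq_true, if_false]
  have hC : (0:ℝ) ≤ p e * ((1 - p e) * (Q1 * Q2)) := by
    have := (hp e).1
    have := sub_pos.mpr (hp e).2
    positivity
  have hpow : q ^ (numComp ends (Function.update ξ e true) + numComp ends ξ') ≤
      q ^ (numComp ends (Function.update ξ' e true) + numComp ends ξ) :=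
    pow_le_pow_right₀ hq hk
  calc q ^ numComp ends (Function.update ξ e true) * (p e * Q1) *
        (q ^ numComp ends ξ' * ((1 - p e) * Q2))
      = q ^ (numComp ends (Function.update ξ e true) + numComp ends ξ') *
        (p e * ((1 - p e) * (Q1 * Q2))) := by rw [pow_add]; ring
    _ ≤ q ^ (numComp ends (Function.update ξ' e true) + numComp ends ξ) *
        (p e * ((1 - p e) * (Q1 * Q2))) := mul_le_mul_of_nonneg_right hpow hC
    _ = q ^ numComp ends (Function.update ξ' e true) * (p e * Q2) *
        (q ^ numComp ends ξ * ((1 - p e) * Q1)) := by rw [pow_add]; ring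

end Weight

section Main

set_option linter.unusedSectionVars false

variable [Fintype V] [Fintype E] [DecidableEq E]

/-- The support set: configurations frozen to `β` outside `A`, with no `S`-`T` connection. -/
def DD (ends : E → V × V) (S T : Set V) (A : Finset E) (β : E → Bool) : Set (E → Bool) :=
  {ω | ∀ e ∉ A, ω e = β e} ∩ NoConn ends S T

/-- Partial (unnormalized) expectation over the support set. -/
noncomputable def SD (ends : E → V × V) (p : E → ℝ) (q : ℝ) (S T : Set V)
    (A : Finset E) (β : E → Bool) (h : (E → Bool) → ℝ) : ℝ :=
  ∑ ω : E → Bool, (DD ends S T A β).indicator (fun ω => rcWeight ends p q ω * h ω) ω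

variable {p : E → ℝ} {q : ℝ}

lemma noConn_comm {S T : Set V} : NoConn ends T S = NoConn ends S T := by
  ext ω
  constructor <;> intro h a ha b hb hr
  · exact h b hb a ha (reach_symm hr)
  · exact h b hb a ha (reach_symm hr)

lemma DD_comm {S T : Set V} {A : Finset E} {β : E → Bool} :
    DD ends T S A β = DD ends S T A β := by
  unfold DD; rw [noConn_comm]

lemma SD_comm {S T : Set V} {A : Finset E} {β : E → Bool} {h : (E → Bool) → ℝ} :
    SD ends p q T S A β h = SD ends p q S T A β h := by
  unfold SD; rw [DD_comm]

lemma SD_congr {S T : Set V} {A : Finset E} {β : E → Bool} {h h' : (E → Bool) → ℝ}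
    (hc : ∀ ω ∈ DD ends S T A β, h ω = h' ω) :
    SD ends p q S T A β h = SD ends p q S T A β h' := by
  refine Finset.sum_congr rfl fun ω _ => ?_
  by_cases hm : ω ∈ DD ends S T A β
  · rw [Set.indicator_of_mem hm, Set.indicator_of_mem hm, hc ω hm]
  · rw [Set.indicator_of_notMem hm, Set.indicator_of_notMem hm]

lemma SD_neg {S T : Set V} {A : Finset E} {β : E → Bool} {h : (E → Bool) → ℝ} :
    SD ends p q S T A β (fun ω => -h ω) = - SD ends p q S T A β h := by
  unfold SD
  rw [← Finset.sum_neg_distrib]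
  refine Finset.sum_congr rfl fun ω _ => ?_
  by_cases hm : ω ∈ DD ends S T A β
  · rw [Set.indicator_of_mem hm, Set.indicator_of_mem hm]; ring
  · rw [Set.indicator_of_notMem hm, Set.indicator_of_notMem hm]; ring

lemma SD_nonneg (hp : ∀ e, 0 < p e ∧ p e < 1) (hq : 1 ≤ q) {S T : Set V} {A : Finset E}
    {β : E → Bool} {h : (E → Bool) → ℝ} (hh : ∀ ω, 0 ≤ h ω) :
    0 ≤ SD ends p q S T A β h := by
  refine Finset.sum_nonneg fun ω _ => Set.indicator_nonneg (fun ω _ => ?_) ω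
  exact mul_nonneg (rcWeight_pos hp (lt_of_lt_of_le zero_lt_one hq) ω).le (hh ω)

lemma SD_eq_zero (hp : ∀ e, 0 < p e ∧ p e < 1) (hq : 1 ≤ q) {S T : Set V} {A : Finset E}
    {β : E → Bool} (hz : SD ends p q S T A β (fun _ => 1) = 0) (h : (E → Bool) → ℝ) :
    SD ends p q S T A β h = 0 := by
  have hq0 : (0:ℝ) < q := lt_of_lt_of_le zero_lt_one hq
  have hempty : ∀ ω, ω ∉ DD ends S T A β := by
    intro ω hω
    have hnn : ∀ ω' ∈ Finset.univ (α := E → Bool),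
        0 ≤ (DD ends S T A β).indicator (fun ω => rcWeight ends p q ω * 1) ω' :=
      fun ω' _ => Set.indicator_nonneg
        (fun ω'' _ => mul_nonneg (rcWeight_pos hp hq0 ω'').le zero_le_one) ω'
    have := (Finset.sum_eq_zero_iff_of_nonneg hnn).mp hz ω (Finset.mem_univ ω)
    rw [Set.indicator_of_mem hω] at this
    have := rcWeight_pos hp hq0 (ends := ends) ω
    nlinarith
  unfold SD
  refine Finset.sum_eq_zero fun ω _ => Set.indicator_of_notMem (hempty ω) _

end Main

section Main2

set_option linter.unusedSectionVars false

variable [Fintype V] [Fintype E] [DecidableEq E]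
variable {p : E → ℝ} {q : ℝ} {S T : Set V} {A : Finset E} {β : E → Bool} {e : E}

lemma DD_erase_subset (he : e ∈ A) {b : Bool} :
    DD ends S T (A.erase e) (Function.update β e b) ⊆ DD ends S T A β := by
  rintro ω ⟨hfz, hN⟩
  refine ⟨fun e' he' => ?_, hN⟩
  have hne : e' ≠ e := fun h => (h ▸ he') he
  have hne' : e' ∉ A.erase e := fun h => he' (Finset.mem_of_mem_erase h)
  rw [hfz e' hne', Function.update_of_ne hne]

lemma DD_erase_val {b : Bool} {ξ : E → Bool}
    (hξ : ξ ∈ DD ends S T (A.erase e) (Function.update β e b)) : ξ e = b := by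
  have := hξ.1 e (Finset.notMem_erase e A)
  rwa [Function.update_self] at this

lemma beta0_le (he : e ∈ A) {b : Bool} {ξ : E → Bool}
    (hξ : ξ ∈ DD ends S T (A.erase e) (Function.update β e b)) :
    ∀ e', (if e' ∈ A then false else β e') = true → ξ e' = true := by
  intro e' h
  by_cases hA : e' ∈ A
  · rw [if_pos hA] at h; cases h
  · rw [if_neg hA] at h
    have hne : e' ≠ e := fun heq => hA (heq ▸ he)
    have hne' : e' ∉ A.erase e := fun hmem => hA (Finset.mem_of_mem_erase hmem)
    rw [hξ.1 e' hne', Function.update_of_ne hne, h]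

lemma beta0_le' (he : e ∈ A) {ξ : E → Bool} (hξ : ξ ∈ DD ends S T A β) :
    ∀ e', (if e' ∈ A then false else β e') = true → ξ e' = true := by
  intro e' h
  by_cases hA : e' ∈ A
  · rw [if_pos hA] at h; cases h
  · rw [if_neg hA] at h
    rw [hξ.1 e' hA, h]

lemma mem_D1_up (he : e ∈ A) {ξ : E → Bool} (hξe : ξ e = false) :
    Function.update ξ e true ∈ DD ends S T (A.erase e) (Function.update β e true) ↔
      ξ ∈ DD ends S T (A.erase e) (Function.update β e false) ∧
        Function.update ξ e true ∈ NoConn ends S T := by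
  constructor
  · rintro ⟨hfz, hN⟩
    refine ⟨⟨fun e' he' => ?_, noConn_antitone (update_le (Or.inr rfl)) hN⟩, hN⟩
    by_cases hee : e' = e
    · subst hee; rw [Function.update_self, hξe]
    · have h1 := hfz e' he'
      simp only [Function.update_of_ne hee] at h1 ⊢
      exact h1
  · rintro ⟨⟨hfz, _⟩, hN⟩
    refine ⟨fun e' he' => ?_, hN⟩
    by_cases hee : e' = e
    · subst hee; rw [Function.update_self, Function.update_self]
    · have h1 := hfz e' he'
      simp only [Function.update_of_ne hee] at h1 ⊢
      exact h1

lemma SD_split (he : e ∈ A) (h : (E → Bool) → ℝ) :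
    SD ends p q S T A β h =
      SD ends p q S T (A.erase e) (Function.update β e true) h +
        SD ends p q S T (A.erase e) (Function.update β e false) h := by
  unfold SD
  rw [← Finset.sum_add_distrib]
  refine Finset.sum_congr rfl fun ω _ => ?_
  by_cases hm : ω ∈ DD ends S T A β
  · have hmem : ∀ b : Bool, ω e = b →
        ω ∈ DD ends S T (A.erase e) (Function.update β e b) := by
      intro b hb
      refine ⟨fun e' he' => ?_, hm.2⟩
      by_cases hee : e' = e
      · subst hee; rw [Function.update_self, hb]
      · rw [Function.update_of_ne hee]
        by_cases hA : e' ∈ A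
        · exact absurd (Finset.mem_erase.mpr ⟨hee, hA⟩) he'
        · exact hm.1 e' hA
    by_cases hb : ω e = true
    · have h1 : ω ∈ DD ends S T (A.erase e) (Function.update β e true) := hmem true hb
      have h0 : ω ∉ DD ends S T (A.erase e) (Function.update β e false) := by
        intro hc; rw [DD_erase_val hc] at hb; cases hb
      rw [Set.indicator_of_mem hm, Set.indicator_of_mem h1, Set.indicator_of_notMem h0,
        add_zero]
    · have hb' : ω e = false := by
        cases hωe : ω e
        · rfl
        · exact absurd hωe hb
      have h0 : ω ∈ DD ends S T (A.erase e) (Function.update β e false) := hmem false hb'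
      have h1 : ω ∉ DD ends S T (A.erase e) (Function.update β e true) := by
        intro hc; rw [DD_erase_val hc] at hb'; cases hb'
      rw [Set.indicator_of_mem hm, Set.indicator_of_mem h0, Set.indicator_of_notMem h1,
        zero_add]
  · have h1 : ω ∉ DD ends S T (A.erase e) (Function.update β e true) :=
      fun hc => hm (DD_erase_subset he hc)
    have h0 : ω ∉ DD ends S T (A.erase e) (Function.update β e false) :=
      fun hc => hm (DD_erase_subset he hc)
    rw [Set.indicator_of_notMem hm, Set.indicator_of_notMem h1,
      Set.indicator_of_notMem h0, add_zero]

lemma SD_reindex (hp : ∀ e, 0 < p e ∧ p e < 1) (hq : 1 ≤ q) (he : e ∈ A)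
    (h : (E → Bool) → ℝ) :
    SD ends p q S T (A.erase e) (Function.update β e true) h =
      ∑ ξ : E → Bool, (DD ends S T (A.erase e) (Function.update β e false)).indicator
        (fun ξ => rcWeight ends p q ξ *
          ((NoConn ends S T).indicator (rcWeight ends p q) (Function.update ξ e true) /
              rcWeight ends p q ξ * h (Function.update ξ e true))) ξ := by
  have hq0 : (0:ℝ) < q := lt_of_lt_of_le zero_lt_one hq
  have hwpos : ∀ ω, 0 < rcWeight ends p q ω := rcWeight_pos hp hq0
  have hinv : Function.Involutive (fun ξ : E → Bool => Function.update ξ e (!(ξ e))) := by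
    intro ξ; funext e'
    by_cases hee : e' = e
    · subst hee; simp
    · simp [Function.update_of_ne hee]
  unfold SD
  refine (Fintype.sum_bijective _ hinv.bijective _ _ fun ξ => ?_).symm
  by_cases hξe : ξ e = true
  · have h0 : ξ ∉ DD ends S T (A.erase e) (Function.update β e false) := by
      intro hc; rw [DD_erase_val hc] at hξe; cases hξe
    have h1 : Function.update ξ e (!(ξ e)) ∉
        DD ends S T (A.erase e) (Function.update β e true) := by
      intro hc
      have := DD_erase_val hc
      rw [Function.update_self, hξe] at this
      cases this
    rw [Set.indicator_of_notMem h0, Set.indicator_of_notMem h1]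
  · have hξe' : ξ e = false := by
      cases hc : ξ e
      · rfl
      · exact absurd hc hξe
    have hTg : Function.update ξ e (!(ξ e)) = Function.update ξ e true := by
      rw [hξe']; rfl
    rw [hTg]
    by_cases hm : ξ ∈ DD ends S T (A.erase e) (Function.update β e false)
    · by_cases hN : Function.update ξ e true ∈ NoConn ends S T
      · have hD1 : Function.update ξ e true ∈
            DD ends S T (A.erase e) (Function.update β e true) :=
          (mem_D1_up he hξe').mpr ⟨hm, hN⟩
        rw [Set.indicator_of_mem hm, Set.indicator_of_mem hD1, Set.indicator_of_mem hN]
        rw [div_mul_eq_mul_div, mul_div_assoc']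
        exact (mul_div_cancel_left₀ _ (ne_of_gt (hwpos ξ)))
      · have hD1 : Function.update ξ e true ∉
            DD ends S T (A.erase e) (Function.update β e true) := fun hc => hN hc.2
        rw [Set.indicator_of_mem hm, Set.indicator_of_notMem hD1,
          Set.indicator_of_notMem hN]
        simp
    · have hD1 : Function.update ξ e true ∉
          DD ends S T (A.erase e) (Function.update β e true) := by
        intro hc
        exact hm ((mem_D1_up he hξe').mp hc).1
      rw [Set.indicator_of_notMem hm, Set.indicator_of_notMem hD1]

end Main2

section StepKey

set_option linter.unusedSectionVars false
set_option maxHeartbeats 1000000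

variable [Fintype V] [Fintype E] [DecidableEq E]
variable {p : E → ℝ} {q : ℝ}

lemma step_key (hp : ∀ e, 0 < p e ∧ p e < 1) (hq : 1 ≤ q)
    (A : Finset E) (e : E) (he : e ∈ A)
    (IH : ∀ (S T : Set V) (β : E → Bool) (f g : (E → Bool) → ℝ),
      (∀ ω ∈ DD ends S T (A.erase e) β, ∀ ω' ∈ DD ends S T (A.erase e) β,
        ClusterOf ends S ω ⊆ ClusterOf ends S ω' →
        ClusterOf ends T ω' ⊆ ClusterOf ends T ω → f ω ≤ f ω') →
      (∀ ω ∈ DD ends S T (A.erase e) β, ∀ ω' ∈ DD ends S T (A.erase e) β,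
        ClusterOf ends S ω ⊆ ClusterOf ends S ω' →
        ClusterOf ends T ω' ⊆ ClusterOf ends T ω → g ω ≤ g ω') →
      SD ends p q S T (A.erase e) β (fun ω => f ω * g ω) *
          SD ends p q S T (A.erase e) β (fun _ => 1) ≥
        SD ends p q S T (A.erase e) β f * SD ends p q S T (A.erase e) β g)
    (S T : Set V) (β : E → Bool) (f g : (E → Bool) → ℝ)
    (hf : ∀ ω ∈ DD ends S T A β, ∀ ω' ∈ DD ends S T A β,
      ClusterOf ends S ω ⊆ ClusterOf ends S ω' →
      ClusterOf ends T ω' ⊆ ClusterOf ends T ω → f ω ≤ f ω')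
    (hg : ∀ ω ∈ DD ends S T A β, ∀ ω' ∈ DD ends S T A β,
      ClusterOf ends S ω ⊆ ClusterOf ends S ω' →
      ClusterOf ends T ω' ⊆ ClusterOf ends T ω → g ω ≤ g ω')
    (x₀ y₀ : V) (hxy : ends e = (x₀, y₀) ∨ ends e = (y₀, x₀))
    (a₀ : V) (ha₀ : a₀ ∈ S)
    (hreach : Reach ends (fun e' => if e' ∈ A then false else β e') a₀ x₀) :
    SD ends p q S T A β (fun ω => f ω * g ω) * SD ends p q S T A β (fun _ => 1) ≥
      SD ends p q S T A β f * SD ends p q S T A β g := by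
  have hq0 : (0:ℝ) < q := lt_of_lt_of_le zero_lt_one hq
  set N := NoConn ends S T with hN
  set w : (E → Bool) → ℝ := rcWeight ends p q with hw
  have hwpos : ∀ ω, 0 < w ω := rcWeight_pos hp hq0
  set β1 := Function.update β e true with hβ1
  set β0 := Function.update β e false with hβ0
  set D0 : Set (E → Bool) := DD ends S T (A.erase e) β0 with hD0
  set D1 : Set (E → Bool) := DD ends S T (A.erase e) β1 with hD1
  set up : (E → Bool) → (E → Bool) := fun ξ => Function.update ξ e true with hup
  set r : (E → Bool) → ℝ := fun ξ => N.indicator w (up ξ) / w ξ with hr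
  have huple : ∀ ξ : E → Bool, ∀ e', ξ e' = true → up ξ e' = true :=
    fun ξ => update_le (Or.inr rfl)
  have hstepe : ∀ ξ : E → Bool, Step ends (up ξ) x₀ y₀ :=
    fun ξ => ⟨e, Function.update_self _ _ _, hxy⟩
  -- reachability of x₀ from S on the support
  have hax0 : ∀ ξ ∈ D0, Reach ends ξ a₀ x₀ :=
    fun ξ hξ => reach_mono (beta0_le he hξ) hreach
  -- membership of up ξ in D1
  have hupD1 : ∀ ξ ∈ D0, up ξ ∈ N → up ξ ∈ D1 :=
    fun ξ hξ hN' => (mem_D1_up he (DD_erase_val hξ)).mpr ⟨hξ, hN'⟩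
  -- the T-cluster does not grow when opening e (conditionally on no S-T connection)
  have hCT : ∀ ξ ∈ D0, up ξ ∈ N → ClusterOf ends T (up ξ) ⊆ ClusterOf ends T ξ := by
    intro ξ hξ hupN e'' he''
    obtain ⟨hopen, t, ht, hrv⟩ := he''
    have hξN : ξ ∈ N := hξ.2
    have hax : Reach ends ξ a₀ x₀ := hax0 ξ hξ
    have haxup : Reach ends (up ξ) a₀ x₀ := reach_mono (huple ξ) hax
    have hayup : Reach ends (up ξ) a₀ y₀ := haxup.tail (hstepe ξ)
    have hnotx : ¬ Reach ends ξ t x₀ :=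
      fun h' => hξN a₀ ha₀ t ht (hax.trans (reach_symm h'))
    have hnoty : ¬ Reach ends ξ t y₀ :=
      fun h' => hupN a₀ ha₀ t ht (hayup.trans (reach_symm (reach_mono (huple ξ) h')))
    have hdecomp : ∀ v, Reach ends (up ξ) t v → Reach ends ξ t v := by
      intro v hv
      rcases reach_update_true hxy hv with h1 | ⟨h1, _⟩ | ⟨h1, _⟩
      · exact h1
      · exact absurd h1 hnotx
      · exact absurd h1 hnoty
    have he''ne : e'' ≠ e := by
      intro heq; subst heq
      rcases hxy with h2 | h2 <;> rcases hrv with h1 | h1 <;> rw [h2] at h1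
      · exact hnotx (hdecomp _ h1)
      · exact hnoty (hdecomp _ h1)
      · exact hnoty (hdecomp _ h1)
      · exact hnotx (hdecomp _ h1)
    refine ⟨?_, t, ht, hrv.imp (hdecomp _) (hdecomp _)⟩
    rw [← Function.update_of_ne he''ne true ξ]
    exact hopen
  -- monotone comparison of f along opening e
  have hfup : ∀ ξ ∈ D0, up ξ ∈ N → f ξ ≤ f (up ξ) := fun ξ hξ hN' =>
    hf ξ (DD_erase_subset he hξ) (up ξ) (DD_erase_subset he (hupD1 ξ hξ hN'))
      (cluster_mono (huple ξ)) (hCT ξ hξ hN')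
  have hgup : ∀ ξ ∈ D0, up ξ ∈ N → g ξ ≤ g (up ξ) := fun ξ hξ hN' =>
    hg ξ (DD_erase_subset he hξ) (up ξ) (DD_erase_subset he (hupD1 ξ hξ hN'))
      (cluster_mono (huple ξ)) (hCT ξ hξ hN')
  -- nonnegativity and support of r
  have hrnn : ∀ ξ, 0 ≤ r ξ := fun ξ =>
    div_nonneg (Set.indicator_nonneg (fun ω _ => (hwpos ω).le) _) (hwpos ξ).le
  have hrsupp : ∀ ξ, r ξ ≠ 0 → up ξ ∈ N := by
    intro ξ h'
    by_contra hn
    exact h' (by rw [hr]; dsimp only; rw [Set.indicator_of_notMem hn, zero_div])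
  -- r is monotone for the cluster preorder on the support D0
  have hrmono : ∀ ω ∈ D0, ∀ ω' ∈ D0,
      ClusterOf ends S ω ⊆ ClusterOf ends S ω' →
      ClusterOf ends T ω' ⊆ ClusterOf ends T ω → r ω ≤ r ω' := by
    intro ξ hξ ξ' hξ' hCS hCTi
    by_cases hupN : up ξ ∈ N
    · have hax : Reach ends ξ a₀ x₀ := hax0 ξ hξ
      have hax' : Reach ends ξ' a₀ x₀ := hax0 ξ' hξ'
      have hupN' : up ξ' ∈ N := by
        intro a ha t ht hcontra
        rcases reach_update_true hxy hcontra with h1 | ⟨h1, h2⟩ | ⟨h1, h2⟩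
        · exact hξ'.2 a ha t ht h1
        · have h3 : Reach ends ξ t y₀ :=
            reach_transfer ht Relation.ReflTransGen.refl (reach_symm h2) hCTi
          have h4 : Reach ends (up ξ) a₀ y₀ := (reach_mono (huple ξ) hax).tail (hstepe ξ)
          exact hupN a₀ ha₀ t ht (h4.trans (reach_symm (reach_mono (huple ξ) h3)))
        · have h3 : Reach ends ξ t x₀ :=
            reach_transfer ht Relation.ReflTransGen.refl (reach_symm h2) hCTi
          exact hξ.2 a₀ ha₀ t ht (hax.trans (reach_symm h3))
      rw [hr]
      dsimp only
      rw [Set.indicator_of_mem hupN, Set.indicator_of_mem hupN']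
      rw [div_le_div_iff₀ (hwpos ξ) (hwpos ξ')]
      have hξe : ξ e = false := DD_erase_val hξ
      have hξ'e : ξ' e = false := DD_erase_val hξ'
      refine rcWeight_update_compare hp hq hξe hξ'e ?_
      by_cases hcon : Reach ends ξ x₀ y₀
      · have hcon' : Reach ends ξ' x₀ y₀ := reach_transfer ha₀ hax hcon hCS
        rw [numComp_update_true_of_reach hxy hcon, numComp_update_true_of_reach hxy hcon']
        omega
      · have h1 : numComp ends ξ = numComp ends (Function.update ξ e true) + 1 :=
          numComp_update_true_of_not_reach hxy hcon
        by_cases hcon' : Reach ends ξ' x₀ y₀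
        · rw [numComp_update_true_of_reach hxy hcon']
          omega
        · have h2 : numComp ends ξ' = numComp ends (Function.update ξ' e true) + 1 :=
            numComp_update_true_of_not_reach hxy hcon'
          omega
    · have : r ξ = 0 := by
        rw [hr]; dsimp only; rw [Set.indicator_of_notMem hupN, zero_div]
      rw [this]
      exact hrnn ξ'
  -- reindexed expressions for the sums over D1
  have hreidx : ∀ h : (E → Bool) → ℝ,
      SD ends p q S T (A.erase e) β1 h =
        ∑ ξ : E → Bool, D0.indicator (fun ξ => w ξ * (r ξ * h (up ξ))) ξ :=
    fun h => SD_reindex hp hq he h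
  -- the Δ inequalities
  have hdelta : ∀ h : (E → Bool) → ℝ,
      (∀ ω ∈ DD ends S T A β, ∀ ω' ∈ DD ends S T A β,
        ClusterOf ends S ω ⊆ ClusterOf ends S ω' →
        ClusterOf ends T ω' ⊆ ClusterOf ends T ω → h ω ≤ h ω') →
      (∀ ξ ∈ D0, up ξ ∈ N → h ξ ≤ h (up ξ)) →
      SD ends p q S T (A.erase e) β1 h * SD ends p q S T (A.erase e) β0 (fun _ => 1) ≥
        SD ends p q S T (A.erase e) β0 h * SD ends p q S T (A.erase e) β1 (fun _ => 1) := by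
    intro h hh hhup
    have h1 : SD ends p q S T (A.erase e) β1 h ≥
        SD ends p q S T (A.erase e) β0 (fun ξ => h ξ * r ξ) := by
      rw [hreidx h]
      unfold SD
      refine Finset.sum_le_sum fun ξ _ => ?_
      by_cases hm : ξ ∈ D0
      · rw [Set.indicator_of_mem hm, Set.indicator_of_mem hm]
        show rcWeight ends p q ξ * (h ξ * r ξ) ≤
          rcWeight ends p q ξ * (r ξ * h (Function.update ξ e true))
        rcases (hrnn ξ).eq_or_lt with h2 | h2
        · simp [show r ξ = 0 from h2.symm]
        · have hN' : up ξ ∈ N := hrsupp ξ (ne_of_gt h2)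
          have hle := hhup ξ hm hN'
          have hwp : (0:ℝ) ≤ rcWeight ends p q ξ := (hwpos ξ).le
          nlinarith [mul_le_mul_of_nonneg_left hle (mul_nonneg hwp h2.le)]
      · rw [Set.indicator_of_notMem hm, Set.indicator_of_notMem hm]
    have h2 : SD ends p q S T (A.erase e) β1 (fun _ => 1) =
        SD ends p q S T (A.erase e) β0 r := by
      rw [hreidx (fun _ => 1)]
      unfold SD
      exact Finset.sum_congr rfl fun ξ _ => by simp only [mul_one]; rfl
    have h3 := IH S T β0 h r
      (fun ω hω ω' hω' hCS hCT' => hh ω (DD_erase_subset he hω) ω' (DD_erase_subset he hω') hCS hCT')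
      hrmono
    have hz0nn : 0 ≤ SD ends p q S T (A.erase e) β0 (fun _ => 1) :=
      SD_nonneg hp hq fun _ => zero_le_one
    rw [h2]
    calc SD ends p q S T (A.erase e) β0 h * SD ends p q S T (A.erase e) β0 r
        ≤ SD ends p q S T (A.erase e) β0 (fun ω => h ω * r ω) *
          SD ends p q S T (A.erase e) β0 (fun _ => 1) := h3
      _ ≤ SD ends p q S T (A.erase e) β1 h *
          SD ends p q S T (A.erase e) β0 (fun _ => 1) :=
        mul_le_mul_of_nonneg_right h1 hz0nn
  have hΔf := hdelta f hf hfup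
  have hΔg := hdelta g hg hgup
  -- induction hypotheses on the two halves
  have hf1 : ∀ ω ∈ D1, ∀ ω' ∈ D1,
      ClusterOf ends S ω ⊆ ClusterOf ends S ω' →
      ClusterOf ends T ω' ⊆ ClusterOf ends T ω → f ω ≤ f ω' :=
    fun ω hω ω' hω' h1 h2 => hf ω (DD_erase_subset he hω) ω' (DD_erase_subset he hω') h1 h2
  have hg1 : ∀ ω ∈ D1, ∀ ω' ∈ D1,
      ClusterOf ends S ω ⊆ ClusterOf ends S ω' →
      ClusterOf ends T ω' ⊆ ClusterOf ends T ω → g ω ≤ g ω' :=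
    fun ω hω ω' hω' h1 h2 => hg ω (DD_erase_subset he hω) ω' (DD_erase_subset he hω') h1 h2
  have hf0 : ∀ ω ∈ D0, ∀ ω' ∈ D0,
      ClusterOf ends S ω ⊆ ClusterOf ends S ω' →
      ClusterOf ends T ω' ⊆ ClusterOf ends T ω → f ω ≤ f ω' :=
    fun ω hω ω' hω' h1 h2 => hf ω (DD_erase_subset he hω) ω' (DD_erase_subset he hω') h1 h2
  have hg0 : ∀ ω ∈ D0, ∀ ω' ∈ D0,
      ClusterOf ends S ω ⊆ ClusterOf ends S ω' →
      ClusterOf ends T ω' ⊆ ClusterOf ends T ω → g ω ≤ g ω' :=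
    fun ω hω ω' hω' h1 h2 => hg ω (DD_erase_subset he hω) ω' (DD_erase_subset he hω') h1 h2
  have hIH1 := IH S T β1 f g hf1 hg1
  have hIH0 := IH S T β0 f g hf0 hg0
  -- final algebra
  rw [SD_split he (fun ω => f ω * g ω), SD_split he (fun _ => (1:ℝ)), SD_split he f,
    SD_split he g]
  set x1 := SD ends p q S T (A.erase e) β1 (fun ω => f ω * g ω) with hx1
  set x0 := SD ends p q S T (A.erase e) β0 (fun ω => f ω * g ω) with hx0
  set z1 := SD ends p q S T (A.erase e) β1 (fun _ => (1:ℝ)) with hz1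
  set z0 := SD ends p q S T (A.erase e) β0 (fun _ => (1:ℝ)) with hz0
  set f1 := SD ends p q S T (A.erase e) β1 f with hf1'
  set f0 := SD ends p q S T (A.erase e) β0 f with hf0'
  set g1 := SD ends p q S T (A.erase e) β1 g with hg1'
  set g0 := SD ends p q S T (A.erase e) β0 g with hg0'
  have hz1nn : 0 ≤ z1 := SD_nonneg hp hq fun _ => zero_le_one
  have hz0nn : 0 ≤ z0 := SD_nonneg hp hq fun _ => zero_le_one
  rcases hz1nn.eq_or_lt with hz1z | hz1p
  · have hx1z : x1 = 0 := SD_eq_zero hp hq hz1z.symm _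
    have hf1z : f1 = 0 := SD_eq_zero hp hq hz1z.symm _
    have hg1z : g1 = 0 := SD_eq_zero hp hq hz1z.symm _
    rw [hx1z, hf1z, hg1z, ← hz1z]
    simpa using hIH0
  rcases hz0nn.eq_or_lt with hz0z | hz0p
  · have hx0z : x0 = 0 := SD_eq_zero hp hq hz0z.symm _
    have hf0z : f0 = 0 := SD_eq_zero hp hq hz0z.symm _
    have hg0z : g0 = 0 := SD_eq_zero hp hq hz0z.symm _
    rw [hx0z, hf0z, hg0z, ← hz0z]
    simpa using hIH1
  have k3 : (f1 * z0 - f0 * z1) * (g1 * z0 - g0 * z1) ≥ 0 :=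
    mul_nonneg (by linarith) (by linarith)
  have k1 : (x1 * z1 - f1 * g1) * (z0 * z0) ≥ 0 :=
    mul_nonneg (by linarith) (by positivity)
  have k2 : (x0 * z0 - f0 * g0) * (z1 * z1) ≥ 0 :=
    mul_nonneg (by linarith) (by positivity)
  have k4 : (x1 * z1 - f1 * g1) * (z0 * z1) ≥ 0 :=
    mul_nonneg (by linarith) (by positivity)
  have k5 : (x0 * z0 - f0 * g0) * (z0 * z1) ≥ 0 :=
    mul_nonneg (by linarith) (by positivity)
  have hzz : 0 < z0 * z1 := mul_pos hz0p hz1p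
  nlinarith [k1, k2, k3, k4, k5, hzz]

end StepKey

section KeyMain

set_option linter.unusedSectionVars false
set_option maxHeartbeats 1000000

variable [Fintype V] [Fintype E] [DecidableEq E]
variable {p : E → ℝ} {q : ℝ}

lemma case0_reach {A : Finset E} {β : E → Bool} {X : Set V}
    (hA : ∀ e' ∈ A, ∀ a ∈ X,
      ¬ (Reach ends (fun e'' => if e'' ∈ A then false else β e'') a (ends e').1 ∨
         Reach ends (fun e'' => if e'' ∈ A then false else β e'') a (ends e').2))
    {ω : E → Bool} (hfz : ∀ e' ∉ A, ω e' = β e') {a : V} (ha : a ∈ X) {v : V}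
    (hr : Reach ends ω a v) :
    Reach ends (fun e'' => if e'' ∈ A then false else β e'') a v := by
  induction hr with
  | refl => exact Relation.ReflTransGen.refl
  | @tail u' v' hw hstep ih =>
    obtain ⟨e', he', hends⟩ := hstep
    have he'A : e' ∉ A := by
      intro hmem
      refine hA e' hmem a ha ?_
      rcases hends with h1 | h1
      · exact Or.inl (by rw [h1]; exact ih)
      · exact Or.inr (by rw [h1]; exact ih)
    have hβ : (if e' ∈ A then false else β e') = true := by
      rw [if_neg he'A, ← hfz e' he'A]; exact he'
    exact ih.tail ⟨e', hβ, hends⟩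

lemma case0_cluster {A : Finset E} {β : E → Bool} {X : Set V}
    (hA : ∀ e' ∈ A, ∀ a ∈ X,
      ¬ (Reach ends (fun e'' => if e'' ∈ A then false else β e'') a (ends e').1 ∨
         Reach ends (fun e'' => if e'' ∈ A then false else β e'') a (ends e').2))
    {ω : E → Bool} (hfz : ∀ e' ∉ A, ω e' = β e') :
    ClusterOf ends X ω = ClusterOf ends X (fun e'' => if e'' ∈ A then false else β e'') := by
  have hle : ∀ e', (if e' ∈ A then false else β e') = true → ω e' = true := by
    intro e' h'
    by_cases hA' : e' ∈ A
    · rw [if_pos hA'] at h'; cases h'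
    · rw [if_neg hA'] at h'; rw [hfz e' hA', h']
  apply Set.Subset.antisymm
  · rintro e'' ⟨hopen, a, ha, hrv⟩
    have hrv' : Reach ends (fun e'' => if e'' ∈ A then false else β e'') a (ends e'').1 ∨
        Reach ends (fun e'' => if e'' ∈ A then false else β e'') a (ends e'').2 :=
      hrv.imp (case0_reach hA hfz ha) (case0_reach hA hfz ha)
    have he''A : e'' ∉ A := fun hmem => hA e'' hmem a ha hrv'
    refine ⟨?_, a, ha, hrv'⟩
    show (if e'' ∈ A then false else β e'') = true
    rw [if_neg he''A, ← hfz e'' he''A]; exact hopen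
  · exact cluster_mono hle

lemma SD_const_eq {S T : Set V} {A : Finset E} {β : E → Bool} {h : (E → Bool) → ℝ} {c : ℝ}
    (hconst : ∀ ω ∈ DD ends S T A β, h ω = c) :
    SD ends p q S T A β h = c * SD ends p q S T A β (fun _ => 1) := by
  unfold SD
  rw [Finset.mul_sum]
  refine Finset.sum_congr rfl fun ω _ => ?_
  by_cases hm : ω ∈ DD ends S T A β
  · rw [Set.indicator_of_mem hm, Set.indicator_of_mem hm, hconst ω hm]; ring
  · rw [Set.indicator_of_notMem hm, Set.indicator_of_notMem hm, mul_zero]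

lemma key (hp : ∀ e, 0 < p e ∧ p e < 1) (hq : 1 ≤ q) :
    ∀ (A : Finset E) (S T : Set V) (β : E → Bool) (f g : (E → Bool) → ℝ),
    (∀ ω ∈ DD ends S T A β, ∀ ω' ∈ DD ends S T A β,
      ClusterOf ends S ω ⊆ ClusterOf ends S ω' →
      ClusterOf ends T ω' ⊆ ClusterOf ends T ω → f ω ≤ f ω') →
    (∀ ω ∈ DD ends S T A β, ∀ ω' ∈ DD ends S T A β,
      ClusterOf ends S ω ⊆ ClusterOf ends S ω' →
      ClusterOf ends T ω' ⊆ ClusterOf ends T ω → g ω ≤ g ω') →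
    SD ends p q S T A β (fun ω => f ω * g ω) * SD ends p q S T A β (fun _ => 1) ≥
      SD ends p q S T A β f * SD ends p q S T A β g := by
  intro A
  induction A using Finset.strongInduction with
  | _ A IH =>
    intro S T β f g hf hg
    by_cases hc1 : ∃ e ∈ A, ∃ a ∈ S,
        (Reach ends (fun e'' => if e'' ∈ A then false else β e'') a (ends e).1 ∨
         Reach ends (fun e'' => if e'' ∈ A then false else β e'') a (ends e).2)
    · obtain ⟨e, he, a₀, ha₀, hr⟩ := hc1
      have IH' := fun S T β f g hf hg =>
        IH (A.erase e) (Finset.erase_ssubset he) S T β f g hf hg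
      rcases hr with hr | hr
      · exact step_key hp hq A e he IH' S T β f g hf hg (ends e).1 (ends e).2
          (Or.inl rfl) a₀ ha₀ hr
      · exact step_key hp hq A e he IH' S T β f g hf hg (ends e).2 (ends e).1
          (Or.inr rfl) a₀ ha₀ hr
    · by_cases hc2 : ∃ e ∈ A, ∃ a ∈ T,
          (Reach ends (fun e'' => if e'' ∈ A then false else β e'') a (ends e).1 ∨
           Reach ends (fun e'' => if e'' ∈ A then false else β e'') a (ends e).2)
      · obtain ⟨e, he, a₀, ha₀, hr⟩ := hc2
        have IH' := fun S T β f g hf hg =>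
          IH (A.erase e) (Finset.erase_ssubset he) S T β f g hf hg
        have hf' : ∀ ω ∈ DD ends T S A β, ∀ ω' ∈ DD ends T S A β,
            ClusterOf ends T ω ⊆ ClusterOf ends T ω' →
            ClusterOf ends S ω' ⊆ ClusterOf ends S ω → (fun ω => -f ω) ω ≤ (fun ω => -f ω) ω' := by
          intro ω hω ω' hω' h1 h2
          rw [DD_comm] at hω hω'
          exact neg_le_neg (hf ω' hω' ω hω h2 h1)
        have hg' : ∀ ω ∈ DD ends T S A β, ∀ ω' ∈ DD ends T S A β,
            ClusterOf ends T ω ⊆ ClusterOf ends T ω' →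
            ClusterOf ends S ω' ⊆ ClusterOf ends S ω → (fun ω => -g ω) ω ≤ (fun ω => -g ω) ω' := by
          intro ω hω ω' hω' h1 h2
          rw [DD_comm] at hω hω'
          exact neg_le_neg (hg ω' hω' ω hω h2 h1)
        have hstep : SD ends p q T S A β (fun ω => -f ω * -g ω) *
            SD ends p q T S A β (fun _ => 1) ≥
            SD ends p q T S A β (fun ω => -f ω) * SD ends p q T S A β (fun ω => -g ω) := by
          rcases hr with hr | hr
          · exact step_key hp hq A e he IH' T S β (fun ω => -f ω) (fun ω => -g ω) hf' hg'
              (ends e).1 (ends e).2 (Or.inl rfl) a₀ ha₀ hr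
          · exact step_key hp hq A e he IH' T S β (fun ω => -f ω) (fun ω => -g ω) hf' hg'
              (ends e).2 (ends e).1 (Or.inr rfl) a₀ ha₀ hr
        rw [SD_comm (S := S) (T := T) (h := fun ω => -f ω * -g ω),
            SD_comm (S := S) (T := T) (h := fun _ => (1:ℝ)),
            SD_comm (S := S) (T := T) (h := fun ω => -f ω),
            SD_comm (S := S) (T := T) (h := fun ω => -g ω)] at hstep
        have h1 : SD ends p q S T A β (fun ω => -f ω * -g ω) =
            SD ends p q S T A β (fun ω => f ω * g ω) :=
          SD_congr fun ω _ => by ring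
        rw [h1, SD_neg, SD_neg, neg_mul_neg] at hstep
        exact hstep
      · -- no free edge adjacent to either cluster: f and g are constant on the support
        push_neg at hc1 hc2
        by_cases hone : ∃ ω₀, ω₀ ∈ DD ends S T A β
        · obtain ⟨ω₀, hω₀⟩ := hone
          have hCS : ∀ ω ∈ DD ends S T A β, ClusterOf ends S ω =
              ClusterOf ends S (fun e'' => if e'' ∈ A then false else β e'') :=
            fun ω hω => case0_cluster (fun e' he' a ha => not_or.mpr (hc1 e' he' a ha)) hω.1
          have hCT : ∀ ω ∈ DD ends S T A β, ClusterOf ends T ω =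
              ClusterOf ends T (fun e'' => if e'' ∈ A then false else β e'') :=
            fun ω hω => case0_cluster (fun e' he' a ha => not_or.mpr (hc2 e' he' a ha)) hω.1
          have hfc : ∀ ω ∈ DD ends S T A β, f ω = f ω₀ := fun ω hω =>
            le_antisymm
              (hf ω hω ω₀ hω₀ (by rw [hCS ω hω, hCS ω₀ hω₀]) (by rw [hCT ω hω, hCT ω₀ hω₀]))
              (hf ω₀ hω₀ ω hω (by rw [hCS ω hω, hCS ω₀ hω₀]) (by rw [hCT ω hω, hCT ω₀ hω₀]))
          have hgc : ∀ ω ∈ DD ends S T A β, g ω = g ω₀ := fun ω hω =>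
            le_antisymm
              (hg ω hω ω₀ hω₀ (by rw [hCS ω hω, hCS ω₀ hω₀]) (by rw [hCT ω hω, hCT ω₀ hω₀]))
              (hg ω₀ hω₀ ω hω (by rw [hCS ω hω, hCS ω₀ hω₀]) (by rw [hCT ω hω, hCT ω₀ hω₀]))
          have e1 : SD ends p q S T A β (fun ω => f ω * g ω) =
              (f ω₀ * g ω₀) * SD ends p q S T A β (fun _ => 1) :=
            SD_const_eq fun ω hω => by rw [hfc ω hω, hgc ω hω]
          have e2 : SD ends p q S T A β f = f ω₀ * SD ends p q S T A β (fun _ => 1) :=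
            SD_const_eq hfc
          have e3 : SD ends p q S T A β g = g ω₀ * SD ends p q S T A β (fun _ => 1) :=
            SD_const_eq hgc
          rw [e1, e2, e3]
          apply ge_of_eq
          ring
        · push_neg at hone
          have hz : ∀ h : (E → Bool) → ℝ, SD ends p q S T A β h = 0 := fun h =>
            Finset.sum_eq_zero fun ω _ => Set.indicator_of_notMem (hone ω) _
          rw [hz, hz, hz, hz]

end KeyMain


set_option linter.unusedSectionVars false
set_option maxHeartbeats 1000000

/-- Theorem 2.1. Let `q ≥ 1`, let `S` and `T` be disjoint
sets of vertices with `φ_{G,q}(S ↛ T) > 0`, and let `f`, `g` be bounded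
functions of the pair `(C_S, C_T)`, each increasing in `C_S` and decreasing in
`C_T`.  Then, conditioned on `{S ↛ T}`, `E[f·g] ≥ E[f] · E[g]`. -/
theorem stmt8 [Fintype V] [Fintype E] [DecidableEq E]
    (ends : E → V × V) (p : E → ℝ) (hp : ∀ e, 0 < p e ∧ p e < 1)
    (q : ℝ) (hq : 1 ≤ q)
    (S T : Set V) (hST : Disjoint S T)
    (hpos : 0 < rcPr ends p q (NoConn ends S T))
    (f g : (E → Bool) → ℝ)
    (hfb : ∃ M, ∀ ω, |f ω| ≤ M) (hgb : ∃ M, ∀ ω, |g ω| ≤ M)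
    (hf : ∀ ω ω', ClusterOf ends S ω ⊆ ClusterOf ends S ω' →
      ClusterOf ends T ω' ⊆ ClusterOf ends T ω → f ω ≤ f ω')
    (hg : ∀ ω ω', ClusterOf ends S ω ⊆ ClusterOf ends S ω' →
      ClusterOf ends T ω' ⊆ ClusterOf ends T ω → g ω ≤ g ω') :
    rcCondExp ends p q (fun ω => f ω * g ω) (NoConn ends S T) ≥
      rcCondExp ends p q f (NoConn ends S T) *
        rcCondExp ends p q g (NoConn ends S T) := by
  have hq0 : (0:ℝ) < q := lt_of_lt_of_le zero_lt_one hq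
  have hwpos : ∀ ω, 0 < rcWeight ends p q ω := rcWeight_pos hp hq0
  have hDD : DD ends S T (Finset.univ : Finset E) (fun _ => false) = NoConn ends S T := by
    unfold DD
    ext ω
    simp
  have e0 : SD ends p q S T Finset.univ (fun _ => false) (fun _ => 1) =
      ∑ ω : E → Bool, (NoConn ends S T).indicator (rcWeight ends p q) ω := by
    unfold SD
    rw [hDD, show (fun ω => rcWeight ends p q ω * 1) = rcWeight ends p q from
      funext fun ω => mul_one _]
  have ef : SD ends p q S T Finset.univ (fun _ => false) f =
      ∑ ω : E → Bool, (NoConn ends S T).indicator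
        (fun ω' => rcWeight ends p q ω' * f ω') ω := by
    unfold SD; rw [hDD]
  have eg : SD ends p q S T Finset.univ (fun _ => false) g =
      ∑ ω : E → Bool, (NoConn ends S T).indicator
        (fun ω' => rcWeight ends p q ω' * g ω') ω := by
    unfold SD; rw [hDD]
  have efg : SD ends p q S T Finset.univ (fun _ => false) (fun ω => f ω * g ω) =
      ∑ ω : E → Bool, (NoConn ends S T).indicator
        (fun ω' => rcWeight ends p q ω' * (f ω' * g ω')) ω := by
    unfold SD; rw [hDD]
  have hkey := key hp hq Finset.univ S T (fun _ => false) f g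
    (fun ω _ ω' _ h1 h2 => hf ω ω' h1 h2) (fun ω _ ω' _ h1 h2 => hg ω ω' h1 h2)
  rw [e0, ef, eg, efg] at hkey
  set W1 := ∑ ω : E → Bool, (NoConn ends S T).indicator (rcWeight ends p q) ω with hW1
  set Wf := ∑ ω : E → Bool, (NoConn ends S T).indicator
    (fun ω' => rcWeight ends p q ω' * f ω') ω with hWf
  set Wg := ∑ ω : E → Bool, (NoConn ends S T).indicator
    (fun ω' => rcWeight ends p q ω' * g ω') ω with hWg
  set Wfg := ∑ ω : E → Bool, (NoConn ends S T).indicator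
    (fun ω' => rcWeight ends p q ω' * (f ω' * g ω')) ω with hWfg
  have hW1nn : 0 ≤ W1 := Finset.sum_nonneg fun ω _ =>
    Set.indicator_nonneg (fun ω' _ => (hwpos ω').le) _
  have hW1pos : 0 < W1 := by
    rcases hW1nn.eq_or_lt with h | h
    · exfalso
      unfold rcPr at hpos
      rw [← hW1, ← h, zero_div] at hpos
      exact lt_irrefl 0 hpos
    · exact h
  show Wfg / W1 ≥ Wf / W1 * (Wg / W1)
  rw [ge_iff_le, div_mul_div_comm, div_le_div_iff₀ (mul_pos hW1pos hW1pos) hW1pos]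
  nlinarith [mul_le_mul_of_nonneg_right hkey hW1nn]

end RandomCluster
end
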